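/- arXiv:1907.12543 — 5 statements merged into one kernel-verified Lean document; each statement's English description precedes it below -/
import Mathlib

section
/- Let a : ℕ → α be a sequence in the class 𝒞, let f : α × α × α × α ≃ β be a bijection, and let b : ℕ → β be the sequence defined by b(n) = f(a(4n), a(4n+1), a(4n+2), a(4n+3)). Then for every n ∈ ℕ, the palindromic length of the prefix of b of length n equals the palindromic length of the prefix of a of length 4n, i.e. P_b(n) = P_a(4n). -/
/-- Membership in the class 𝒞: there exist a letter `c`, bijections `f n`,
and words `w n` with `w 0 = [c]`,
`w (n+1) = w n ++ f n (w n) ++ f n (w n) ++ w n`, `f n (w n) ≠ w n`,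
and `w n` is the prefix of `a` of length `4 ^ n`. -/
def InC {α : Type*} (a : ℕ → α) : Prop :=
  ∃ (c : α) (f : ℕ → α ≃ α) (w : ℕ → List α),
    w 0 = [c] ∧
    (∀ n, w (n + 1) = w n ++ (w n).map (f n) ++ (w n).map (f n) ++ w n) ∧
    (∀ n, (w n).map (f n) ≠ w n) ∧
    (∀ n, w n = (List.range (4 ^ n)).map a)

/-- The factor `a(x) a(x+1) ⋯ a(x+y-1)` of the sequence `a`. -/
def factor {α : Type*} (a : ℕ → α) (x y : ℕ) : List α :=
  (List.range y).map (fun i => a (x + i))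

/-- The prefix of `a` of length `n`. -/
def prefixWord {α : Type*} (a : ℕ → α) (n : ℕ) : List α :=
  factor a 0 n

/-- The palindromic length of a finite word: the least number of palindromes
whose concatenation is the word (0 for the empty word). -/
noncomputable def palLen {α : Type*} (w : List α) : ℕ :=
  sInf {k | ∃ ps : List (List α),
    ps.length = k ∧ (∀ p ∈ ps, p.Palindrome) ∧ ps.flatten = w}

/-- `P a n` is the palindromic length of the prefix of `a` of length `n`. -/
noncomputable def P {α : Type*} (a : ℕ → α) (n : ℕ) : ℕ :=
  palLen (prefixWord a n)

/-- The factor of length `y` at position `x` is embedded into the center of the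
factor of length `4 * r` at position `4 * z`. -/
def EmbedCenter (x y z r : ℕ) : Prop :=
  4 * z ≤ x ∧ x + y ≤ 4 * z + 4 * r ∧ x - 4 * z = (4 * z + 4 * r) - (x + y)

/-- The Thue–Morse sequence: `true` iff the number of ones in the binary
expansion is odd. -/
def thueMorse (n : ℕ) : Bool :=
  (Nat.digits 2 n).count 1 % 2 == 1

namespace Stmt8Aux

/-- Arithmetic palindrome predicate. -/
def Pal {α : Type*} (a : ℕ → α) (x y : ℕ) : Prop :=
  ∀ i j, i + j + 1 = y → a (x + i) = a (x + j)

variable {α β : Type*}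

/-! ### Generic list lemmas -/

lemma factor_length (a : ℕ → α) (x y : ℕ) : (factor a x y).length = y := by
  simp [factor]

lemma factor_append (a : ℕ → α) (x y z : ℕ) :
    factor a x y ++ factor a (x + y) z = factor a x (y + z) := by
  apply List.ext_getElem
  · simp [factor]
  · intro i h1 h2
    rcases Nat.lt_or_ge i y with h | h
    · rw [List.getElem_append_left (by simpa [factor] using h)]
      simp [factor]
    · rw [List.getElem_append_right (by simpa [factor] using h)]
      simp only [factor, List.getElem_map, List.getElem_range, List.length_map,
        List.length_range]
      congr 1
      have : i < y + z := by simpa [factor] using h2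
      omega

lemma factor_take (a : ℕ → α) (x y m : ℕ) (h : m ≤ y) :
    (factor a x y).take m = factor a x m := by
  apply List.ext_getElem
  · simp [factor]; omega
  · intro i h1 h2
    simp [factor]

lemma factor_drop (a : ℕ → α) (x y m : ℕ) :
    (factor a x y).drop m = factor a (x + m) (y - m) := by
  apply List.ext_getElem
  · simp [factor]
  · intro i h1 h2
    simp only [List.getElem_drop, factor, List.getElem_map, List.getElem_range]
    congr 1
    omega

lemma pal_of_palindrome (a : ℕ → α) (x y : ℕ) (h : (factor a x y).Palindrome) :
    Pal a x y := by
  intro i j hij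
  have hr := h.reverse_eq
  have hi : i < y := by omega
  have hj : j < y := by omega
  have := congrArg (fun l : List α => l[j]?) hr
  simp only [List.getElem?_reverse
    (by simp [factor]; omega : j < (factor a x y).length)] at this
  rw [List.getElem?_eq_getElem (by simp [factor]; omega),
      List.getElem?_eq_getElem (by simp [factor]; omega)] at this
  simp only [factor, List.getElem_map, List.getElem_range, List.length_map,
    List.length_range, Option.some_inj] at this
  convert this using 3
  omega

lemma palindrome_of_pal (a : ℕ → α) (x y : ℕ) (h : Pal a x y) :
    (factor a x y).Palindrome := by
  apply List.Palindrome.of_reverse_eq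
  apply List.ext_getElem
  · simp
  · intro i h1 h2
    rw [List.getElem_reverse]
    simp only [factor, List.getElem_map, List.getElem_range, List.length_map,
      List.length_range]
    have hi : i < y := by simpa [factor] using h2
    exact h _ _ (by omega)

lemma pal_singleton (a : ℕ → α) (x : ℕ) : Pal a x 1 := by
  intro i j hij
  have : i = j := by omega
  rw [this]

/-! ### palLen lemmas -/

lemma palLen_set_nonempty (w : List α) :
    ∃ k, k ∈ {k | ∃ ps : List (List α),
      ps.length = k ∧ (∀ p ∈ ps, p.Palindrome) ∧ ps.flatten = w} := by
  refine ⟨w.length, w.map (fun x => [x]), by simp, ?_, ?_⟩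
  · intro p hp
    simp only [List.mem_map] at hp
    obtain ⟨x, -, rfl⟩ := hp
    exact List.Palindrome.singleton x
  · induction w with
    | nil => simp
    | cons x t ih => simp [ih]

lemma palLen_spec (w : List α) : ∃ ps : List (List α),
    ps.length = palLen w ∧ (∀ p ∈ ps, p.Palindrome) ∧ ps.flatten = w :=
  Nat.sInf_mem (palLen_set_nonempty w)

lemma palLen_le (w : List α) (ps : List (List α)) (h1 : ∀ p ∈ ps, p.Palindrome)
    (h2 : ps.flatten = w) : palLen w ≤ ps.length :=
  Nat.sInf_le ⟨ps, rfl, h1, h2⟩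

lemma palLen_append_le (u v : List α) : palLen (u ++ v) ≤ palLen u + palLen v := by
  obtain ⟨ps, hl, hp, hf⟩ := palLen_spec u
  obtain ⟨qs, hl2, hp2, hf2⟩ := palLen_spec v
  have := palLen_le (u ++ v) (ps ++ qs) ?_ (by simp [hf, hf2])
  · simpa [hl, hl2] using this
  · intro p hp3
    rcases List.mem_append.1 hp3 with h | h
    · exact hp p h
    · exact hp2 p h

lemma palLen_le_one (w : List α) (h : w.Palindrome) : palLen w ≤ 1 := by
  have := palLen_le w [w] (by simpa using h) (by simp)
  simpa using this

section Blocks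

variable (a : ℕ → α)

/-! ### Structure of words in the class -/

lemma key_step (fn : α ≃ α) (N : ℕ)
    (hw : (List.range (4 * N)).map a
      = (List.range N).map a ++ ((List.range N).map a).map fn
        ++ ((List.range N).map a).map fn ++ (List.range N).map a)
    (p : ℕ) (hp : p < N) :
    a (N + p) = fn (a p) ∧ a (2 * N + p) = fn (a p) ∧ a (3 * N + p) = a p := by
  have get : ∀ i (h : i < 4 * N), a i =
      ((List.range N).map a ++ ((List.range N).map a).map fn
        ++ ((List.range N).map a).map fn ++ (List.range N).map a)[i]'(by
          simp only [List.length_append, List.length_map, List.length_range]; omega) := by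
    intro i h
    rw [← List.getElem_of_eq hw (by simp; omega)]
    simp
  refine ⟨?_, ?_, ?_⟩
  · rw [get (N + p) (by omega)]
    rw [List.getElem_append_left
        (by simp only [List.length_append, List.length_map, List.length_range]; omega),
      List.getElem_append_left
        (by simp only [List.length_append, List.length_map, List.length_range]; omega),
      List.getElem_append_right
        (by simp only [List.length_append, List.length_map, List.length_range]; omega)]
    simp [hp]
  · rw [get (2 * N + p) (by omega)]
    rw [List.getElem_append_left
        (by simp only [List.length_append, List.length_map, List.length_range]; omega),
      List.getElem_append_right
        (by simp only [List.length_append, List.length_map, List.length_range]; omega)]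
    simp only [List.length_append, List.length_map, List.length_range]
    have : 2 * N + p - (N + N) = p := by omega
    rw [List.getElem_map]
    simp [this]
  · rw [get (3 * N + p) (by omega)]
    rw [List.getElem_append_right
        (by simp only [List.length_append, List.length_map, List.length_range]; omega)]
    simp only [List.length_append, List.length_map, List.length_range]
    have : 3 * N + p - (N + N + N) = p := by omega
    simp [this]

variable (c : α) (fs : ℕ → α ≃ α) (w : ℕ → List α)
  (h0 : w 0 = [c])
  (hrec : ∀ n, w (n + 1) = w n ++ (w n).map (fs n) ++ (w n).map (fs n) ++ w n)
  (hne : ∀ n, (w n).map (fs n) ≠ w n)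
  (hpre : ∀ n, w n = (List.range (4 ^ n)).map a)

include hrec hpre

lemma key (n p : ℕ) (hp : p < 4 ^ n) :
    a (4 ^ n + p) = fs n (a p) ∧ a (2 * 4 ^ n + p) = fs n (a p)
      ∧ a (3 * 4 ^ n + p) = a p := by
  apply key_step a (fs n) (4 ^ n) _ p hp
  have h1 := hpre (n + 1)
  rw [hrec n, hpre n] at h1
  rw [show (4 * 4 ^ n) = 4 ^ (n+1) from by ring]
  exact h1.symm

include h0 hne

omit hrec hne in
lemma a_zero : a 0 = c := by
  have := hpre 0
  rw [h0] at this
  have hr : List.range (4 ^ 0) = [0] := by decide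
  rw [hr] at this
  have h2 : c = a 0 := by simpa using this
  exact h2.symm

lemma blocks : ∀ z, a (4 * z + 3) = a (4 * z) ∧ a (4 * z + 2) = a (4 * z + 1)
    ∧ a (4 * z) ≠ a (4 * z + 1) := by
  intro z
  induction z using Nat.strong_induction_on with
  | _ z IH =>
  rcases Nat.eq_zero_or_pos z with rfl | hz
  · have k0 := key a fs w hrec hpre 0
    simp only [pow_zero] at k0
    obtain ⟨e1, -, -⟩ := k0 0 (by omega)
    obtain ⟨-, e2, e3⟩ := k0 0 (by omega)
    have hc : fs 0 (a 0) ≠ a 0 := by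
      have := hne 0
      rw [h0] at this
      rw [a_zero a c w h0 hpre]
      simpa using this
    constructor
    · simpa using e3
    · constructor
      · rw [show 4 * 0 + 2 = 2 * 1 + 0 by norm_num, show 4 * 0 + 1 = 1 + 0 by norm_num]
        rw [e2]; rw [show (1 : ℕ) = 1 + 0 by norm_num] at e1; rw [e1]
      · rw [show 4 * 0 + 1 = 1 + 0 by norm_num, e1]
        simpa using hc.symm
  · set n := Nat.log 4 (4 * z) with hn
    have hb : (1:ℕ) < 4 := by norm_num
    have h1 : 4 ^ n ≤ 4 * z := Nat.pow_log_le_self 4 (by omega)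
    have h2 : 4 * z < 4 ^ (n + 1) := Nat.lt_pow_succ_log_self hb _
    have hn1 : 1 ≤ n := by
      by_contra h
      have : n = 0 := by omega
      rw [this] at h2
      simp at h2
      omega
    have hN4 : 4 ∣ 4 ^ n := dvd_pow_self 4 (by omega)
    have hN4' : (4:ℕ) ∣ 4 ^ (n + 1) := dvd_pow_self 4 (by omega)
    have h3 : 4 * z + 3 < 4 ^ (n + 1) := by omega
    set N := 4 ^ n with hNdef
    have hNpos : 4 ≤ N := by
      calc 4 = 4 ^ 1 := by norm_num
      _ ≤ 4 ^ n := Nat.pow_le_pow_right (by norm_num) hn1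
    have hk := key a fs w hrec hpre n
    have h4N : 4 ^ (n+1) = 4 * N := by rw [hNdef]; ring
    rw [h4N] at h3
    rcases Nat.lt_or_ge (4 * z) (2 * N) with hc1 | hge2
    · obtain ⟨m, hm⟩ := hN4
      set z' := z - m with hz'
      have hzm : z' < z := by omega
      have hcoord : ∀ j, j < 4 → 4 * z + j = N + (4 * z' + j) := by intro j hj; omega
      have hlt : ∀ j, j < 4 → 4 * z' + j < N := by intro j hj; omega
      obtain ⟨i1, i2, i3⟩ := IH z' hzm
      have v : ∀ j, j < 4 → a (4 * z + j) = fs n (a (4 * z' + j)) := by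
        intro j hj
        rw [hcoord j hj]
        exact (hk _ (hlt j hj)).1
      have v0 : a (4 * z) = fs n (a (4 * z')) := by simpa using v 0 (by omega)
      refine ⟨?_, ?_, ?_⟩
      · rw [v 3 (by omega), v0, i1]
      · rw [v 2 (by omega), v 1 (by omega), i2]
      · rw [v0, v 1 (by omega)]
        intro h
        exact i3 ((fs n).injective h)
    · rcases Nat.lt_or_ge (4 * z) (3 * N) with hc2 | hge3
      · obtain ⟨m, hm⟩ := hN4
        set z' := z - 2 * m with hz'
        have hzm : z' < z := by omega
        have hcoord : ∀ j, j < 4 → 4 * z + j = 2 * N + (4 * z' + j) := by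
          intro j hj; omega
        have hlt : ∀ j, j < 4 → 4 * z' + j < N := by intro j hj; omega
        obtain ⟨i1, i2, i3⟩ := IH z' hzm
        have v : ∀ j, j < 4 → a (4 * z + j) = fs n (a (4 * z' + j)) := by
          intro j hj
          rw [hcoord j hj]
          exact (hk _ (hlt j hj)).2.1
        have v0 : a (4 * z) = fs n (a (4 * z')) := by simpa using v 0 (by omega)
        refine ⟨?_, ?_, ?_⟩
        · rw [v 3 (by omega), v0, i1]
        · rw [v 2 (by omega), v 1 (by omega), i2]
        · rw [v0, v 1 (by omega)]
          intro h
          exact i3 ((fs n).injective h)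
      · obtain ⟨m, hm⟩ := hN4
        set z' := z - 3 * m with hz'
        have hzm : z' < z := by omega
        have hcoord : ∀ j, j < 4 → 4 * z + j = 3 * N + (4 * z' + j) := by
          intro j hj; omega
        have hlt : ∀ j, j < 4 → 4 * z' + j < N := by intro j hj; omega
        obtain ⟨i1, i2, i3⟩ := IH z' hzm
        have v : ∀ j, j < 4 → a (4 * z + j) = a (4 * z' + j) := by
          intro j hj
          rw [hcoord j hj]
          exact (hk _ (hlt j hj)).2.2
        have v0 : a (4 * z) = a (4 * z') := by simpa using v 0 (by omega)
        refine ⟨?_, ?_, ?_⟩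
        · rw [v 3 (by omega), v0, i1]
        · rw [v 2 (by omega), v 1 (by omega), i2]
        · rw [v0, v 1 (by omega)]
          exact i3

end Blocks

section Rigidity

variable (a : ℕ → α)
  (hB : ∀ z, a (4 * z + 3) = a (4 * z) ∧ a (4 * z + 2) = a (4 * z + 1)
    ∧ a (4 * z) ≠ a (4 * z + 1))

include hB

lemma asame (q r r' : ℕ) (hr : r < 4) (hr' : r' < 4)
    (hmod : r + r' = 3 ∨ r = r') : a (4 * q + r) = a (4 * q + r') := by
  have h0 := (hB q).1
  have h1 := (hB q).2.1
  interval_cases r <;> interval_cases r' <;>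
    first
      | rfl | omega | (exact h0) | (exact h0.symm) | (exact h1) | (exact h1.symm)

lemma asame' (p p' : ℕ) (hdiv : p / 4 = p' / 4)
    (hmod : p % 4 + p' % 4 = 3 ∨ p % 4 = p' % 4) : a p = a p' := by
  have e : p = 4 * (p / 4) + p % 4 := by omega
  have e' : p' = 4 * (p / 4) + p' % 4 := by omega
  rw [e, e']
  exact asame a hB _ _ _ (by omega) (by omega) hmod

lemma center_even (x y : ℕ) (hpal : Pal a x y) (hy2 : y % 2 = 0) (hy : 2 ≤ y) :
    (x + y / 2) % 2 = 0 := by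
  set γ := x + y / 2 with hγ
  have h := hpal (y / 2 - 1) (y / 2) (by omega)
  have e1 : x + (y / 2 - 1) = γ - 1 := by omega
  have e2 : x + y / 2 = γ := rfl
  rw [e1, e2] at h
  by_contra hodd
  have hmod : γ % 4 = 1 ∨ γ % 4 = 3 := by omega
  set q := γ / 4 with hqdef
  rcases hmod with hm | hm
  · refine (hB q).2.2 ?_
    calc a (4 * q) = a (γ - 1) := asame' a hB _ _ (by omega) (by omega)
      _ = a γ := h
      _ = a (4 * q + 1) := asame' a hB _ _ (by omega) (by omega)
  · refine (hB q).2.2 ?_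
    calc a (4 * q) = a γ := asame' a hB _ _ (by omega) (by omega)
      _ = a (γ - 1) := h.symm
      _ = a (4 * q + 1) := asame' a hB _ _ (by omega) (by omega)

lemma no_long_odd (x y : ℕ) (hpal : Pal a x y) (hy2 : y % 2 = 1) : y ≤ 3 := by
  by_contra hy
  push_neg at hy
  have hy5 : 5 ≤ y := by omega
  set t := (y - 1) / 2 with ht
  set p := x + t with hp
  have ht2 : 2 ≤ t := by omega
  have c1 : a (p - 1) = a (p + 1) := by
    have h := hpal (t - 1) (t + 1) (by omega)
    have e1 : x + (t - 1) = p - 1 := by omega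
    have e2 : x + (t + 1) = p + 1 := by omega
    rw [e1, e2] at h; exact h
  have c2 : a (p - 2) = a (p + 2) := by
    have h := hpal (t - 2) (t + 2) (by omega)
    have e1 : x + (t - 2) = p - 2 := by omega
    have e2 : x + (t + 2) = p + 2 := by omega
    rw [e1, e2] at h; exact h
  have hp2 : 2 ≤ p := by omega
  have hr : p % 4 = 0 ∨ p % 4 = 1 ∨ p % 4 = 2 ∨ p % 4 = 3 := by omega
  rcases hr with hr | hr | hr | hr
  · set q := p / 4 with hq
    have d1 : a (4 * (q - 1)) = a (4 * q + 1) := by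
      calc a (4 * (q - 1)) = a (p - 1) :=
            asame' a hB _ _ (by omega) (by omega)
        _ = a (p + 1) := c1
        _ = a (4 * q + 1) := by rw [show p + 1 = 4 * q + 1 by omega]
    have d2 : a (4 * (q - 1) + 1) = a (4 * q + 1) := by
      calc a (4 * (q - 1) + 1) = a (p - 2) :=
            asame' a hB _ _ (by omega) (by omega)
        _ = a (p + 2) := c2
        _ = a (4 * q + 1) := asame' a hB _ _ (by omega) (by omega)
    exact (hB (q - 1)).2.2 (d1.trans d2.symm)
  · set q := p / 4 with hq
    have d1 : a (4 * q) = a (4 * q + 1) := by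
      calc a (4 * q) = a (p - 1) := by rw [show p - 1 = 4 * q by omega]
        _ = a (p + 1) := c1
        _ = a (4 * q + 1) := asame' a hB _ _ (by omega) (by omega)
    exact (hB q).2.2 d1
  · set q := p / 4 with hq
    have d1 : a (4 * q + 1) = a (4 * q) := by
      calc a (4 * q + 1) = a (p - 1) := by rw [show p - 1 = 4 * q + 1 by omega]
        _ = a (p + 1) := c1
        _ = a (4 * q) := asame' a hB _ _ (by omega) (by omega)
    exact (hB q).2.2 d1.symm
  · set q := p / 4 with hq
    have d1 : a (4 * (q + 1)) = a (4 * q + 1) := by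
      calc a (4 * (q + 1)) = a (p + 1) := by rw [show p + 1 = 4 * (q + 1) by omega]
        _ = a (p - 1) := c1.symm
        _ = a (4 * q + 1) := asame' a hB _ _ (by omega) (by omega)
    have d2 : a (4 * (q + 1) + 1) = a (4 * q + 1) := by
      calc a (4 * (q + 1) + 1) = a (p + 2) :=
            asame' a hB _ _ (by omega) (by omega)
        _ = a (p - 2) := c2.symm
        _ = a (4 * q + 1) := asame' a hB _ _ (by omega) (by omega)
    exact (hB (q + 1)).2.2 (d1.trans d2.symm)

lemma pal_extend (x y d : ℕ) (hpal : Pal a x y) (hy2 : y % 2 = 0) (hy4 : 4 ≤ y)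
    (hd4 : d % 4 = 0) (hdl : x ≤ d + 2) (hdu : d ≤ x + 2) :
    Pal a d (2 * (x + y / 2 - d)) := by
  set u := y / 2 with hu
  set γ := x + u with hγ
  have hu2 : 2 ≤ u := by omega
  have hdγ : d ≤ γ := by omega
  set v := γ - d with hv
  have hdv : d + v = γ := by omega
  have hγ2 : γ % 2 = 0 := center_even a hB x y hpal hy2 (by omega)
  have hvu : v ≤ u + 2 := by omega
  have hv4 : v % 4 = γ % 4 := by omega
  have base : ∀ k, k < u → a (γ - 1 - k) = a (γ + k) := by
    intro k hk
    have h := hpal (u - 1 - k) (u + k) (by omega)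
    have e1 : x + (u - 1 - k) = γ - 1 - k := by omega
    have e2 : x + (u + k) = γ + k := by omega
    rw [e1, e2] at h; exact h
  have S : ∀ j < v, a (γ - 1 - j) = a (γ + j) := by
    intro j hj
    by_cases hju : j < u
    · exact base j hju
    · push_neg at hju
      have hjγ : j < γ := by omega
      have hγ4 : γ % 4 = 0 ∨ γ % 4 = 2 := by omega
      rcases hγ4 with hγ4 | hγ4
      · have hjm : j % 4 = 2 ∨ j % 4 = 3 := by omega
        rcases hjm with hjm | hjm
        · set k := j - 1 with hk
          have hku : k < u := by omega
          calc a (γ - 1 - j) = a (γ - 1 - k) :=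
                asame' a hB _ _ (by omega) (by omega)
            _ = a (γ + k) := base k hku
            _ = a (γ + j) := asame' a hB _ _ (by omega) (by omega)
        · set k := j - 3 with hk
          have hku : k < u := by omega
          calc a (γ - 1 - j) = a (γ - 1 - k) :=
                asame' a hB _ _ (by omega) (by omega)
            _ = a (γ + k) := base k hku
            _ = a (γ + j) := asame' a hB _ _ (by omega) (by omega)
      · have hjm : j % 4 = 0 ∨ j % 4 = 1 := by omega
        rcases hjm with hjm | hjm
        · set k := j - 1 with hk
          have hku : k < u := by omega
          calc a (γ - 1 - j) = a (γ - 1 - k) :=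
                asame' a hB _ _ (by omega) (by omega)
            _ = a (γ + k) := base k hku
            _ = a (γ + j) := asame' a hB _ _ (by omega) (by omega)
        · set k := j - 3 with hk
          have hj5 : 5 ≤ j := by omega
          have hku : k < u := by omega
          calc a (γ - 1 - j) = a (γ - 1 - k) :=
                asame' a hB _ _ (by omega) (by omega)
            _ = a (γ + k) := base k hku
            _ = a (γ + j) := asame' a hB _ _ (by omega) (by omega)
  intro i j hij
  rcases Nat.lt_or_ge i v with hi | hi
  · have h := S (v - 1 - i) (by omega)
    have e1 : γ - 1 - (v - 1 - i) = d + i := by omega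
    have e2 : γ + (v - 1 - i) = d + j := by omega
    rw [e1, e2] at h; exact h
  · have hjv : j < v := by omega
    have h := S (v - 1 - j) (by omega)
    have e1 : γ - 1 - (v - 1 - j) = d + j := by omega
    have e2 : γ + (v - 1 - j) = d + i := by omega
    rw [e1, e2] at h; exact h.symm

end Rigidity



variable {α β : Type*}

section BSide

variable (a : ℕ → α) (f : α × α × α × α ≃ β) (b : ℕ → β)
  (hB : ∀ z, a (4 * z + 3) = a (4 * z) ∧ a (4 * z + 2) = a (4 * z + 1)
    ∧ a (4 * z) ≠ a (4 * z + 1))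
  (hb : ∀ n, b n = f (a (4 * n), a (4 * n + 1), a (4 * n + 2), a (4 * n + 3)))

include hB hb

lemma palB (z r : ℕ) (h : Pal a (4 * z) (4 * r)) : Pal b z r := by
  intro i j hij
  rw [hb (z + i), hb (z + j)]
  have comp : ∀ s, s < 4 → a (4 * (z + i) + s) = a (4 * (z + j) + s) := by
    intro s hs
    have h1 := h (4 * i + s) (4 * j + (3 - s)) (by omega)
    have e1 : 4 * z + (4 * i + s) = 4 * (z + i) + s := by omega
    have e2 : 4 * z + (4 * j + (3 - s)) = 4 * (z + j) + (3 - s) := by omega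
    rw [e1, e2] at h1
    calc a (4 * (z + i) + s) = a (4 * (z + j) + (3 - s)) := h1
      _ = a (4 * (z + j) + s) := asame a hB (z + j) (3 - s) s (by omega) hs (by omega)
  have c0 : a (4 * (z + i)) = a (4 * (z + j)) := by simpa using comp 0 (by omega)
  have c1 := comp 1 (by omega)
  have c2 := comp 2 (by omega)
  have c3 := comp 3 (by omega)
  rw [c0, c1, c2, c3]

end BSide

/-- Expansion of a letter of `β` into a 4-letter word over `α`. -/
def Ee (f : α × α × α × α ≃ β) : β → List α :=
  fun s => [(f.symm s).1, (f.symm s).2.1, (f.symm s).2.2.1, (f.symm s).2.2.2]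

section Expand

variable (a : ℕ → α) (f : α × α × α × α ≃ β) (b : ℕ → β)
  (hB : ∀ z, a (4 * z + 3) = a (4 * z) ∧ a (4 * z + 2) = a (4 * z + 1)
    ∧ a (4 * z) ≠ a (4 * z + 1))
  (hb : ∀ n, b n = f (a (4 * n), a (4 * n + 1), a (4 * n + 2), a (4 * n + 3)))

lemma range_four : List.range 4 = [0, 1, 2, 3] := by decide

lemma range_one : List.range 1 = [0] := by decide

include hb in
lemma Ee_b (m : ℕ) : Ee f (b m) = factor a (4 * m) 4 := by
  rw [hb m, Ee]
  simp only [Equiv.symm_apply_apply]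
  simp [factor, range_four]

lemma factor_one (z : ℕ) : factor b z 1 = [b z] := by
  simp [factor, range_one]

include hb in
lemma flatMap_prefix (n : ℕ) :
    (factor b 0 n).flatMap (Ee f) = factor a 0 (4 * n) := by
  induction n with
  | zero => simp [factor]
  | succ n ih =>
    have h1 : factor b 0 (n + 1) = factor b 0 n ++ factor b (0 + n) 1 :=
      (factor_append b 0 n 1).symm
    rw [h1, List.flatMap_append, ih]
    have h2 : factor b (0 + n) 1 = [b n] := by
      rw [factor_one]
      simp
    rw [h2]
    have h3 : ([b n] : List β).flatMap (Ee f) = Ee f (b n) := by simp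
    rw [h3, Ee_b a f b hb n]
    have h4 := factor_append a 0 (4 * n) 4
    simp only [Nat.zero_add] at h4
    rw [show 4 * (n + 1) = 4 * n + 4 from by ring, ← h4]

include hB hb in
lemma Ee_rev (m : ℕ) : (Ee f (b m)).reverse = Ee f (b m) := by
  rw [Ee_b a f b hb m]
  apply List.Palindrome.reverse_eq
  apply palindrome_of_pal
  intro i j hij
  exact asame a hB m i j (by omega) (by omega) (Or.inl (by omega))

lemma flatMap_congr_mem (E : β → List α) (l : List β)
    (hm : ∀ x ∈ l, (E x).reverse = E x) :
    l.flatMap (fun x => (E x).reverse) = l.flatMap E := by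
  induction l with
  | nil => simp
  | cons h t ih =>
    simp only [List.flatMap_cons]
    rw [hm h (by simp), ih (fun x hx => hm x (by simp [hx]))]

lemma flatMap_pal (E : β → List α) (p : List β) (hp : p.Palindrome)
    (hmem : ∀ x ∈ p, (E x).reverse = E x) : (p.flatMap E).Palindrome := by
  apply List.Palindrome.of_reverse_eq
  rw [List.reverse_flatMap, hp.reverse_eq]
  have : (List.reverse ∘ E) = fun x => (E x).reverse := rfl
  rw [this]
  exact flatMap_congr_mem E p hmem

lemma flatten_map_flatMap (E : β → List α) (ls : List (List β)) :
    (ls.map (fun l => l.flatMap E)).flatten = ls.flatten.flatMap E := by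
  induction ls with
  | nil => simp
  | cons h t ih => simp [ih]

include hB hb in
lemma lower_bound (n : ℕ) :
    palLen (factor a 0 (4 * n)) ≤ palLen (factor b 0 n) := by
  obtain ⟨ps, hl, hpals, hf⟩ := palLen_spec (factor b 0 n)
  have := palLen_le (factor a 0 (4 * n)) (ps.map (fun l => l.flatMap (Ee f))) ?_ ?_
  · simpa [hl] using this
  · intro q hq
    obtain ⟨p, hp, rfl⟩ := List.mem_map.1 hq
    apply flatMap_pal
    · exact hpals p hp
    · intro x hx
      have hxf : x ∈ ps.flatten := List.mem_flatten.2 ⟨p, hp, hx⟩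
      rw [hf] at hxf
      simp only [factor, List.mem_map, List.mem_range] at hxf
      obtain ⟨m, hm, rfl⟩ := hxf
      exact Ee_rev a f b hB hb (0 + m)
  · rw [flatten_map_flatMap, hf, flatMap_prefix a f b hb]

end Expand

section Main

variable (a : ℕ → α) (f : α × α × α × α ≃ β) (b : ℕ → β)
  (hB : ∀ z, a (4 * z + 3) = a (4 * z) ∧ a (4 * z + 2) = a (4 * z + 1)
    ∧ a (4 * z) ≠ a (4 * z + 1))
  (hb : ∀ n, b n = f (a (4 * n), a (4 * n + 1), a (4 * n + 2), a (4 * n + 3)))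

include hB hb in
lemma convert (ps : List (List α)) : ∀ L : ℕ, (∀ p ∈ ps, p.Palindrome) →
    ps.flatten = factor a 0 L →
    ∃ d, d % 4 = 0 ∧ d ≤ L + 2 ∧ L ≤ d + 2 ∧
      palLen (factor b 0 (d / 4)) ≤ ps.length := by
  induction ps using List.reverseRecOn with
  | nil =>
    intro L _ hf
    have hL : L = 0 := by
      have := congrArg List.length hf
      simpa [factor_length] using this.symm
    refine ⟨0, by omega, by omega, by omega, ?_⟩
    have h0 : palLen (factor b 0 (0 / 4)) ≤ ([] : List (List β)).length :=
      palLen_le _ [] (by simp) (by simp [factor])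
    simpa using h0
  | append_singleton qs p IH =>
    intro L hpals hf
    have hf' : qs.flatten ++ p = factor a 0 L := by simpa using hf
    have hlen : qs.flatten.length + p.length = L := by
      have := congrArg List.length hf'
      simpa [factor_length] using this
    have hq : qs.flatten = factor a 0 qs.flatten.length := by
      have := congrArg (List.take qs.flatten.length) hf'
      rwa [List.take_left, factor_take a 0 L _ (by omega)] at this
    have hp : p = factor a qs.flatten.length p.length := by
      have := congrArg (List.drop qs.flatten.length) hf'
      rw [List.drop_left, factor_drop, Nat.zero_add] at this
      rw [show L - qs.flatten.length = p.length from by omega] at this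
      exact this
    obtain ⟨d', hd4, hdle, hled, hplen⟩ :=
      IH qs.flatten.length (fun q hq' => hpals q (List.mem_append_left _ hq')) hq
    rcases le_or_gt p.length 3 with hy3 | hy4
    · rcases le_or_gt L (d' + 2) with hc | hc
      · refine ⟨d', hd4, by omega, hc, le_trans hplen (by simp)⟩
      · refine ⟨d' + 4, by omega, by omega, by omega, ?_⟩
        calc palLen (factor b 0 ((d' + 4) / 4))
            = palLen (factor b 0 (d' / 4 + 1)) := by
              rw [show (d' + 4) / 4 = d' / 4 + 1 by omega]
          _ ≤ palLen (factor b 0 (d' / 4)) + palLen (factor b (0 + d' / 4) 1) := by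
              rw [← factor_append]; exact palLen_append_le _ _
          _ ≤ qs.length + 1 := add_le_add hplen
              (palLen_le_one _ (palindrome_of_pal b _ _ (pal_singleton b _)))
          _ = (qs ++ [p]).length := by simp
    · have hpalp : Pal a qs.flatten.length p.length :=
        pal_of_palindrome a _ _ (hp ▸ hpals p (by simp))
      have hy2 : p.length % 2 = 0 := by
        by_contra hodd
        have := no_long_odd a hB _ p.length hpalp (by omega)
        omega
      have hext := pal_extend a hB qs.flatten.length p.length d' hpalp hy2
        (by omega) hd4 hled hdle
      set cL := qs.flatten.length with hcL
      set v := cL + p.length / 2 - d' with hvdef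
      have hγ2 : (cL + p.length / 2) % 2 = 0 :=
        center_even a hB cL p.length hpalp hy2 (by omega)
      have hv2 : v % 2 = 0 := by omega
      have hdv : d' ≤ cL + p.length / 2 := by omega
      refine ⟨d' + 2 * v, by omega, by omega, by omega, ?_⟩
      have hPv : Pal a (4 * (d' / 4)) (4 * (v / 2)) := by
        have e1 : 4 * (d' / 4) = d' := by omega
        have e2 : 4 * (v / 2) = 2 * v := by omega
        rw [e1, e2]
        exact hext
      have hbp : Pal b (d' / 4) (v / 2) := palB a f b hB hb _ _ hPv
      calc palLen (factor b 0 ((d' + 2 * v) / 4))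
          = palLen (factor b 0 (d' / 4 + v / 2)) := by
            rw [show (d' + 2 * v) / 4 = d' / 4 + v / 2 by omega]
        _ ≤ palLen (factor b 0 (d' / 4)) + palLen (factor b (0 + d' / 4) (v / 2)) := by
            rw [← factor_append]; exact palLen_append_le _ _
        _ ≤ qs.length + 1 := by
            refine add_le_add hplen (palLen_le_one _ (palindrome_of_pal b _ _ ?_))
            simpa using hbp
        _ = (qs ++ [p]).length := by simp

end Main

end Stmt8Aux


open Stmt8Aux in
theorem stmt8 {α β : Type*} (a : ℕ → α) (hC : InC a)
    (f : α × α × α × α ≃ β) (b : ℕ → β)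
    (hb : ∀ n, b n = f (a (4 * n), a (4 * n + 1), a (4 * n + 2), a (4 * n + 3))) :
    ∀ n : ℕ, P b n = P a (4 * n) := by
  obtain ⟨c, fs, w, h0, hrec, hne, hpre⟩ := hC
  have hB := blocks a c fs w h0 hrec hne hpre
  intro n
  show palLen (factor b 0 n) = palLen (factor a 0 (4 * n))
  apply le_antisymm
  · obtain ⟨ps, hl, hpals, hf⟩ := palLen_spec (factor a 0 (4 * n))
    obtain ⟨d, hd4, h1, h2, h3⟩ := convert a f b hB hb ps (4 * n) hpals hf
    have hd : d = 4 * n := by omega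
    rw [hd, show (4 * n) / 4 = n by omega] at h3
    exact le_trans h3 (le_of_eq hl)
  · exact lower_bound a f b hB hb n
end

section
/- Let a : ℕ → α be a sequence in the class 𝒞 and let P_a(n) denote the palindromic length of its prefix of length n. Then for every k ≥ 0: (1) P_a(4k+4) = P_a(k+1); (2) P_a(4k+3) = P_a(4k+4) + 1; (3) P_a(4k+2) − P_a(4k+4) is equal to 1 or 2; (4) P_a(4k+1) − P_a(4k+4) is equal to 0, 1 or 2. -/
namespace Stmt9Aux

variable {α : Type*}

lemma factor_length (a : ℕ → α) (x y : ℕ) : (factor a x y).length = y := by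
  simp [factor]

lemma pal_iff {a : ℕ → α} {x y : ℕ} :
    (factor a x y).Palindrome ↔ ∀ i < y, a (x + i) = a (x + (y - 1 - i)) := by
  constructor
  · intro h i hi
    have hrev := h.reverse_eq
    have h1 : i < (factor a x y).reverse.length := by simp [factor, hi]
    have h2 := List.getElem_reverse h1
    have h3 : (factor a x y).reverse[i]'h1 = (factor a x y)[i]'(by simp [factor, hi]) :=
      List.getElem_of_eq hrev h1
    rw [h3] at h2
    simp only [factor, List.getElem_map, List.getElem_range, List.length_map,
      List.length_range] at h2
    exact h2
  · intro h
    apply List.Palindrome.of_reverse_eq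
    apply List.ext_getElem (by simp)
    intro i h1 h2
    rw [List.getElem_reverse]
    simp only [factor, List.getElem_map, List.getElem_range, List.length_map,
      List.length_range]
    have := h i (by simpa [factor] using h2)
    simpa [factor] using this.symm

lemma pal_single (a : ℕ → α) (x : ℕ) : (factor a x 1).Palindrome := by
  rw [pal_iff]; intro i hi; interval_cases i; rfl

lemma pal_trim {a : ℕ → α} {x y : ℕ} (h : (factor a x y).Palindrome) (t : ℕ) :
    (factor a (x + t) (y - 2 * t)).Palindrome := by
  rw [pal_iff] at h ⊢
  intro i hi
  have h1 : x + t + i = x + (t + i) := by omega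
  have h2 : x + t + (y - 2 * t - 1 - i) = x + (y - 1 - (t + i)) := by omega
  rw [h1, h2]
  exact h (t + i) (by omega)

lemma pal_extend {a : ℕ → α} {u v : ℕ} (he : a u = a (u + v + 1))
    (h : (factor a (u + 1) v).Palindrome) : (factor a u (v + 2)).Palindrome := by
  rw [pal_iff] at h ⊢
  intro i hi
  rcases Nat.eq_zero_or_pos i with rfl | hi0
  · simpa [Nat.add_assoc] using he
  rcases Nat.lt_or_ge i (v + 1) with hiv | hiv
  · have := h (i - 1) (by omega)
    have e1 : u + i = u + 1 + (i - 1) := by omega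
    have e2 : u + (v + 2 - 1 - i) = u + 1 + (v - 1 - (i - 1)) := by omega
    rw [e1, e2]; exact this
  · have : i = v + 1 := by omega
    subst this
    simpa [Nat.add_assoc] using he.symm

/-- Decompositions of the prefix of length `n` into `k` nonempty palindromic factors. -/
inductive Dec (a : ℕ → α) : ℕ → ℕ → Prop
  | nil : Dec a 0 0
  | cons {x y k : ℕ} : Dec a x k → 1 ≤ y → (factor a x y).Palindrome → Dec a (x + y) (k + 1)

lemma dec_singletons (a : ℕ → α) : ∀ n, Dec a n n := by
  intro n
  induction n with
  | zero => exact Dec.nil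
  | succ n ih => exact Dec.cons ih le_rfl (pal_single a n)

lemma prefix_split (a : ℕ → α) (x y : ℕ) :
    prefixWord a (x + y) = prefixWord a x ++ factor a x y := by
  simp only [prefixWord, factor, List.range_add, List.map_append, List.map_map]
  simp [Function.comp_def]

lemma dec_to_list {a : ℕ → α} {n k : ℕ} (h : Dec a n k) :
    ∃ ps : List (List α), ps.length = k ∧ (∀ p ∈ ps, p.Palindrome) ∧
      ps.flatten = prefixWord a n := by
  induction h with
  | nil => exact ⟨[], rfl, by simp, by simp [prefixWord, factor]⟩
  | @cons x y k hd hy hp ih =>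
    obtain ⟨ps, rfl, hpal, hfl⟩ := ih
    refine ⟨ps ++ [factor a x y], by simp, ?_, ?_⟩
    · intro p hpmem
      rcases List.mem_append.mp hpmem with h1 | h1
      · exact hpal p h1
      · simp at h1; subst h1; exact hp
    · simp [hfl, prefix_split]

lemma P_le_dec {a : ℕ → α} {n k : ℕ} (h : Dec a n k) : P a n ≤ k := by
  exact Nat.sInf_le (dec_to_list h)

lemma prefix_take (a : ℕ → α) (n t : ℕ) (h : t ≤ n) :
    (prefixWord a n).take t = prefixWord a t := by
  simp only [prefixWord, factor, ← List.map_take, List.take_range, min_eq_left h]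

lemma prefix_drop (a : ℕ → α) (n t : ℕ) :
    (prefixWord a n).drop t = factor a t (n - t) := by
  apply List.ext_getElem (by simp [prefixWord, factor])
  intro i h1 h2
  simp only [prefixWord, factor, List.getElem_drop, List.getElem_map, List.getElem_range]
  simp only [List.length_drop, List.length_map, List.length_range] at h1
  congr 1
  omega

lemma list_to_dec {a : ℕ → α} (ps : List (List α)) (hpal : ∀ p ∈ ps, p.Palindrome)
    {n : ℕ} (hfl : ps.flatten = prefixWord a n) : ∃ k ≤ ps.length, Dec a n k := by
  induction ps using List.reverseRecOn generalizing n with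
  | nil =>
    have : n = 0 := by
      have := congrArg List.length hfl
      simpa [prefixWord, factor] using this.symm
    subst this
    exact ⟨0, le_rfl, Dec.nil⟩
  | append_singleton qs p ih =>
    rw [List.flatten_append, List.flatten_cons, List.flatten_nil, List.append_nil] at hfl
    have hlen : qs.flatten.length + p.length = n := by
      have := congrArg List.length hfl
      simpa [prefixWord, factor] using this
    set L := qs.flatten.length with hL
    have hq : qs.flatten = prefixWord a L := by
      have h1 : (qs.flatten ++ p).take L = qs.flatten := List.take_left' hL.symm
      rw [hfl, prefix_take a n L (by omega)] at h1
      exact h1.symm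
    have hp2 : p = factor a L (n - L) := by
      have h1 : (qs.flatten ++ p).drop L = p := List.drop_left' hL.symm
      rw [hfl, prefix_drop] at h1
      exact h1.symm
    obtain ⟨k, hk, hdec⟩ := ih (fun q hq => hpal q (by simp [hq])) hq
    rcases Nat.eq_zero_or_pos p.length with h0 | h0
    · have : n = L := by omega
      subst this
      exact ⟨k, by simpa using Nat.le_succ_of_le hk, hdec⟩
    · refine ⟨k + 1, by simpa using Nat.succ_le_succ hk, ?_⟩
      have : n = L + (n - L) := by omega
      rw [this]
      exact Dec.cons hdec (by omega) (hp2 ▸ hpal p (by simp))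

lemma dec_attain (a : ℕ → α) (n : ℕ) : Dec a n (P a n) := by
  have hne : {k | ∃ ps : List (List α),
      ps.length = k ∧ (∀ p ∈ ps, p.Palindrome) ∧ ps.flatten = prefixWord a n}.Nonempty :=
    ⟨n, dec_to_list (dec_singletons a n)⟩
  obtain ⟨ps, hlen, hpal, hfl⟩ := Nat.sInf_mem hne
  obtain ⟨k, hk, hdec⟩ := list_to_dec ps hpal hfl
  have h1 : P a n ≤ k := P_le_dec hdec
  have h2 : k = P a n := le_antisymm (hk.trans_eq hlen) h1
  exact h2 ▸ hdec

lemma P_zero (a : ℕ → α) : P a 0 = 0 := Nat.le_zero.mp (P_le_dec Dec.nil)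

lemma dec_inv {a : ℕ → α} {n k : ℕ} (h : Dec a n k) (hn : 1 ≤ n) :
    ∃ x y k', k = k' + 1 ∧ x + y = n ∧ 1 ≤ y ∧ Dec a x k' ∧ (factor a x y).Palindrome := by
  cases h with
  | nil => omega
  | cons hd hy hp => exact ⟨_, _, _, rfl, rfl, hy, hd, hp⟩

lemma P_append_pal {a : ℕ → α} {u v : ℕ} (h : (factor a u v).Palindrome) :
    P a (u + v) ≤ P a u + 1 := by
  rcases Nat.eq_zero_or_pos v with rfl | hv
  · simp only [Nat.add_zero]
    exact Nat.le_succ (P a u)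
  · exact P_le_dec (Dec.cons (dec_attain a u) hv h)

lemma P_succ_le (a : ℕ → α) (n : ℕ) : P a (n + 1) ≤ P a n + 1 :=
  P_append_pal (pal_single a n)

lemma P_drop_le (a : ℕ → α) (n : ℕ) : P a n ≤ P a (n + 1) + 1 := by
  obtain ⟨x, y, k', hk, hxy, hy1, hdec, hpal⟩ := dec_inv (dec_attain a (n + 1)) (by omega)
  rcases Nat.lt_or_ge y 3 with hy3 | hy3
  · interval_cases y
    · have hx : x = n := by omega
      subst hx
      have := P_le_dec hdec
      omega
    · have hn : n = x + 1 := by omega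
      subst hn
      have h2 : Dec a (x + 1) (k' + 1) := Dec.cons hdec le_rfl (pal_single a x)
      have := P_le_dec h2
      omega
  · have h1 : Dec a (x + 1) (k' + 1) := Dec.cons hdec le_rfl (pal_single a x)
    have h2 : (factor a (x + 1) (y - 2)).Palindrome := by
      have := pal_trim hpal 1
      simpa using this
    have h3 : Dec a (x + 1 + (y - 2)) (k' + 2) := Dec.cons h1 (by omega) h2
    have h5 := P_le_dec h3
    rw [show (n : ℕ) + 1 = x + y by omega] at hk
    rw [show (n : ℕ) + 1 = x + y by omega, show (n : ℕ) = x + 1 + (y - 2) by omega]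
    omega

end Stmt9Aux

namespace Stmt9Aux

variable {α : Type*} {β : Type*}

lemma map_range_eq_iff {L : ℕ} {g h : ℕ → β} :
    (List.range L).map g = (List.range L).map h ↔ ∀ i < L, g i = h i := by
  constructor
  · intro H i hi
    have h1 : ((List.range L).map g)[i]'(by simp [hi]) =
        ((List.range L).map h)[i]'(by simp [hi]) := List.getElem_of_eq H _
    simpa using h1
  · intro H
    exact List.map_congr_left (fun i hi => H i (List.mem_range.mp hi))

lemma range_one' : List.range 1 = [0] := by
  simp [List.range_succ]

lemma append4_inj {p q r s p' q' r' s' : List β}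
    (h : p ++ q ++ r ++ s = p' ++ q' ++ r' ++ s')
    (h1 : p.length = p'.length) (h2 : q.length = q'.length) (h3 : r.length = r'.length) :
    p = p' ∧ q = q' ∧ r = r' ∧ s = s' := by
  obtain ⟨ha, hs⟩ := List.append_inj h (by simp [h1, h2, h3])
  obtain ⟨hb, hr⟩ := List.append_inj ha (by simp [h1, h2])
  obtain ⟨hp, hq⟩ := List.append_inj hb h1
  exact ⟨hp, hq, hr, hs⟩

lemma four_seg_iff {A : ℕ} {u u1 u2 u3 u4 : ℕ → β} :
    (List.range (A + (A + (A + A)))).map u =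
      (List.range A).map u1 ++ (List.range A).map u2 ++
        (List.range A).map u3 ++ (List.range A).map u4 ↔
    ((∀ i < A, u i = u1 i) ∧ (∀ i < A, u (A + i) = u2 i) ∧
     (∀ i < A, u (A + (A + i)) = u3 i) ∧ (∀ i < A, u (A + (A + (A + i))) = u4 i)) := by
  simp only [List.range_add, List.map_append, List.map_map]
  simp only [← List.append_assoc]
  constructor
  · intro H
    obtain ⟨e1, e2, e3, e4⟩ := append4_inj H (by simp) (by simp) (by simp)
    refine ⟨map_range_eq_iff.mp e1, ?_, ?_, ?_⟩
    · intro i hi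
      simpa [Function.comp] using map_range_eq_iff.mp e2 i hi
    · intro i hi
      simpa [Function.comp] using map_range_eq_iff.mp e3 i hi
    · intro i hi
      simpa [Function.comp] using map_range_eq_iff.mp e4 i hi
  · rintro ⟨H1, H2, H3, H4⟩
    have e1 := map_range_eq_iff.mpr H1
    have e2 : (List.range A).map (u ∘ (fun x => A + x)) = (List.range A).map u2 := by
      apply map_range_eq_iff.mpr; intro i hi; simpa [Function.comp] using H2 i hi
    have e3 : (List.range A).map (u ∘ (fun x => A + x) ∘ (fun x => A + x)) =
        (List.range A).map u3 := by
      apply map_range_eq_iff.mpr; intro i hi; simpa [Function.comp] using H3 i hi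
    have e4 : (List.range A).map (u ∘ (fun x => A + x) ∘ (fun x => A + x) ∘ (fun x => A + x)) =
        (List.range A).map u4 := by
      apply map_range_eq_iff.mpr; intro i hi; simpa [Function.comp] using H4 i hi
    rw [e1, e2, e3, e4]

section Struct

variable {b : ℕ → α} {c : α} {f : ℕ → α ≃ α} {w : ℕ → List α}

lemma seqE (hrec : ∀ n, w (n + 1) = w n ++ (w n).map (f n) ++ (w n).map (f n) ++ w n)
    (hw4 : ∀ n, w n = (List.range (4 ^ n)).map b) (n : ℕ) :
    ∀ i < 4 ^ n, b (4 ^ n + i) = f n (b i) ∧ b (2 * 4 ^ n + i) = f n (b i) ∧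
      b (3 * 4 ^ n + i) = b i := by
  have H := (hw4 (n + 1)).symm
  rw [hrec n, hw4 n, List.map_map] at H
  rw [show (4 : ℕ) ^ (n + 1) = 4 ^ n + (4 ^ n + (4 ^ n + 4 ^ n)) by ring] at H
  obtain ⟨H1, H2, H3, H4⟩ := four_seg_iff.mp H
  intro i hi
  refine ⟨H2 i hi, ?_, ?_⟩
  · rw [show 2 * 4 ^ n + i = 4 ^ n + (4 ^ n + i) by ring]
    exact H3 i hi
  · rw [show 3 * 4 ^ n + i = 4 ^ n + (4 ^ n + (4 ^ n + i)) by ring]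
    exact H4 i hi

lemma blk (hrec : ∀ n, w (n + 1) = w n ++ (w n).map (f n) ++ (w n).map (f n) ++ w n)
    (hw4 : ∀ n, w n = (List.range (4 ^ n)).map b) :
    ∀ m n, ∃ g : α ≃ α, ∀ i < 4 ^ n, b (4 ^ n * m + i) = g (b i) := by
  intro m
  induction m using Nat.strong_induction_on with
  | _ m IH =>
  intro n
  rcases Nat.eq_zero_or_pos m with rfl | hm
  · exact ⟨Equiv.refl α, fun i hi => by simp⟩
  obtain ⟨q, d, hd4, rfl⟩ : ∃ q d, d < 4 ∧ m = 4 * q + d := ⟨m / 4, m % 4, by omega, by omega⟩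
  obtain ⟨g', hg'⟩ := IH q (by omega) (n + 1)
  have h4 : (4 : ℕ) ^ (n + 1) = 4 * 4 ^ n := by ring
  have hE := seqE hrec hw4 n
  interval_cases d
  · refine ⟨g', fun i hi => ?_⟩
    rw [show 4 ^ n * (4 * q + 0) + i = 4 ^ (n + 1) * q + i by ring]
    exact hg' i (by omega)
  · refine ⟨(f n).trans g', fun i hi => ?_⟩
    rw [show 4 ^ n * (4 * q + 1) + i = 4 ^ (n + 1) * q + (4 ^ n + i) by ring]
    rw [hg' _ (by omega), (hE i hi).1]
    rfl
  · refine ⟨(f n).trans g', fun i hi => ?_⟩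
    rw [show 4 ^ n * (4 * q + 2) + i = 4 ^ (n + 1) * q + (2 * 4 ^ n + i) by ring]
    rw [hg' _ (by omega), (hE i hi).2.1]
    rfl
  · refine ⟨g', fun i hi => ?_⟩
    rw [show 4 ^ n * (4 * q + 3) + i = 4 ^ (n + 1) * q + (3 * 4 ^ n + i) by ring]
    rw [hg' _ (by omega), (hE i hi).2.2]

end Struct

lemma quad {b : ℕ → α} (hC : InC b) :
    (∀ q, q % 4 = 1 → b q = b (q + 1)) ∧
    (∀ q, q % 4 = 0 ∨ q % 4 = 2 → b q ≠ b (q + 1)) ∧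
    (∀ m, b (4 * m) = b (4 * m + 3)) := by
  obtain ⟨c, f, w, hw0, hrec, hne, hw4⟩ := hC
  have hE0 := seqE hrec hw4 0 0 (by norm_num)
  have hb1 : b 1 = f 0 (b 0) := by simpa using hE0.1
  have hb2 : b 2 = f 0 (b 0) := by simpa using hE0.2.1
  have hb3 : b 3 = b 0 := by simpa using hE0.2.2
  have hne0 : f 0 (b 0) ≠ b 0 := by
    have h := hne 0
    have hc : c = b 0 := by
      have h1 := hw4 0
      rw [hw0] at h1
      simpa [range_one'] using h1
    rw [hw0, hc] at h
    simpa using h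
  have hblk := blk hrec hw4
  have key : ∀ m, ∃ g : α ≃ α, b (4 * m) = g (b 0) ∧ b (4 * m + 1) = g (f 0 (b 0)) ∧
      b (4 * m + 2) = g (f 0 (b 0)) ∧ b (4 * m + 3) = g (b 0) := by
    intro m
    obtain ⟨g, hg⟩ := hblk m 1
    simp only [pow_one] at hg
    refine ⟨g, ?_, ?_, ?_, ?_⟩
    · simpa using hg 0 (by norm_num)
    · rw [← hb1]; exact hg 1 (by norm_num)
    · rw [← hb2]; exact hg 2 (by norm_num)
    · have h3' := hg 3 (by norm_num)
      rw [hb3] at h3'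
      exact h3'
  refine ⟨?_, ?_, ?_⟩
  · intro q hq
    obtain ⟨m, rfl⟩ : ∃ m, q = 4 * m + 1 := ⟨q / 4, by omega⟩
    obtain ⟨g, h0, h1, h2, h3⟩ := key m
    rw [h1, show 4 * m + 1 + 1 = 4 * m + 2 by ring, h2]
  · intro q hq
    rcases hq with hq | hq
    · obtain ⟨m, rfl⟩ : ∃ m, q = 4 * m := ⟨q / 4, by omega⟩
      obtain ⟨g, h0, h1, h2, h3⟩ := key m
      rw [h0, h1]
      intro hcon
      exact hne0 (g.injective hcon).symm
    · obtain ⟨m, rfl⟩ : ∃ m, q = 4 * m + 2 := ⟨q / 4, by omega⟩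
      obtain ⟨g, h0, h1, h2, h3⟩ := key m
      rw [h2, show 4 * m + 2 + 1 = 4 * m + 3 by ring, h3]
      intro hcon
      exact hne0 (g.injective hcon)
  · intro m
    obtain ⟨g, h0, h1, h2, h3⟩ := key m
    rw [h0, h3]

/-- The derived (block) sequence. -/
def deriv (b : ℕ → α) : ℕ → α × α := fun m => (b (4 * m), b (4 * m + 1))

lemma deriv_InC {b : ℕ → α} (hC : InC b) : InC (deriv b) := by
  obtain ⟨hQA, hQB, hQC⟩ := quad hC
  obtain ⟨c, f, w, hw0, hrec, hne, hw4⟩ := hC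
  refine ⟨(b 0, b 1), fun n => Equiv.prodCongr (f (n + 1)) (f (n + 1)),
    fun n => (List.range (4 ^ n)).map (deriv b), ?_, ?_, ?_, fun n => rfl⟩
  · simp [deriv, range_one']
  · intro n
    dsimp only
    rw [show (4 : ℕ) ^ (n + 1) = 4 ^ n + (4 ^ n + (4 ^ n + 4 ^ n)) by ring,
      List.map_map]
    have hE := seqE hrec hw4 (n + 1)
    have h4 : (4 : ℕ) ^ (n + 1) = 4 * 4 ^ n := by ring
    apply four_seg_iff.mpr
    refine ⟨fun i _ => rfl, ?_, ?_, ?_⟩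
    · intro i hi
      show deriv b (4 ^ n + i) = (Equiv.prodCongr (f (n + 1)) (f (n + 1)) ∘ deriv b) i
      have e1 : b (4 * (4 ^ n + i)) = f (n + 1) (b (4 * i)) := by
        rw [show 4 * (4 ^ n + i) = 4 ^ (n + 1) + 4 * i by ring]
        exact (hE (4 * i) (by omega)).1
      have e2 : b (4 * (4 ^ n + i) + 1) = f (n + 1) (b (4 * i + 1)) := by
        rw [show 4 * (4 ^ n + i) + 1 = 4 ^ (n + 1) + (4 * i + 1) by ring]
        exact (hE (4 * i + 1) (by omega)).1
      simp only [deriv, Function.comp_apply, Equiv.prodCongr_apply, Prod.map]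
      rw [e1, e2]
    · intro i hi
      show deriv b (4 ^ n + (4 ^ n + i)) = (Equiv.prodCongr (f (n + 1)) (f (n + 1)) ∘ deriv b) i
      have e1 : b (4 * (4 ^ n + (4 ^ n + i))) = f (n + 1) (b (4 * i)) := by
        rw [show 4 * (4 ^ n + (4 ^ n + i)) = 2 * 4 ^ (n + 1) + 4 * i by ring]
        exact (hE (4 * i) (by omega)).2.1
      have e2 : b (4 * (4 ^ n + (4 ^ n + i)) + 1) = f (n + 1) (b (4 * i + 1)) := by
        rw [show 4 * (4 ^ n + (4 ^ n + i)) + 1 = 2 * 4 ^ (n + 1) + (4 * i + 1) by ring]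
        exact (hE (4 * i + 1) (by omega)).2.1
      simp only [deriv, Function.comp_apply, Equiv.prodCongr_apply, Prod.map]
      rw [e1, e2]
    · intro i hi
      show deriv b (4 ^ n + (4 ^ n + (4 ^ n + i))) = deriv b i
      have e1 : b (4 * (4 ^ n + (4 ^ n + (4 ^ n + i)))) = b (4 * i) := by
        rw [show 4 * (4 ^ n + (4 ^ n + (4 ^ n + i))) = 3 * 4 ^ (n + 1) + 4 * i by ring]
        exact (hE (4 * i) (by omega)).2.2
      have e2 : b (4 * (4 ^ n + (4 ^ n + (4 ^ n + i))) + 1) = b (4 * i + 1) := by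
        rw [show 4 * (4 ^ n + (4 ^ n + (4 ^ n + i))) + 1 = 3 * 4 ^ (n + 1) + (4 * i + 1) by ring]
        exact (hE (4 * i + 1) (by omega)).2.2
      simp only [deriv]
      rw [e1, e2]
  · intro n hcon
    apply hne (n + 1)
    dsimp only at hcon
    rw [List.map_map] at hcon
    have hfix : ∀ m < 4 ^ n, f (n + 1) (b (4 * m)) = b (4 * m) ∧
        f (n + 1) (b (4 * m + 1)) = b (4 * m + 1) := by
      intro m hm
      have := map_range_eq_iff.mp hcon m hm
      simp only [Function.comp_apply, Equiv.prodCongr_apply, Prod.map, deriv] at this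
      exact ⟨congrArg Prod.fst this, congrArg Prod.snd this⟩
    rw [hw4 (n + 1), List.map_map]
    apply map_range_eq_iff.mpr
    intro i hi
    have h4 : (4 : ℕ) ^ (n + 1) = 4 * 4 ^ n := by ring
    obtain ⟨m, d, hd4, rfl⟩ : ∃ m d, d < 4 ∧ i = 4 * m + d := ⟨i / 4, i % 4, by omega, by omega⟩
    have hm : m < 4 ^ n := by omega
    obtain ⟨e0, e1⟩ := hfix m hm
    show f (n + 1) (b (4 * m + d)) = b (4 * m + d)
    interval_cases d
    · simpa using e0
    · exact e1
    · rw [show 4 * m + 2 = 4 * m + 1 + 1 by ring, ← hQA (4 * m + 1) (by omega)]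
      exact e1
    · rw [← hQC m]
      exact e0

end Stmt9Aux

namespace Stmt9Aux

variable {α : Type*}

lemma deflate_iff {b : ℕ → α} (hC : InC b) {p l : ℕ} :
    (factor b (4 * p) (4 * l)).Palindrome ↔ (factor (deriv b) p l).Palindrome := by
  obtain ⟨hQA, hQB, hQC⟩ := quad hC
  rw [pal_iff, pal_iff]
  constructor
  · intro H q hq
    have h1 := H (4 * q) (by omega)
    have h2 := H (4 * q + 1) (by omega)
    rw [show 4 * p + 4 * q = 4 * (p + q) by ring,
      show 4 * p + (4 * l - 1 - 4 * q) = 4 * (p + (l - 1 - q)) + 3 by omega] at h1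
    rw [show 4 * p + (4 * q + 1) = 4 * (p + q) + 1 by ring,
      show 4 * p + (4 * l - 1 - (4 * q + 1)) = 4 * (p + (l - 1 - q)) + 2 by omega] at h2
    have e1 : b (4 * (p + q)) = b (4 * (p + (l - 1 - q))) := by
      rw [h1, ← hQC (p + (l - 1 - q))]
    have e2 : b (4 * (p + q) + 1) = b (4 * (p + (l - 1 - q)) + 1) := by
      rw [h2, ← hQA (4 * (p + (l - 1 - q)) + 1) (by omega)]
    show (b (4 * (p + q)), b (4 * (p + q) + 1)) = _
    rw [e1, e2]
    rfl
  · intro H i hi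
    obtain ⟨q, d, hd4, rfl⟩ : ∃ q d, d < 4 ∧ i = 4 * q + d := ⟨i / 4, i % 4, by omega, by omega⟩
    have hql : q < l := by omega
    have hE := H q hql
    have hE' := H (l - 1 - q) (by omega)
    rw [show p + (l - 1 - (l - 1 - q)) = p + q by omega] at hE'
    have e1 : b (4 * (p + q)) = b (4 * (p + (l - 1 - q))) :=
      congrArg Prod.fst hE
    have e2 : b (4 * (p + q) + 1) = b (4 * (p + (l - 1 - q)) + 1) :=
      congrArg Prod.snd hE
    interval_cases d
    · rw [show 4 * p + (4 * q + 0) = 4 * (p + q) by ring,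
        show 4 * p + (4 * l - 1 - (4 * q + 0)) = 4 * (p + (l - 1 - q)) + 3 by omega]
      rw [e1, ← hQC (p + (l - 1 - q))]
    · rw [show 4 * p + (4 * q + 1) = 4 * (p + q) + 1 by ring,
        show 4 * p + (4 * l - 1 - (4 * q + 1)) = 4 * (p + (l - 1 - q)) + 2 by omega]
      rw [e2, ← hQA (4 * (p + (l - 1 - q)) + 1) (by omega)]
    · rw [show 4 * p + (4 * q + 2) = 4 * (p + q) + 1 + 1 by ring,
        show 4 * p + (4 * l - 1 - (4 * q + 2)) = 4 * (p + (l - 1 - q)) + 1 by omega]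
      rw [← hQA (4 * (p + q) + 1) (by omega), e2]
    · rw [show 4 * p + (4 * q + 3) = 4 * (p + q) + 3 by ring,
        show 4 * p + (4 * l - 1 - (4 * q + 3)) = 4 * (p + (l - 1 - q)) by omega]
      rw [← hQC (p + q), e1]

lemma inflate_dec {b : ℕ → α} (hC : InC b) {p k : ℕ} (h : Dec (deriv b) p k) :
    Dec b (4 * p) k := by
  induction h with
  | nil => simpa using Dec.nil
  | @cons x y k hd hy hp ih =>
    have h2 := Dec.cons ih (y := 4 * y) (by omega) ((deflate_iff hC).mpr hp)
    rw [show 4 * (x + y) = 4 * x + 4 * y by ring]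
    exact h2

lemma lemA {b : ℕ → α} (hC : InC b) {x y : ℕ} (hpal : (factor b x y).Palindrome)
    (hy : 2 ≤ y) :
    (y % 2 = 0 ∧ (2 * x + y) % 4 = 0) ∨ (y = 3 ∧ (x % 4 = 2 ∨ x % 4 = 3)) := by
  obtain ⟨hQA, hQB, hQC⟩ := quad hC
  rw [pal_iff] at hpal
  have hp' : ∀ i j, i < y → i + j = y - 1 → b (x + i) = b (x + j) := by
    intro i j hi hij
    have := hpal i hi
    rw [show y - 1 - i = j by omega] at this
    exact this
  rcases Nat.even_or_odd y with he | ho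
  · left
    have hy2 : y % 2 = 0 := by
      obtain ⟨t, ht⟩ := he; omega
    refine ⟨hy2, ?_⟩
    have hc : b (x + (y / 2 - 1)) = b (x + y / 2) := hp' (y / 2 - 1) (y / 2) (by omega) (by omega)
    set q := x + (y / 2 - 1) with hq
    have hc' : b q = b (q + 1) := by
      rw [show q + 1 = x + y / 2 by omega]
      exact hc
    have hq4 : q % 4 = 1 ∨ q % 4 = 3 := by
      by_contra hcon
      exact hQB q (by omega) hc'
    omega
  · obtain ⟨t, ht⟩ := ho
    rcases Nat.lt_or_ge y 4 with hy4 | hy4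
    · have hy3 : y = 3 := by omega
      subst hy3
      right
      refine ⟨rfl, ?_⟩
      have h02 : b x = b (x + 2) := by
        have := hp' 0 2 (by omega) (by omega)
        simpa using this
      have h4 : x % 4 = 0 ∨ x % 4 = 1 ∨ x % 4 = 2 ∨ x % 4 = 3 := by omega
      rcases h4 with h4 | h4 | h4 | h4
      · exfalso
        apply hQB x (Or.inl h4)
        rw [h02, show x + 2 = x + 1 + 1 by ring, ← hQA (x + 1) (by omega)]
      · exfalso
        apply hQB (x + 1) (Or.inr (by omega))
        rw [show x + 1 + 1 = x + 2 by ring, ← h02, ← hQA x (by omega)]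
      · exact Or.inl h4
      · exact Or.inr h4
    · exfalso
      have hy5 : 5 ≤ y := by omega
      set q := x + (5 - x % 4) % 4 with hq
      have hq4 : q % 4 = 1 := by omega
      have hEq : b q = b (q + 1) := hQA q hq4
      set i := q - x with hi
      have hix : i ≤ 3 := by omega
      have h1 : b q = b (x + (y - 2 - i) + 1) := by
        have := hp' i (y - 1 - i) (by omega) (by omega)
        rw [show x + i = q by omega, show x + (y - 1 - i) = x + (y - 2 - i) + 1 by omega] at this
        exact this
      have h2 : b (q + 1) = b (x + (y - 2 - i)) := by
        have := hp' (i + 1) (y - 2 - i) (by omega) (by omega)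
        rw [show x + (i + 1) = q + 1 by omega] at this
        exact this
      have hcon : b (x + (y - 2 - i)) = b (x + (y - 2 - i) + 1) := by
        rw [← h2, ← hEq, h1]
      apply hQB (x + (y - 2 - i)) _ hcon
      omega

end Stmt9Aux

namespace Stmt9Aux

/-- The universal prefix palindromic length function for class 𝒞. -/
def F (n : ℕ) : ℕ :=
  if h0 : n = 0 then 0
  else if h1 : n = 1 then 1
  else if h2 : n = 2 then 2
  else if h3 : n = 3 then 2
  else
    match h : n % 4 with
    | 0 => F (n / 4)
    | 1 => F (n / 4) + 1
    | 2 => min (F (n / 4)) (F (n / 4 + 1)) + 2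
    | _ => F (n / 4 + 1) + 1
termination_by n
decreasing_by all_goals omega

lemma F_zero : F 0 = 0 := by rw [F]; norm_num
lemma F_one : F 1 = 1 := by rw [F]; norm_num
lemma F_two : F 2 = 2 := by rw [F]; norm_num
lemma F_three : F 3 = 2 := by rw [F]; norm_num

lemma F_four (m : ℕ) (h4 : 4 ≤ m) :
    F m = match h : m % 4 with
    | 0 => F (m / 4)
    | 1 => F (m / 4) + 1
    | 2 => min (F (m / 4)) (F (m / 4 + 1)) + 2
    | _ => F (m / 4 + 1) + 1 := by
  rw [F]
  rw [dif_neg (by omega), dif_neg (by omega), dif_neg (by omega), dif_neg (by omega)]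

lemma F4_0 (m : ℕ) : F (4 * m) = F m := by
  rcases Nat.eq_zero_or_pos m with rfl | hm
  · simp
  rw [F_four (4 * m) (by omega)]
  have h : 4 * m % 4 = 0 := by omega
  split
  · rw [show 4 * m / 4 = m by omega]
  · omega
  · omega
  · exact absurd h (by assumption)

lemma F4_1 (m : ℕ) : F (4 * m + 1) = F m + 1 := by
  rcases Nat.eq_zero_or_pos m with rfl | hm
  · show F 1 = F 0 + 1
    rw [F_zero, F_one]
  rw [F_four (4 * m + 1) (by omega)]
  have h : (4 * m + 1) % 4 = 1 := by omega
  split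
  · omega
  · rw [show (4 * m + 1) / 4 = m by omega]
  · omega
  · exact absurd h (by assumption)

lemma F4_2 (m : ℕ) : F (4 * m + 2) = min (F m) (F (m + 1)) + 2 := by
  rcases Nat.eq_zero_or_pos m with rfl | hm
  · show F 2 = min (F 0) (F 1) + 2
    rw [F_zero, F_one, F_two]
    rfl
  rw [F_four (4 * m + 2) (by omega)]
  have h : (4 * m + 2) % 4 = 2 := by omega
  split
  · omega
  · omega
  · rw [show (4 * m + 2) / 4 = m by omega]
  · exact absurd h (by assumption)

lemma F4_3 (m : ℕ) : F (4 * m + 3) = F (m + 1) + 1 := by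
  rcases Nat.eq_zero_or_pos m with rfl | hm
  · show F 3 = F 1 + 1
    rw [F_one, F_three]
  rw [F_four (4 * m + 3) (by omega)]
  have h : (4 * m + 3) % 4 = 3 := by omega
  split
  · omega
  · omega
  · omega
  · rw [show (4 * m + 3) / 4 = m by omega]

end Stmt9Aux
namespace Stmt9Aux

theorem master : ∀ (n : ℕ) {α : Type*} (b : ℕ → α), InC b → P b n = F n := by
  intro n
  induction n using Nat.strong_induction_on with
  | _ n IH =>
  intro α b hC
  obtain ⟨hQA, hQB, hQC⟩ := quad hC
  rcases Nat.lt_or_ge n 4 with hn4 | hn4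
  · interval_cases n
    · rw [P_zero, F_zero]
    · rw [F_one]
      refine le_antisymm (P_le_dec (dec_singletons b 1)) ?_
      obtain ⟨x, y, k', hk, hxy, hy1, hd, hp⟩ := dec_inv (dec_attain b 1) (by omega)
      omega
    · rw [F_two]
      refine le_antisymm (P_le_dec (dec_singletons b 2)) ?_
      by_contra hcon
      obtain ⟨x, y, k', hk, hxy, hy1, hd, hp⟩ := dec_inv (dec_attain b 2) (by omega)
      have hk0 : k' = 0 := by omega
      subst hk0
      have hx0 : x = 0 := by cases hd; rfl
      subst hx0
      have hy2 : y = 2 := by omega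
      subst hy2
      have := pal_iff.mp hp 0 (by omega)
      simp only [Nat.add_zero, Nat.zero_add] at this
      exact hQB 0 (Or.inl rfl) (by simpa using this)
    · rw [F_three]
      have hup : Dec b 3 2 := by
        have h1 : Dec b 1 1 := Dec.cons Dec.nil le_rfl (by simpa using pal_single b 0)
        have h2 : (factor b 1 2).Palindrome := by
          rw [pal_iff]
          intro i hi
          interval_cases i
          · simpa using hQA 1 (by omega)
          · simpa using (hQA 1 (by omega)).symm
        have := Dec.cons h1 (by omega) h2
        simpa using this
      refine le_antisymm (P_le_dec hup) ?_
      by_contra hcon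
      obtain ⟨x, y, k', hk, hxy, hy1, hd, hp⟩ := dec_inv (dec_attain b 3) (by omega)
      have hk0 : k' = 0 := by omega
      subst hk0
      have hx0 : x = 0 := by cases hd; rfl
      subst hx0
      have hy3 : y = 3 := by omega
      subst hy3
      have h02 := pal_iff.mp hp 0 (by omega)
      simp only [Nat.add_zero, Nat.zero_add] at h02
      have h12 : b 1 = b 2 := hQA 1 (by omega)
      exact hQB 0 (Or.inl rfl) (by rw [h02, ← h12])
  · obtain ⟨m, r, hr, rfl⟩ : ∃ m r, r < 4 ∧ n = 4 * m + r := ⟨n / 4, n % 4, by omega, by omega⟩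
    have hm : 1 ≤ m := by omega
    have hC' : InC (deriv b) := deriv_InC hC
    have Ebm : P (deriv b) m = F m := IH m (by omega) _ hC'
    have Ebm1 : P (deriv b) (m + 1) = F (m + 1) := IH (m + 1) (by omega) _ hC'
    have hLip1 : F (m + 1) ≤ F m + 1 := by
      rw [← Ebm, ← Ebm1]; exact P_succ_le _ m
    have hLip2 : F m ≤ F (m + 1) + 1 := by
      rw [← Ebm, ← Ebm1]; exact P_drop_le _ m
    refine le_antisymm ?_ ?_
    · -- upper bound
      interval_cases r
      · show P b (4 * m) ≤ F (4 * m)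
        rw [F4_0, ← Ebm]
        exact P_le_dec (inflate_dec hC (dec_attain _ m))
      · rw [F4_1, ← Ebm]
        have h1 : Dec b (4 * m) (P (deriv b) m) := inflate_dec hC (dec_attain _ m)
        exact P_le_dec (Dec.cons h1 le_rfl (pal_single b (4 * m)))
      · rw [F4_2]
        have hb1 : P b (4 * m + 2) ≤ F m + 2 := by
          rw [← Ebm]
          have h1 : Dec b (4 * m) (P (deriv b) m) := inflate_dec hC (dec_attain _ m)
          have h2 := Dec.cons h1 le_rfl (pal_single b (4 * m))
          have h3 := Dec.cons h2 le_rfl (pal_single b (4 * m + 1))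
          rw [show 4 * m + 1 + 1 = 4 * m + 2 by ring] at h3
          exact P_le_dec h3
        have hb2 : P b (4 * m + 2) ≤ F (m + 1) + 2 := by
          obtain ⟨p', l, K', hK, hpl, hl1, hdec', hpal'⟩ :=
            dec_inv (dec_attain (deriv b) (m + 1)) (by omega)
          have hinf : Dec b (4 * p') K' := inflate_dec hC hdec'
          have hIpal : (factor b (4 * p') (4 * l)).Palindrome := (deflate_iff hC).mpr hpal'
          have h2 := Dec.cons hinf le_rfl (pal_single b (4 * p'))
          have h3 := Dec.cons h2 le_rfl (pal_single b (4 * p' + 1))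
          rcases eq_or_lt_of_le hl1 with hl | hl
          · have hp'm : p' = m := by omega
            subst hp'm
            rw [show 4 * p' + 1 + 1 = 4 * p' + 2 by ring] at h3
            have := P_le_dec h3
            rw [← Ebm1]
            omega
          · have hcore : (factor b (4 * p' + 2) (4 * l - 4)).Palindrome := by
              have := pal_trim hIpal 2
              rw [show 4 * l - 2 * 2 = 4 * l - 4 by omega] at this
              exact this
            have h4 := Dec.cons h3 (y := 4 * l - 4) (by omega) hcore
            rw [show 4 * p' + 1 + 1 + (4 * l - 4) = 4 * m + 2 by omega] at h4
            have := P_le_dec h4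
            rw [← Ebm1]
            omega
        omega
      · rw [F4_3, ← Ebm1]
        obtain ⟨p', l, K', hK, hpl, hl1, hdec', hpal'⟩ :=
          dec_inv (dec_attain (deriv b) (m + 1)) (by omega)
        have hinf : Dec b (4 * p') K' := inflate_dec hC hdec'
        have hIpal : (factor b (4 * p') (4 * l)).Palindrome := (deflate_iff hC).mpr hpal'
        have h2 := Dec.cons hinf le_rfl (pal_single b (4 * p'))
        have hM : (factor b (4 * p' + 1) (4 * l - 2)).Palindrome := by
          have := pal_trim hIpal 1
          rw [show 4 * l - 2 * 1 = 4 * l - 2 by omega] at this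
          exact this
        have h3 := Dec.cons h2 (y := 4 * l - 2) (by omega) hM
        rw [show 4 * p' + 1 + (4 * l - 2) = 4 * m + 3 by omega] at h3
        have := P_le_dec h3
        omega
    · -- lower bound
      obtain ⟨x, y, k', hk, hxy, hy1, hdec, hpal⟩ :=
        dec_inv (dec_attain b (4 * m + r)) (by omega)
      have hPx : P b x ≤ k' := P_le_dec hdec
      have hFx : P b x = F x := IH x (by omega) _ hC
      rw [hk]
      interval_cases r
      · show F (4 * m) ≤ k' + 1
        rw [F4_0]
        rcases eq_or_lt_of_le hy1 with hy | hy2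
        · -- y = 1, x = 4m - 1 = 4(m-1)+3
          have hFx2 : F x = F m + 1 := by
            rw [show x = 4 * (m - 1) + 3 by omega, F4_3, show m - 1 + 1 = m by omega]
          omega
        · rcases lemA hC hpal (by omega) with ⟨hyev, hcen⟩ | ⟨hy3, hx23⟩
          · obtain ⟨p, rfl⟩ : ∃ p, x = 4 * p := ⟨x / 4, by omega⟩
            rw [show y = 4 * (m - p) by omega] at hpal
            have hdp := (deflate_iff hC).mp hpal
            have Ep : P (deriv b) p = F p := IH p (by omega) _ hC'
            have h5 := P_append_pal hdp
            rw [show p + (m - p) = m by omega, Ebm, Ep] at h5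
            rw [F4_0] at hFx
            omega
          · rcases hx23 with h | h <;> omega
      · show F (4 * m + 1) ≤ k' + 1
        rw [F4_1]
        rcases eq_or_lt_of_le hy1 with hy | hy2
        · have hFx2 : F x = F m := by rw [show x = 4 * m by omega, F4_0]
          omega
        · rcases lemA hC hpal (by omega) with ⟨hyev, hcen⟩ | ⟨hy3, hx23⟩
          · -- x ≡ 3 mod 4
            obtain ⟨p, rfl⟩ : ∃ p, x = 4 * p + 3 := ⟨x / 4, by omega⟩
            have hpm : p < m := by omega
            have hcore : (factor b (4 * (p + 1)) (4 * (m - p - 1))).Palindrome := by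
              have := pal_trim hpal 1
              rw [show 4 * p + 3 + 1 = 4 * (p + 1) by ring,
                show y - 2 * 1 = 4 * (m - p - 1) by omega] at this
              exact this
            have hdp := (deflate_iff hC).mp hcore
            have Ep1 : P (deriv b) (p + 1) = F (p + 1) := IH (p + 1) (by omega) _ hC'
            have h5 := P_append_pal hdp
            rw [show p + 1 + (m - p - 1) = m by omega, Ebm, Ep1] at h5
            rw [F4_3] at hFx
            omega
          · -- y = 3, x = 4m - 2 = 4(m-1)+2
            have Em0 : P (deriv b) (m - 1) = F (m - 1) := IH (m - 1) (by omega) _ hC'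
            have hLip3 : F m ≤ F (m - 1) + 1 := by
              rw [← Ebm, ← Em0]
              have := P_succ_le (deriv b) (m - 1)
              rw [show m - 1 + 1 = m by omega] at this
              exact this
            have hFx2 : F x = min (F (m - 1)) (F m) + 2 := by
              rw [show x = 4 * (m - 1) + 2 by omega, F4_2, show m - 1 + 1 = m by omega]
            omega
      · show F (4 * m + 2) ≤ k' + 1
        rw [F4_2]
        rcases eq_or_lt_of_le hy1 with hy | hy2
        · have hFx2 : F x = F m + 1 := by rw [show x = 4 * m + 1 by omega, F4_1]
          omega
        · rcases lemA hC hpal (by omega) with ⟨hyev, hcen⟩ | ⟨hy3, hx23⟩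
          · -- x ≡ 2 mod 4
            obtain ⟨p, rfl⟩ : ∃ p, x = 4 * p + 2 := ⟨x / 4, by omega⟩
            have hpm : p < m := by omega
            have hyv : y = 4 * (m - p) := by omega
            have hpF := pal_iff.mp hpal
            -- deriv b p = deriv b m
            have e1 : b (4 * p) = b (4 * m) := by
              have := hpF 1 (by omega)
              rw [show 4 * p + 2 + 1 = 4 * p + 3 by ring,
                show 4 * p + 2 + (y - 1 - 1) = 4 * m by omega] at this
              rw [hQC p, this]
            have e2 : b (4 * p + 1) = b (4 * m + 1) := by
              have := hpF 0 (by omega)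
              rw [show 4 * p + 2 + 0 = 4 * p + 2 by ring,
                show 4 * p + 2 + (y - 1 - 0) = 4 * m + 1 by omega] at this
              rw [hQA (4 * p + 1) (by omega), this]
            have hbb : deriv b p = deriv b m := by
              show (b (4 * p), b (4 * p + 1)) = (b (4 * m), b (4 * m + 1))
              rw [e1, e2]
            have hcore : (factor b (4 * (p + 1)) (4 * (m - p - 1))).Palindrome := by
              have := pal_trim hpal 2
              rw [show 4 * p + 2 + 2 = 4 * (p + 1) by ring,
                show y - 2 * 2 = 4 * (m - p - 1) by omega] at this
              exact this
            have hdp := (deflate_iff hC).mp hcore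
            have hext : (factor (deriv b) p (m - p - 1 + 2)).Palindrome := by
              apply pal_extend _ hdp
              rw [show p + (m - p - 1) + 1 = m by omega]
              exact hbb
            have Ep : P (deriv b) p = F p := IH p (by omega) _ hC'
            have Ep1 : P (deriv b) (p + 1) = F (p + 1) := IH (p + 1) (by omega) _ hC'
            have h5 := P_append_pal hdp
            rw [show p + 1 + (m - p - 1) = m by omega, Ebm, Ep1] at h5
            have h6 := P_append_pal hext
            rw [show p + (m - p - 1 + 2) = m + 1 by omega, Ebm1, Ep] at h6
            rw [F4_2] at hFx
            omega
          · -- y = 3, x = 4m - 1 = 4(m-1)+3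
            have hFx2 : F x = F m + 1 := by
              rw [show x = 4 * (m - 1) + 3 by omega, F4_3, show m - 1 + 1 = m by omega]
            omega
      · show F (4 * m + 3) ≤ k' + 1
        rw [F4_3]
        rcases eq_or_lt_of_le hy1 with hy | hy2
        · have hFx2 : F x = min (F m) (F (m + 1)) + 2 := by
            rw [show x = 4 * m + 2 by omega, F4_2]
          omega
        · rcases lemA hC hpal (by omega) with ⟨hyev, hcen⟩ | ⟨hy3, hx23⟩
          · -- x ≡ 1 mod 4
            obtain ⟨p, rfl⟩ : ∃ p, x = 4 * p + 1 := ⟨x / 4, by omega⟩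
            have hpm : p ≤ m := by omega
            rcases eq_or_lt_of_le hpm with hpe | hplt
            · -- p = m : y = 2
              subst hpe
              rw [F4_1] at hFx
              omega
            · have hyv : y = 4 * (m - p) + 2 := by omega
              have hpF := pal_iff.mp hpal
              have e1 : b (4 * p) = b (4 * m) := by
                have := hpF 2 (by omega)
                rw [show 4 * p + 1 + 2 = 4 * p + 3 by ring,
                  show 4 * p + 1 + (y - 1 - 2) = 4 * m by omega] at this
                rw [hQC p, this]
              have e2 : b (4 * p + 1) = b (4 * m + 1) := by
                have := hpF 0 (by omega)
                rw [show 4 * p + 1 + 0 = 4 * p + 1 by ring,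
                  show 4 * p + 1 + (y - 1 - 0) = 4 * m + 2 by omega] at this
                rw [hQA (4 * m + 1) (by omega)]
                exact this
              have hbb : deriv b p = deriv b m := by
                show (b (4 * p), b (4 * p + 1)) = (b (4 * m), b (4 * m + 1))
                rw [e1, e2]
              have hcore : (factor b (4 * (p + 1)) (4 * (m - p - 1))).Palindrome := by
                have := pal_trim hpal 3
                rw [show 4 * p + 1 + 3 = 4 * (p + 1) by ring,
                  show y - 2 * 3 = 4 * (m - p - 1) by omega] at this
                exact this
              have hdp := (deflate_iff hC).mp hcore
              have hext : (factor (deriv b) p (m - p - 1 + 2)).Palindrome := by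
                apply pal_extend _ hdp
                rw [show p + (m - p - 1) + 1 = m by omega]
                exact hbb
              have Ep : P (deriv b) p = F p := IH p (by omega) _ hC'
              have h6 := P_append_pal hext
              rw [show p + (m - p - 1 + 2) = m + 1 by omega, Ebm1, Ep] at h6
              rw [F4_1] at hFx
              omega
          · omega
end Stmt9Aux

open Stmt9Aux in
theorem stmt9 {α : Type*} (a : ℕ → α) (hC : InC a) (k : ℕ) :
    P a (4 * k + 4) = P a (k + 1) ∧
    P a (4 * k + 3) = P a (4 * k + 4) + 1 ∧
    (P a (4 * k + 2) - P a (4 * k + 4) = 1 ∨ P a (4 * k + 2) - P a (4 * k + 4) = 2) ∧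
    (P a (4 * k + 1) - P a (4 * k + 4) = 0 ∨ P a (4 * k + 1) - P a (4 * k + 4) = 1 ∨
      P a (4 * k + 1) - P a (4 * k + 4) = 2) := by
  have e4 : P a (4 * k + 4) = F (k + 1) := by
    rw [master (4 * k + 4) a hC, show 4 * k + 4 = 4 * (k + 1) by ring, F4_0]
  have e3 : P a (4 * k + 3) = F (k + 1) + 1 := by
    rw [master (4 * k + 3) a hC, F4_3]
  have e2 : P a (4 * k + 2) = min (F k) (F (k + 1)) + 2 := by
    rw [master (4 * k + 2) a hC, F4_2]
  have e1 : P a (4 * k + 1) = F k + 1 := by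
    rw [master (4 * k + 1) a hC, F4_1]
  have ek : P a k = F k := master k a hC
  have ek1 : P a (k + 1) = F (k + 1) := master (k + 1) a hC
  have hL1 : F (k + 1) ≤ F k + 1 := by
    rw [← ek, ← ek1]; exact P_succ_le a k
  have hL2 : F k ≤ F (k + 1) + 1 := by
    rw [← ek, ← ek1]; exact P_drop_le a k
  refine ⟨by omega, by omega, by omega, by omega⟩
end

section
/- Any two sequences in the class 𝒞 have the same palindromic length sequence: if a : ℕ → α and b : ℕ → β are both in 𝒞 (over possibly different alphabets α and β), then P_a(n) = P_b(n) for every n ∈ ℕ. -/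
section Basic
variable {γ : Type*} {u : ℕ → γ}

@[simp] lemma length_factor (x y : ℕ) : (factor u x y).length = y := by
  simp [factor]

lemma getElem_factor {x y i : ℕ} (h : i < y) :
    (factor u x y)[i]'(by simpa using h) = u (x + i) := by
  simp [factor]

lemma factor_eq_iff {x x' y : ℕ} :
    factor u x y = factor u x' y ↔ ∀ i < y, u (x + i) = u (x' + i) := by
  constructor
  · intro h i hi
    have h2 := List.getElem_of_eq h (by simpa using hi : i < (factor u x y).length)
    rwa [getElem_factor hi, getElem_factor hi] at h2
  · intro h
    apply List.ext_getElem (by simp)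
    intro i h1 h2
    have hi : i < y := by simpa using h1
    rw [getElem_factor hi, getElem_factor hi]
    exact h i hi

lemma factor_append (x y z : ℕ) :
    factor u x (y + z) = factor u x y ++ factor u (x + y) z := by
  apply List.ext_getElem (by simp)
  intro i h1 h2
  have hi : i < y + z := by simpa using h1
  rw [getElem_factor hi]
  rcases Nat.lt_or_ge i y with h | h
  · rw [List.getElem_append_left (by simpa using h), getElem_factor h]
  · rw [List.getElem_append_right (by simpa using h)]
    have : i - y < z := by omega
    simp only [length_factor]
    rw [getElem_factor this]
    congr 1; omega

lemma factor_one (x : ℕ) : factor u x 1 = [u x] := by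
  simp [factor, List.range_succ]

/-- interval palindrome predicate: positions [m, n) -/
def Pal (u : ℕ → γ) (m n : ℕ) : Prop :=
  ∀ x y, m ≤ x → x < n → m ≤ y → y < n → x + y + 1 = m + n → u x = u y

lemma pal_iff {m n : ℕ} (h : m ≤ n) :
    (factor u m (n - m)).Palindrome ↔ Pal u m n := by
  rw [List.Palindrome.iff_reverse_eq]
  constructor
  · intro hrev x y hx hxn hy hyn hsum
    have hix : x - m < n - m := by omega
    have hiy : y - m < n - m := by omega
    have h1 : u x = (factor u m (n - m))[x - m]'(by simpa using hix) := by
      rw [getElem_factor hix]; congr 1; omega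
    have h2 : u y = (factor u m (n - m))[(n - m) - 1 - (x - m)]'(by simp; omega) := by
      rw [getElem_factor (by omega)]; congr 1; omega
    rw [h1, h2]
    have h3 := List.getElem_of_eq hrev.symm
      (by simpa using hix : x - m < (factor u m (n - m)).length)
    rw [h3, List.getElem_reverse]
    congr 1
    simp
  · intro hp
    apply List.ext_getElem (by simp)
    intro i h1 h2
    have hi : i < n - m := by simpa using h1
    rw [List.getElem_reverse]
    simp only [length_factor]
    rw [getElem_factor (by omega), getElem_factor hi]
    exact hp _ _ (by omega) (by omega) (by omega) (by omega) (by omega)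

lemma Pal.shrink {m n : ℕ} (h : Pal u m n) : Pal u (m + 1) (n - 1) := by
  intro x y hx hxn hy hyn hsum
  exact h x y (by omega) (by omega) (by omega) (by omega) (by omega)

lemma Pal.single (m : ℕ) : Pal u m (m + 1) := by
  intro x y hx hxn hy hyn hsum
  have : x = m ∧ y = m := by omega
  rw [this.1, this.2]

lemma Pal.empty {m n : ℕ} (h : n ≤ m) : Pal u m n := by
  intro x y hx hxn hy hyn hsum
  omega

end Basic
section PalLen
variable {γ : Type*} {u : ℕ → γ}

lemma flatten_map_singleton (w : List γ) : (w.map (fun c => [c])).flatten = w := by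
  induction w with
  | nil => simp
  | cons c w ih => simp [ih]

lemma decompSet_nonempty (w : List γ) :
    {k | ∃ ps : List (List γ),
      ps.length = k ∧ (∀ p ∈ ps, p.Palindrome) ∧ ps.flatten = w}.Nonempty := by
  refine ⟨w.length, w.map (fun c => [c]), by simp, ?_, flatten_map_singleton w⟩
  intro p hp
  simp only [List.mem_map] at hp
  obtain ⟨c, _, rfl⟩ := hp
  exact List.Palindrome.singleton c

lemma palLen_le {w : List γ} (ps : List (List γ)) (hp : ∀ p ∈ ps, p.Palindrome)
    (hf : ps.flatten = w) : palLen w ≤ ps.length :=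
  Nat.sInf_le ⟨ps, rfl, hp, hf⟩

lemma exists_decomp (w : List γ) : ∃ ps : List (List γ),
    ps.length = palLen w ∧ (∀ p ∈ ps, p.Palindrome) ∧ ps.flatten = w :=
  Nat.sInf_mem (decompSet_nonempty w)

lemma flatten_filter_ne_nil (ps : List (List γ)) :
    (ps.filter (fun p => !p.isEmpty)).flatten = ps.flatten := by
  induction ps with
  | nil => simp
  | cons p ps ih =>
    by_cases h : p.isEmpty
    · have : p = [] := List.isEmpty_iff.mp h
      simp [List.filter_cons, h, ih, this]
    · simp [List.filter_cons, h, ih]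

lemma exists_decomp' (w : List γ) : ∃ ps : List (List γ),
    ps.length ≤ palLen w ∧ (∀ p ∈ ps, p.Palindrome) ∧ ps.flatten = w ∧ ∀ p ∈ ps, p ≠ [] := by
  obtain ⟨ps, hlen, hp, hf⟩ := exists_decomp w
  refine ⟨ps.filter (fun p => !p.isEmpty), ?_, ?_, ?_, ?_⟩
  · rw [← hlen]; exact List.length_filter_le _ _
  · intro p hp'; exact hp p (List.mem_of_mem_filter hp')
  · rw [flatten_filter_ne_nil, hf]
  · intro p hp'
    have := List.of_mem_filter hp'
    simpa [List.isEmpty_iff] using this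

lemma palLen_nil : palLen (([] : List γ)) = 0 :=
  Nat.le_zero.mp (palLen_le [] (by simp) (by simp))

lemma palLen_append (v w : List γ) : palLen (v ++ w) ≤ palLen v + palLen w := by
  obtain ⟨ps, h1, h2, h3⟩ := exists_decomp v
  obtain ⟨qs, g1, g2, g3⟩ := exists_decomp w
  have := palLen_le (w := v ++ w) (ps ++ qs) ?_ (by simp [h3, g3])
  · simpa [h1, g1] using this
  · intro p hp
    rcases List.mem_append.mp hp with h | h
    · exact h2 p h
    · exact g2 p h

lemma palLen_le_one {w : List γ} (h : w.Palindrome) : palLen w ≤ 1 :=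
  palLen_le [w] (by simpa) (by simp)

lemma palLen_pos {w : List γ} (h : w ≠ []) : 1 ≤ palLen w := by
  by_contra hc
  have h0 : palLen w = 0 := by omega
  obtain ⟨ps, h1, h2, h3⟩ := exists_decomp w
  rw [h0] at h1
  have : ps = [] := List.length_eq_zero_iff.mp h1
  rw [this] at h3
  exact h (h3.symm)

/-- key extraction: minimal decomposition of a prefix yields a last palindromic piece -/
lemma exists_last_piece (u : ℕ → γ) {n : ℕ} (hn : 1 ≤ n) :
    ∃ m, m < n ∧ Pal u m n ∧ palLen (factor u 0 m) + 1 ≤ palLen (factor u 0 n) := by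
  obtain ⟨ps, hlen, hp, hf, hne⟩ := exists_decomp' (factor u 0 n)
  have hpsne : ps ≠ [] := by
    intro h; rw [h] at hf
    have : (factor u 0 n).length = 0 := by rw [← hf]; simp
    simp at this; omega
  obtain ⟨qs, p, hps⟩ : ∃ qs p, ps = qs ++ [p] :=
    ⟨ps.dropLast, ps.getLast hpsne, (List.dropLast_append_getLast hpsne).symm⟩
  subst hps
  have hpne : p ≠ [] := hne p (by simp)
  have hplen : p.length ≤ n := by
    have : (factor u 0 n).length = n := by simp
    rw [← hf] at this
    simp at this
    omega
  set m := n - p.length with hm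
  have hsplit : factor u 0 n = factor u 0 m ++ factor u m (n - m) := by
    have : n = m + (n - m) := by omega
    rw [this, factor_append]
    congr 2 <;> omega
  have hflat : qs.flatten ++ p = factor u 0 m ++ factor u m (n - m) := by
    rw [← hsplit, ← hf]; simp
  have hlen2 : p.length = (factor u m (n - m)).length := by simp; omega
  obtain ⟨hq, hpfac⟩ := List.append_inj' hflat (by omega)
  have hp1 : 1 ≤ p.length := List.length_pos_iff.mpr hpne
  refine ⟨m, by omega, ?_, ?_⟩
  · rw [← pal_iff (by omega)]
    rw [← hpfac]
    exact hp p (by simp)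
  · calc palLen (factor u 0 m) + 1 ≤ qs.length + 1 := by
          have := palLen_le qs (fun q hq' => hp q (by simp [hq'])) hq
          omega
      _ = (qs ++ [p]).length := by simp
      _ ≤ palLen (factor u 0 n) := hlen

end PalLen
section Structure
variable {γ : Type*}

/-- Structural class: every level-n block pattern is x y y x with x ≠ y. -/
def DD (u : ℕ → γ) : Prop :=
  ∀ n p, factor u (4^n * (4*p)) (4^n) = factor u (4^n * (4*p+3)) (4^n)
    ∧ factor u (4^n * (4*p+1)) (4^n) = factor u (4^n * (4*p+2)) (4^n)
    ∧ factor u (4^n * (4*p)) (4^n) ≠ factor u (4^n * (4*p+1)) (4^n)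

variable {u : ℕ → γ}

lemma DD.sh03 (h : DD u) (p : ℕ) : u (4*p) = u (4*p+3) := by
  have := (h 0 p).1
  simpa [factor_one] using this

lemma DD.sh12 (h : DD u) (p : ℕ) : u (4*p+1) = u (4*p+2) := by
  have := (h 0 p).2.1
  simpa [factor_one] using this

lemma DD.sh01 (h : DD u) (p : ℕ) : u (4*p) ≠ u (4*p+1) := by
  have := (h 0 p).2.2
  simpa [factor_one] using this

/-- within a block, positions ρ and 3-ρ carry the same letter -/
lemma DD.shape (h : DD u) (p ρ : ℕ) (hρ : ρ ≤ 3) : u (4*p + ρ) = u (4*p + (3 - ρ)) := by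
  interval_cases ρ
  · simpa using h.sh03 p
  · simpa using h.sh12 p
  · simpa using (h.sh12 p).symm
  · simpa using (h.sh03 p).symm

/-- the word of level-1 blocks -/
def blockW (u : ℕ → γ) : ℕ → List γ := fun p => factor u (4*p) 4

lemma blockW_eq_iff {p p' : ℕ} :
    blockW u p = blockW u p' ↔ ∀ ρ < 4, u (4*p + ρ) = u (4*p' + ρ) :=
  factor_eq_iff

lemma blockW_factor_eq_iff {s s' y : ℕ} :
    factor (blockW u) s y = factor (blockW u) s' y
      ↔ factor u (4*s) (4*y) = factor u (4*s') (4*y) := by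
  rw [factor_eq_iff, factor_eq_iff]
  constructor
  · intro h j hj
    have hi : j / 4 < y := by omega
    have h2 := (blockW_eq_iff).mp (h (j/4) hi) (j % 4) (by omega)
    have e1 : 4*s + j = 4*(s + j/4) + j % 4 := by omega
    have e2 : 4*s' + j = 4*(s' + j/4) + j % 4 := by omega
    rw [e1, e2]
    exact h2
  · intro h i hi
    apply (blockW_eq_iff).mpr
    intro ρ hρ
    have := h (4*i + ρ) (by omega)
    have e1 : 4*(s + i) + ρ = 4*s + (4*i + ρ) := by omega
    have e2 : 4*(s' + i) + ρ = 4*s' + (4*i + ρ) := by omega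
    rw [e1, e2]
    exact this

lemma DD.block (h : DD u) : DD (blockW u) := by
  intro n p
  have key : ∀ q q' : ℕ, factor (_root_.blockW u) (4^n * q) (4^n)
      = factor (_root_.blockW u) (4^n * q') (4^n)
      ↔ factor u (4^(n+1) * q) (4^(n+1)) = factor u (4^(n+1) * q') (4^(n+1)) := by
    intro q q'
    have h4 : (4:ℕ)^(n+1) = 4 * 4^n := by ring
    have e : ∀ q : ℕ, 4^(n+1) * q = 4 * (4^n * q) := by intro q; rw [h4]; ring
    rw [blockW_factor_eq_iff]
    constructor
    · intro hh
      have : factor u (4*(4^n*q)) (4*4^n) = factor u (4*(4^n*q')) (4*4^n) := by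
        rw [mul_comm 4 (4^n : ℕ)] at hh ⊢
        exact hh
      rw [e q, e q', h4]
      exact this
    · intro hh
      rw [e q, e q', h4] at hh
      exact hh
  obtain ⟨h1, h2, h3⟩ := h (n+1) p
  exact ⟨(key _ _).mpr h1, (key _ _).mpr h2, fun hc => h3 ((key _ _).mp hc)⟩

/-- shifted lifting of block-level palindromes -/
lemma DD.lift (hD : DD u) {m' j' : ℕ} (r : ℕ) (hr : r ≤ 3)
    (h : Pal (blockW u) m' j') : Pal u (4*m'+r) (4*j'-r) := by
  intro x y hx hxn hy hyn hsum
  have hx4 := Nat.div_add_mod x 4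
  have hy4 := Nat.div_add_mod y 4
  set s := x / 4 with hs
  set ρ := x % 4 with hρ
  set s' := y / 4 with hs'
  set ρ' := y % 4 with hρ'
  have hρ4 : ρ < 4 := Nat.mod_lt _ (by norm_num)
  have hρ'4 : ρ' < 4 := Nat.mod_lt _ (by norm_num)
  have hj : r < 4 * j' := by omega
  have hkey : ρ + ρ' = 3 ∧ s + s' + 1 = m' + j' ∧ m' ≤ s ∧ s < j' ∧ m' ≤ s' ∧ s' < j' := by
    omega
  have hv : _root_.blockW u s = _root_.blockW u s' :=
    h s s' hkey.2.2.1 hkey.2.2.2.1 hkey.2.2.2.2.1 hkey.2.2.2.2.2 hkey.2.1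
  have h1 : u (4*s + ρ) = u (4*s' + ρ) := (blockW_eq_iff).mp hv ρ hρ4
  have h2 : u (4*s' + ρ) = u (4*s' + ρ') := by
    have := hD.shape s' ρ (by omega)
    rw [this]
    congr 1
    omega
  have ex : x = 4*s + ρ := by omega
  have ey : y = 4*s' + ρ' := by omega
  rw [ex, ey, h1, h2]

end Structure
section Transfer
variable {γ : Type*} {u : ℕ → γ}

/-- forward transfer: even palindromes with left end ≢ 3 (mod 4) give block palindromes -/
lemma DD.toBlock (hD : DD u) {q Q1 r : ℕ} (hr : r ≤ 2)
    (h : Pal u (4*q+r) (4*Q1-r)) : Pal (blockW u) q Q1 := by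
  intro s s' hqs hsQ hqs' hs'Q hsum
  by_cases hss : s = s'
  · rw [hss]
  apply blockW_eq_iff.mpr
  intro ρ hρ
  by_cases hC : 4*q+r ≤ 4*s+ρ ∧ 4*s+ρ < 4*Q1-r ∧ 4*q+r ≤ 4*s'+(3-ρ) ∧ 4*s'+(3-ρ) < 4*Q1-r
  · have h1 := h (4*s+ρ) (4*s'+(3-ρ)) hC.1 hC.2.1 hC.2.2.1 hC.2.2.2 (by omega)
    have h2 := hD.shape s' ρ (by omega)
    rw [h1, ← h2]
  · have hC2 : 4*q+r ≤ 4*s+(3-ρ) ∧ 4*s+(3-ρ) < 4*Q1-r ∧ 4*q+r ≤ 4*s'+ρ ∧ 4*s'+ρ < 4*Q1-r := by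
      omega
    have h1 := h (4*s+(3-ρ)) (4*s'+ρ) hC2.1 hC2.2.1 hC2.2.2.1 hC2.2.2.2 (by omega)
    have h2 := hD.shape s ρ (by omega)
    rw [h2, h1]

/-- forward transfer for r = 3 -/
lemma DD.toBlock3 (hD : DD u) {q Q : ℕ}
    (h : Pal u (4*q+3) (4*Q+1)) : Pal (blockW u) (q+1) Q := by
  intro s s' hqs hsQ hqs' hs'Q hsum
  apply blockW_eq_iff.mpr
  intro ρ hρ
  have h1 := h (4*s+ρ) (4*s'+(3-ρ)) (by omega) (by omega) (by omega) (by omega) (by omega)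
  have h2 := hD.shape s' ρ (by omega)
  rw [h1, ← h2]

/-- classification of palindromic intervals in structural words -/
lemma DD.classify (hD : DD u) {m n : ℕ} (h : Pal u m n) (hmn : m + 2 ≤ n) :
    (m + n) % 4 = 0 ∨ (n = m + 3 ∧ (m % 4 = 2 ∨ m % 4 = 3)) := by
  by_cases hpar : (m + n) % 2 = 0
  · -- even length
    left
    by_contra hc
    have h2 : (m + n) % 4 = 2 := by omega
    set x0 := (m + n) / 2 - 1 with hx0
    have hcen := h x0 (x0+1) (by omega) (by omega) (by omega) (by omega) (by omega)
    -- x0 is even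
    rcases Nat.even_or_odd x0 with he | ho
    · obtain ⟨t, ht⟩ := he
      rcases Nat.even_or_odd t with he2 | ho2
      · obtain ⟨p, hp⟩ := he2
        have : x0 = 4*p := by omega
        rw [this] at hcen
        exact hD.sh01 p hcen
      · obtain ⟨p, hp⟩ := ho2
        have e1 : x0 = 4*p+2 := by omega
        rw [e1] at hcen
        have e2 := hD.sh12 p
        have e3 := hD.sh03 p
        have e4 : 4*p+2+1 = 4*p+3 := by omega
        rw [e4] at hcen
        exact hD.sh01 p (by rw [e3, ← hcen, ← e2])
    · exfalso; obtain ⟨t, ht⟩ := ho; omega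
  · -- odd length
    right
    set x := (m + n - 1) / 2 with hx
    have hx1 : x ≥ m + 1 := by omega
    have hcen := h (x-1) (x+1) (by omega) (by omega) (by omega) (by omega) (by omega)
    have hx4 := Nat.div_add_mod x 4
    set p := x / 4 with hp
    set ρ := x % 4 with hρ
    have hρ4 : ρ < 4 := Nat.mod_lt _ (by norm_num)
    -- rule out ρ = 1, 2
    have hρn : ρ = 0 ∨ ρ = 3 := by
      rcases (by omega : ρ = 0 ∨ ρ = 1 ∨ ρ = 2 ∨ ρ = 3) with h0 | h1 | h2 | h3
      · left; exact h0
      · exfalso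
        have e1 : x - 1 = 4*p := by omega
        have e2 : x + 1 = 4*p+2 := by omega
        rw [e1, e2] at hcen
        exact hD.sh01 p (by rw [hcen, ← hD.sh12 p])
      · exfalso
        have e1 : x - 1 = 4*p+1 := by omega
        have e2 : x + 1 = 4*p+3 := by omega
        rw [e1, e2] at hcen
        exact hD.sh01 p (by rw [hD.sh03 p, ← hcen, hD.sh12 p])
      · right; exact h3
    -- rule out length ≥ 5
    have hlen3 : n = m + 3 := by
      by_contra hc
      have hn5 : m + 5 ≤ n := by omega
      have hcen2 := h (x-2) (x+2) (by omega) (by omega) (by omega) (by omega) (by omega)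
      rcases hρn with h0 | h3
      · have hp1 : 1 ≤ p := by omega
        have e1 : x - 1 = 4*(p-1)+3 := by omega
        have e2 : x + 1 = 4*p+1 := by omega
        have e3 : x - 2 = 4*(p-1)+2 := by omega
        have e4 : x + 2 = 4*p+2 := by omega
        rw [e1, e2] at hcen
        rw [e3, e4] at hcen2
        -- hcen : u (4(p-1)+3) = u (4p+1), hcen2 : u (4(p-1)+2) = u (4p+2)
        apply hD.sh01 (p-1)
        rw [hD.sh03 (p-1), hcen, hD.sh12 (p-1), hcen2, ← hD.sh12 p]
      · have e1 : x - 1 = 4*p+2 := by omega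
        have e2 : x + 1 = 4*(p+1) := by omega
        have e3 : x - 2 = 4*p+1 := by omega
        have e4 : x + 2 = 4*(p+1)+1 := by omega
        rw [e1, e2] at hcen
        rw [e3, e4] at hcen2
        apply hD.sh01 (p+1)
        rw [← hcen, ← hD.sh12 p, hcen2]
    refine ⟨hlen3, ?_⟩
    -- m = x - 1, so m % 4 from ρ
    have hxm : x = m + 1 := by omega
    rcases hρn with h0 | h3
    · right; omega
    · left; omega

end Transfer
section Gamma

def Gam : ℕ → ℕ
  | n =>
    if h0 : n = 0 then 0
    else if h1 : n % 4 = 0 then Gam (n / 4)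
    else if h2 : n % 4 = 1 then Gam (n / 4) + 1
    else if h3 : n % 4 = 2 then min (Gam (n / 4)) (Gam (n / 4 + 1)) + 2
    else min (Gam (n / 4) + 2) (Gam (n / 4 + 1) + 1)
  decreasing_by all_goals omega

lemma Gam_zero : Gam 0 = 0 := by rw [Gam]; simp

lemma Gam_four {k : ℕ} (hk : 1 ≤ k) : Gam (4*k) = Gam k := by
  rw [Gam]
  have h0 : ¬(4*k = 0) := by omega
  have h1 : (4*k) % 4 = 0 := by omega
  have h2 : 4*k/4 = k := by omega
  simp [h0, h1, h2]

lemma Gam_one {k : ℕ} : Gam (4*k+1) = Gam k + 1 := by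
  rw [Gam]
  have h1 : (4*k+1) % 4 = 1 := by omega
  have h2 : (4*k+1)/4 = k := by omega
  simp [h1, h2]

lemma Gam_two {k : ℕ} : Gam (4*k+2) = min (Gam k) (Gam (k+1)) + 2 := by
  rw [Gam]
  have h1 : (4*k+2) % 4 = 2 := by omega
  have h2 : (4*k+2)/4 = k := by omega
  simp [h1, h2]

lemma Gam_three {k : ℕ} : Gam (4*k+3) = min (Gam k + 2) (Gam (k+1) + 1) := by
  rw [Gam]
  have h1 : (4*k+3) % 4 = 3 := by omega
  have h2 : (4*k+3)/4 = k := by omega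
  simp [h1, h2]

lemma Gam_1 : Gam 1 = 1 := by
  have h := Gam_one (k := 0)
  simpa [Gam_zero] using h

lemma Gam_lipschitz : ∀ n : ℕ, Gam (n+1) ≤ Gam n + 1 ∧ Gam n ≤ Gam (n+1) + 1 := by
  intro n
  induction n using Nat.strong_induction_on with
  | _ n ih =>
    have base : Gam (0+1) ≤ Gam 0 + 1 ∧ Gam 0 ≤ Gam (0+1) + 1 := by
      refine ⟨?_, ?_⟩ <;> simp [Gam_1, Gam_zero]
    obtain ⟨t, r, hr, rfl⟩ : ∃ t r, r < 4 ∧ n = 4*t+r := ⟨n/4, n%4, by omega, by omega⟩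
    have iht : Gam (t+1) ≤ Gam t + 1 ∧ Gam t ≤ Gam (t+1) + 1 := by
      rcases Nat.eq_zero_or_pos t with h | h
      · subst h; exact base
      · exact ih t (by omega)
    interval_cases r
    · rcases Nat.eq_zero_or_pos t with h | h
      · subst h; simpa using base
      · simp only [Nat.add_zero]
        rw [Gam_four h, Gam_one]; omega
    · rw [Gam_one, (by omega : 4*t+1+1 = 4*t+2), Gam_two]; omega
    · rw [Gam_two, (by omega : 4*t+2+1 = 4*t+3), Gam_three]; omega
    · rw [Gam_three, (by omega : 4*t+3+1 = 4*(t+1)), Gam_four (by omega)]; omega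

lemma GamL1 (n : ℕ) : Gam (n+1) ≤ Gam n + 1 := (Gam_lipschitz n).1
lemma GamL2 (n : ℕ) : Gam n ≤ Gam (n+1) + 1 := (Gam_lipschitz n).2

/-- H k = min (Gam k) (Gam (k+1)) -/
def Hm (k : ℕ) : ℕ := min (Gam k) (Gam (k+1))

end Gamma
section CaseArith

lemma Gam_four' (k : ℕ) : Gam (4*k) = Gam k := by
  rcases Nat.eq_zero_or_pos k with h | h
  · subst h; simp [Gam_zero]
  · exact Gam_four h

lemma Hm_eq (k : ℕ) : Hm k = min (Gam k) (Gam (k+1)) := rfl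

lemma caseR0 {q K : ℕ} (A' : Gam (K+1) ≤ Gam q + 1) :
    Gam (4*K+4) ≤ Gam (4*q) + 1 ∧ Hm (4*K+3) ≤ Hm (4*q) + 1 := by
  have e1 : Gam (4*K+4) = Gam (K+1) := by
    rw [(by omega : 4*K+4 = 4*(K+1)), Gam_four' (K+1)]
  have e2 : Gam (4*q) = Gam q := Gam_four' q
  have e3 : Gam (4*K+3) = min (Gam K + 2) (Gam (K+1) + 1) := Gam_three
  have e4 : Gam (4*q+1) = Gam q + 1 := Gam_one
  have h1 : Hm (4*K+3) = min (Gam (4*K+3)) (Gam (4*K+4)) := by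
    rw [Hm_eq]
  have h2 : Hm (4*q) = min (Gam (4*q)) (Gam (4*q+1)) := Hm_eq _
  omega

lemma caseR1 {q K : ℕ} (A' : Gam (K+1) ≤ Gam q + 1) (B' : Hm K ≤ Hm q + 1) :
    Gam (4*K+3) ≤ Gam (4*q+1) + 1 ∧ Hm (4*K+2) ≤ Hm (4*q+1) + 1 := by
  have e1 : Gam (4*K+3) = min (Gam K + 2) (Gam (K+1) + 1) := Gam_three
  have e2 : Gam (4*q+1) = Gam q + 1 := Gam_one
  have e3 : Gam (4*K+2) = min (Gam K) (Gam (K+1)) + 2 := Gam_two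
  have e4 : Gam (4*q+2) = min (Gam q) (Gam (q+1)) + 2 := Gam_two
  have h1 : Hm (4*K+2) = min (Gam (4*K+2)) (Gam (4*K+3)) := by
    rw [Hm_eq]
  have h2 : Hm (4*q+1) = min (Gam (4*q+1)) (Gam (4*q+2)) := by
    rw [Hm_eq]
  have hB : Hm K = min (Gam K) (Gam (K+1)) := Hm_eq _
  have hBq : Hm q = min (Gam q) (Gam (q+1)) := Hm_eq _
  have l1 := GamL1 q
  omega

lemma caseR2 {q K : ℕ} (A' : Gam (K+1) ≤ Gam q + 1) (B' : Hm K ≤ Hm q + 1)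
    (A'' : Gam K ≤ Gam (q+1) + 1) :
    Gam (4*K+2) ≤ Gam (4*q+2) + 1 ∧ Hm (4*K+1) ≤ Hm (4*q+2) + 1 := by
  have e1 : Gam (4*K+2) = min (Gam K) (Gam (K+1)) + 2 := Gam_two
  have e2 : Gam (4*q+2) = min (Gam q) (Gam (q+1)) + 2 := Gam_two
  have e3 : Gam (4*K+1) = Gam K + 1 := Gam_one
  have e4 : Gam (4*q+3) = min (Gam q + 2) (Gam (q+1) + 1) := Gam_three
  have h1 : Hm (4*K+1) = min (Gam (4*K+1)) (Gam (4*K+2)) := by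
    rw [Hm_eq]
  have h2 : Hm (4*q+2) = min (Gam (4*q+2)) (Gam (4*q+3)) := by
    rw [Hm_eq]
  have hB : Hm K = min (Gam K) (Gam (K+1)) := Hm_eq _
  have hBq : Hm q = min (Gam q) (Gam (q+1)) := Hm_eq _
  have l1 := GamL2 K
  have l2 := GamL1 q
  omega

lemma caseR3 {q Q : ℕ} (A' : Gam Q ≤ Gam (q+1) + 1) :
    Gam (4*Q+1) ≤ Gam (4*q+3) + 1 ∧ Hm (4*Q) ≤ Hm (4*q+3) + 1 := by
  have e1 : Gam (4*Q+1) = Gam Q + 1 := Gam_one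
  have e2 : Gam (4*q+3) = min (Gam q + 2) (Gam (q+1) + 1) := Gam_three
  have e3 : Gam (4*Q) = Gam Q := Gam_four' Q
  have e4 : Gam (4*q+4) = Gam (q+1) := by
    rw [(by omega : 4*q+4 = 4*(q+1)), Gam_four' (q+1)]
  have h1 : Hm (4*Q) = min (Gam (4*Q)) (Gam (4*Q+1)) := Hm_eq _
  have h2 : Hm (4*q+3) = min (Gam (4*q+3)) (Gam (4*q+4)) := by
    rw [Hm_eq]
  have l1 := GamL1 q
  omega

/-- m = 4p+3, n = m+3 -/
lemma caseO3a {p : ℕ} :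
    Gam (4*p+6) ≤ Gam (4*p+3) + 1 ∧ Hm (4*p+5) ≤ Hm (4*p+3) + 1 := by
  have e1 : Gam (4*p+6) = min (Gam (p+1)) (Gam (p+2)) + 2 := by
    rw [(by omega : 4*p+6 = 4*(p+1)+2), Gam_two]
  have e2 : Gam (4*p+3) = min (Gam p + 2) (Gam (p+1) + 1) := Gam_three
  have e3 : Gam (4*p+5) = Gam (p+1) + 1 := by
    rw [(by omega : 4*p+5 = 4*(p+1)+1), Gam_one]
  have e4 : Gam (4*p+4) = Gam (p+1) := by
    rw [(by omega : 4*p+4 = 4*(p+1)), Gam_four' (p+1)]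
  have e5 : Gam (4*p+6) = min (Gam (p+1)) (Gam (p+2)) + 2 := e1
  have h1 : Hm (4*p+5) = min (Gam (4*p+5)) (Gam (4*p+6)) := by
    rw [Hm_eq]
  have h2 : Hm (4*p+3) = min (Gam (4*p+3)) (Gam (4*p+4)) := by
    rw [Hm_eq]
  have l1 := GamL1 p
  have l2 := GamL1 (p+1)
  have l3 := GamL2 (p+1)
  omega

/-- m = 4p+2, n = m+3 -/
lemma caseO3b {p : ℕ} :
    Gam (4*p+5) ≤ Gam (4*p+2) + 1 ∧ Hm (4*p+4) ≤ Hm (4*p+2) + 1 := by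
  have e1 : Gam (4*p+5) = Gam (p+1) + 1 := by
    rw [(by omega : 4*p+5 = 4*(p+1)+1), Gam_one]
  have e2 : Gam (4*p+2) = min (Gam p) (Gam (p+1)) + 2 := Gam_two
  have e3 : Gam (4*p+4) = Gam (p+1) := by
    rw [(by omega : 4*p+4 = 4*(p+1)), Gam_four' (p+1)]
  have e4 : Gam (4*p+3) = min (Gam p + 2) (Gam (p+1) + 1) := Gam_three
  have h1 : Hm (4*p+4) = min (Gam (4*p+4)) (Gam (4*p+5)) := by
    rw [Hm_eq]
  have h2 : Hm (4*p+2) = min (Gam (4*p+2)) (Gam (4*p+3)) := by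
    rw [Hm_eq]
  have l1 := GamL1 p
  omega

lemma Hm_lip (k : ℕ) : Hm k ≤ Hm (k+1) + 1 := by
  have h1 : Hm k = min (Gam k) (Gam (k+1)) := Hm_eq _
  have h2 : Hm (k+1) = min (Gam (k+1)) (Gam (k+2)) := by rw [Hm_eq]
  have e : Gam (k+1+1) = Gam (k+2) := by norm_num
  have l1 := GamL1 (k+1)
  have l2 := GamL2 (k+1)
  have l3 := GamL1 k
  have l4 := GamL2 k
  omega

end CaseArith
section KeyLemma

lemma keyLemma : ∀ (n : ℕ) {γ : Type*} (u : ℕ → γ), DD u → ∀ m, m ≤ n → Pal u m n →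
    Gam n ≤ Gam m + 1 ∧ Hm (n-1) ≤ Hm m + 1 := by
  intro n
  induction n using Nat.strong_induction_on with
  | _ n ih =>
    intro γ u hD m hmn hpal
    rcases eq_or_lt_of_le hmn with rfl | hlt
    · refine ⟨by omega, ?_⟩
      rcases Nat.eq_zero_or_pos m with h | h
      · subst h
        have e : (0:ℕ) - 1 = 0 := rfl
        rw [e]; omega
      · have e : m - 1 + 1 = m := by omega
        have := Hm_lip (m-1)
        rw [e] at this; omega
    · by_cases hn1 : n = m + 1
      · subst hn1
        refine ⟨GamL1 m, ?_⟩
        have e : m + 1 - 1 = m := rfl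
        rw [e]; omega
      · have hcls := hD.classify hpal (by omega)
        rcases hcls with h4 | ⟨h3, hm4⟩
        · -- even case
          rcases (by omega : m % 4 ≤ 2 ∨ m % 4 = 3) with hr | hr
          · set r := m % 4 with hrdef
            set q := m / 4 with hqdef
            set Q1 := (n + r) / 4 with hQ1def
            have hQ4 : 4 * Q1 = n + r := by omega
            have hm : m = 4*q + r := by omega
            have hqQ : q < Q1 := by omega
            have hpal' : Pal u (4*q+r) (4*Q1-r) := by
              have e1 : 4*q+r = m := by omega
              have e2 : 4*Q1-r = n := by omega
              rw [e1, e2]; exact hpal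
            have hblock := hD.toBlock hr hpal'
            have IH1 := ih Q1 (by omega) (blockW u) hD.block q (by omega) hblock
            set K := Q1 - 1 with hKdef
            have hQK : Q1 = K + 1 := by omega
            have A' : Gam (K+1) ≤ Gam q + 1 := by rw [← hQK]; exact IH1.1
            have B' : Hm K ≤ Hm q + 1 := by rw [hKdef]; exact IH1.2
            rcases (by omega : r = 0 ∨ r = 1 ∨ r = 2) with h0 | h1 | h2
            · have hc := caseR0 (q := q) (K := K) A'
              refine ⟨?_, ?_⟩
              · rw [(by omega : n = 4*K+4), (by omega : m = 4*q)]; exact hc.1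
              · rw [(by omega : n - 1 = 4*K+3), (by omega : m = 4*q)]; exact hc.2
            · have hc := caseR1 (q := q) (K := K) A' B'
              refine ⟨?_, ?_⟩
              · rw [(by omega : n = 4*K+3), (by omega : m = 4*q+1)]; exact hc.1
              · rw [(by omega : n - 1 = 4*K+2), (by omega : m = 4*q+1)]; exact hc.2
            · have hshr : Pal (blockW u) (q+1) (Q1-1) := hblock.shrink
              have IH2 := ih (Q1-1) (by omega) (blockW u) hD.block (q+1) (by omega) hshr
              have A'' : Gam K ≤ Gam (q+1) + 1 := by rw [hKdef]; exact IH2.1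
              have hc := caseR2 (q := q) (K := K) A' B' A''
              refine ⟨?_, ?_⟩
              · rw [(by omega : n = 4*K+2), (by omega : m = 4*q+2)]; exact hc.1
              · rw [(by omega : n - 1 = 4*K+1), (by omega : m = 4*q+2)]; exact hc.2
          · -- r = 3
            set q := m / 4 with hqdef
            set Q := n / 4 with hQdef
            have hm : m = 4*q+3 := by omega
            have hn : n = 4*Q+1 := by omega
            have hpal' : Pal u (4*q+3) (4*Q+1) := by rw [← hm, ← hn]; exact hpal
            have hblock := hD.toBlock3 hpal'
            have IH1 := ih Q (by omega) (blockW u) hD.block (q+1) (by omega) hblock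
            have A' : Gam Q ≤ Gam (q+1) + 1 := IH1.1
            have hc := caseR3 (q := q) (Q := Q) A'
            refine ⟨?_, ?_⟩
            · rw [hn, hm]; exact hc.1
            · rw [(by omega : n - 1 = 4*Q), hm]; exact hc.2
        · -- n = m + 3
          rcases hm4 with h2 | h3'
          · set p := m / 4 with hpdef
            have hc := caseO3b (p := p)
            refine ⟨?_, ?_⟩
            · rw [(by omega : n = 4*p+5), (by omega : m = 4*p+2)]; exact hc.1
            · rw [(by omega : n - 1 = 4*p+4), (by omega : m = 4*p+2)]; exact hc.2
          · set p := m / 4 with hpdef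
            have hc := caseO3a (p := p)
            refine ⟨?_, ?_⟩
            · rw [(by omega : n = 4*p+6), (by omega : m = 4*p+3)]; exact hc.1
            · rw [(by omega : n - 1 = 4*p+5), (by omega : m = 4*p+3)]; exact hc.2

end KeyLemma
section Bounds
variable {γ : Type*}

lemma factor_zero_zero (u : ℕ → γ) : factor u 0 0 = [] := rfl

lemma palLen_split (u : ℕ → γ) (m k : ℕ) :
    palLen (factor u 0 (m + k)) ≤ palLen (factor u 0 m) + palLen (factor u m k) := by
  rw [factor_append]
  simp only [zero_add]
  exact palLen_append _ _

lemma palLen_single (u : ℕ → γ) (x : ℕ) : palLen (factor u x 1) ≤ 1 := by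
  rw [factor_one]
  exact palLen_le_one (List.Palindrome.singleton _)

lemma palLen_pal (u : ℕ → γ) {m n : ℕ} (hmn : m ≤ n) (h : Pal u m n) :
    palLen (factor u m (n - m)) ≤ 1 :=
  palLen_le_one ((pal_iff hmn).mpr h)

lemma DD.palMid {u : ℕ → γ} (hD : DD u) (t : ℕ) : Pal u (4*t+1) (4*t+3) := by
  intro x y hx hxn hy hyn hsum
  have hx' : x = 4*t+1 ∨ x = 4*t+2 := by omega
  have hy' : y = 4*t+1 ∨ y = 4*t+2 := by omega
  rcases hx' with rfl | rfl <;> rcases hy' with h | h <;> rw [h]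
  · exact hD.sh12 t
  · exact (hD.sh12 t).symm

lemma liftP {u : ℕ → γ} (hD : DD u) : ∀ s,
    palLen (factor u 0 (4*s)) ≤ palLen (factor (blockW u) 0 s) := by
  intro s
  induction s using Nat.strong_induction_on with
  | _ s ihs =>
    rcases Nat.eq_zero_or_pos s with rfl | hs
    · simp [factor_zero_zero, palLen_nil]
    · obtain ⟨m', hm', hpal, hlen⟩ := exists_last_piece (blockW u) hs
      have hlift : Pal u (4*m') (4*s) := by
        have := hD.lift 0 (by norm_num) hpal
        simpa using this
      calc palLen (factor u 0 (4*s))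
          ≤ palLen (factor u 0 (4*m')) + palLen (factor u (4*m') (4*s - 4*m')) := by
            have e : 4*s = 4*m' + (4*s - 4*m') := by omega
            conv_lhs => rw [e]
            exact palLen_split u _ _
        _ ≤ palLen (factor (blockW u) 0 m') + 1 := by
            have h1 := ihs m' hm'
            have h2 := palLen_pal u (by omega : 4*m' ≤ 4*s) hlift
            omega
        _ ≤ palLen (factor (blockW u) 0 s) := hlen

lemma upperBound : ∀ (n : ℕ) {γ : Type*} (u : ℕ → γ), DD u →
    palLen (factor u 0 n) ≤ Gam n := by
  intro n
  induction n using Nat.strong_induction_on with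
  | _ n ih =>
    intro γ u hD
    rcases Nat.eq_zero_or_pos n with rfl | hn
    · simp [factor_zero_zero, palLen_nil, Gam_zero]
    obtain ⟨t, r, hr, rfl⟩ : ∃ t r, r < 4 ∧ n = 4*t+r := ⟨n/4, n%4, by omega, by omega⟩
    have hDv := hD.block
    have h4t : palLen (factor u 0 (4*t)) ≤ Gam t := by
      rcases Nat.eq_zero_or_pos t with rfl | ht
      · simp [factor_zero_zero, palLen_nil, Gam_zero]
      · calc palLen (factor u 0 (4*t)) ≤ palLen (factor (blockW u) 0 t) := liftP hD t
          _ ≤ Gam t := ih t (by omega) _ hDv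
    interval_cases r
    · simp only [Nat.add_zero]
      rw [Gam_four']
      exact h4t
    · rw [Gam_one]
      have := palLen_split u (4*t) 1
      have h1 := palLen_single u (4*t)
      omega
    · rw [Gam_two]
      have h1 : palLen (factor u 0 (4*t+2)) ≤ Gam t + 2 := by
        have s1 := palLen_split u (4*t) 2
        have s2 : palLen (factor u (4*t) 2) ≤ 2 := by
          have e : factor u (4*t) 2 = factor u (4*t) 1 ++ factor u (4*t+1) 1 := by
            have : (2:ℕ) = 1 + 1 := rfl
            rw [this, factor_append]
          rw [e]
          have := palLen_append (factor u (4*t) 1) (factor u (4*t+1) 1)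
          have a1 := palLen_single u (4*t)
          have a2 := palLen_single u (4*t+1)
          omega
        omega
      have h2 : palLen (factor u 0 (4*t+2)) ≤ Gam (t+1) + 2 := by
        obtain ⟨m', hm', hpal, hlen⟩ := exists_last_piece (blockW u) (by omega : 1 ≤ t+1)
        have hlift : Pal u (4*m'+2) (4*t+2) := by
          have := hD.lift 2 (by norm_num) hpal
          have e : 4*(t+1) - 2 = 4*t+2 := by omega
          rwa [e] at this
        have s1 : palLen (factor u 0 (4*t+2)) ≤ palLen (factor u 0 (4*m'+2))
            + palLen (factor u (4*m'+2) ((4*t+2) - (4*m'+2))) := by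
          have e : 4*t+2 = (4*m'+2) + ((4*t+2) - (4*m'+2)) := by omega
          conv_lhs => rw [e]
          exact palLen_split u _ _
        have s2 : palLen (factor u 0 (4*m'+2)) ≤ palLen (factor u 0 (4*m')) + 2 := by
          have e1 := palLen_split u (4*m') 2
          have e2 : palLen (factor u (4*m') 2) ≤ 2 := by
            have e : factor u (4*m') 2 = factor u (4*m') 1 ++ factor u (4*m'+1) 1 := by
              have : (2:ℕ) = 1 + 1 := rfl
              rw [this, factor_append]
            rw [e]
            have := palLen_append (factor u (4*m') 1) (factor u (4*m'+1) 1)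
            have a1 := palLen_single u (4*m')
            have a2 := palLen_single u (4*m'+1)
            omega
          omega
        have s3 := palLen_pal u (by omega : 4*m'+2 ≤ 4*t+2) hlift
        have s4 := liftP hD m'
        have s5 : palLen (factor (blockW u) 0 (t+1)) ≤ Gam (t+1) :=
          ih (t+1) (by omega) _ hDv
        omega
      omega
    · rw [Gam_three]
      have h1 : palLen (factor u 0 (4*t+3)) ≤ Gam t + 2 := by
        have s1 : palLen (factor u 0 (4*t+3)) ≤ palLen (factor u 0 (4*t+1))
            + palLen (factor u (4*t+1) 2) := by
          have e : 4*t+3 = (4*t+1) + 2 := by omega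
          conv_lhs => rw [e]
          exact palLen_split u _ _
        have s2 : palLen (factor u 0 (4*t+1)) ≤ Gam t + 1 := by
          have := palLen_split u (4*t) 1
          have h1 := palLen_single u (4*t)
          omega
        have s3 : palLen (factor u (4*t+1) 2) ≤ 1 := by
          have := palLen_pal u (by omega : 4*t+1 ≤ 4*t+3) (hD.palMid t)
          have e : 4*t+3 - (4*t+1) = 2 := by omega
          rwa [e] at this
        omega
      have h2 : palLen (factor u 0 (4*t+3)) ≤ Gam (t+1) + 1 := by
        obtain ⟨m', hm', hpal, hlen⟩ := exists_last_piece (blockW u) (by omega : 1 ≤ t+1)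
        have hlift : Pal u (4*m'+1) (4*t+3) := by
          have := hD.lift 1 (by norm_num) hpal
          have e : 4*(t+1) - 1 = 4*t+3 := by omega
          rwa [e] at this
        have s1 : palLen (factor u 0 (4*t+3)) ≤ palLen (factor u 0 (4*m'+1))
            + palLen (factor u (4*m'+1) ((4*t+3) - (4*m'+1))) := by
          have e : 4*t+3 = (4*m'+1) + ((4*t+3) - (4*m'+1)) := by omega
          conv_lhs => rw [e]
          exact palLen_split u _ _
        have s2 : palLen (factor u 0 (4*m'+1)) ≤ palLen (factor u 0 (4*m')) + 1 := by
          have := palLen_split u (4*m') 1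
          have h1 := palLen_single u (4*m')
          omega
        have s3 := palLen_pal u (by omega : 4*m'+1 ≤ 4*t+3) hlift
        have s4 := liftP hD m'
        have s5 : palLen (factor (blockW u) 0 (t+1)) ≤ Gam (t+1) :=
          ih (t+1) (by omega) _ hDv
        omega
      omega

lemma lowerBound {u : ℕ → γ} (hD : DD u) : ∀ n, Gam n ≤ palLen (factor u 0 n) := by
  intro n
  induction n using Nat.strong_induction_on with
  | _ n ih =>
    rcases Nat.eq_zero_or_pos n with rfl | hn
    · simp [factor_zero_zero, palLen_nil, Gam_zero]
    · obtain ⟨m, hm, hpal, hlen⟩ := exists_last_piece u hn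
      have hk := (keyLemma n u hD m (by omega) hpal).1
      have := ih m hm
      omega

end Bounds
section InCtoDD
variable {α : Type*}

lemma factor_eq_iff₂ {u v : ℕ → α} {x x' y : ℕ} :
    factor u x y = factor v x' y ↔ ∀ i < y, u (x + i) = v (x' + i) := by
  constructor
  · intro h i hi
    have h2 := List.getElem_of_eq h (by simpa using hi : i < (factor u x y).length)
    rwa [getElem_factor hi, getElem_factor hi] at h2
  · intro h
    apply List.ext_getElem (by simp)
    intro i h1 h2
    have hi : i < y := by simpa using h1
    rw [getElem_factor hi, getElem_factor hi]
    exact h i hi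

lemma map_factor {β : Type*} (φ : α → β) (u : ℕ → α) (x y : ℕ) :
    (factor u x y).map φ = factor (fun t => φ (u t)) x y := by
  simp [factor]

lemma hsplit4 (a : ℕ → α) (x L : ℕ) :
    factor a x (4*L) = factor a x L ++ (factor a (x+L) L ++ (factor a (x+2*L) L
      ++ factor a (x+3*L) L)) := by
  have e : 4*L = L + (L + (L + L)) := by ring
  rw [e, factor_append, factor_append, factor_append]
  have e1 : x + L + L = x + 2*L := by ring
  have e2 : x + 2*L + L = x + 3*L := by ring
  rw [e1, e2]

lemma app4 {A1 A2 A3 A4 B1 B2 B3 B4 : List α}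
    (h1 : A1.length = B1.length) (h2 : A2.length = B2.length) (h3 : A3.length = B3.length)
    (h : A1 ++ (A2 ++ (A3 ++ A4)) = B1 ++ (B2 ++ (B3 ++ B4))) :
    A1 = B1 ∧ A2 = B2 ∧ A3 = B3 ∧ A4 = B4 := by
  obtain ⟨e1, h⟩ := List.append_inj h h1
  obtain ⟨e2, h⟩ := List.append_inj h h2
  obtain ⟨e3, e4⟩ := List.append_inj h h3
  exact ⟨e1, e2, e3, e4⟩

lemma InC.toDD {a : ℕ → α} (h : InC a) : DD a := by
  classical
  obtain ⟨c, f, w, h0, hrec, hne, hpref⟩ := h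
  have hwlen : ∀ n, (w n).length = 4^n := by intro n; rw [hpref]; simp
  have hfac : ∀ n, factor a 0 (4^n) = w n := by
    intro n
    rw [hpref n]
    simp [factor]
  have hpow : ∀ n : ℕ, (0:ℕ) < 4^n := fun n => Nat.pow_pos (n := n) (by norm_num)
  -- chunk equations at each level
  have hch : ∀ N : ℕ, factor a 0 (4^N) = w N
      ∧ factor a (4^N) (4^N) = (w N).map (f N)
      ∧ factor a (2*4^N) (4^N) = (w N).map (f N)
      ∧ factor a (3*4^N) (4^N) = w N := by
    intro N
    have hs := hsplit4 a 0 (4^N)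
    have e1 : (4:ℕ)*4^N = 4^(N+1) := by rw [pow_succ]; ring
    rw [e1, hfac (N+1), hrec N] at hs
    simp only [zero_add] at hs
    have hs2 : w N ++ ((w N).map (f N) ++ ((w N).map (f N) ++ w N))
        = factor a 0 (4^N) ++ (factor a (4^N) (4^N) ++ (factor a (2*4^N) (4^N)
          ++ factor a (3*4^N) (4^N))) := by
      rw [← hs]
      simp [List.append_assoc]
    obtain ⟨e1', e2', e3', e4'⟩ := app4 (by simp [hwlen]) (by simp [hwlen]) (by simp [hwlen]) hs2
    exact ⟨e1'.symm, e2'.symm, e3'.symm, e4'.symm⟩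
  -- pointwise chunk values
  have hpt : ∀ N j i : ℕ, j < 4 → i < 4^N →
      a (j * 4^N + i) = if j = 1 ∨ j = 2 then f N (a i) else a i := by
    intro N j i hj hi
    obtain ⟨c0, c1, c2, c3⟩ := hch N
    have hw : w N = factor a 0 (4^N) := c0.symm
    have c1' : factor a (4^N) (4^N) = factor (fun t => f N (a t)) 0 (4^N) := by
      rw [c1, hw, map_factor]
    have c2' : factor a (2*4^N) (4^N) = factor (fun t => f N (a t)) 0 (4^N) := by
      rw [c2, hw, map_factor]
    have c3' : factor a (3*4^N) (4^N) = factor a 0 (4^N) := by rw [c3, hw]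
    interval_cases j
    · simp
    · have := factor_eq_iff₂.mp c1' i hi
      simpa using this
    · have := factor_eq_iff₂.mp c2' i hi
      simpa using this
    · have := factor_eq_iff₂.mp c3' i hi
      simpa using this
  -- master lemma
  have master : ∀ k n q : ℕ, q < 4^k → ∃ e : α ≃ α,
      factor a (4^n * q) (4^n) = (w n).map e := by
    intro k
    induction k with
    | zero =>
      intro n q hq
      have hq0 : q = 0 := by simpa using Nat.lt_one_iff.mp (by simpa using hq)
      subst hq0
      refine ⟨Equiv.refl α, ?_⟩
      rw [Nat.mul_zero, hfac n]
      simp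
    | succ k ihk =>
      intro n q hq
      have hq'4 : q % 4^k < 4^k := Nat.mod_lt _ (hpow k)
      have hr4 : q / 4^k < 4 := by
        apply Nat.div_lt_of_lt_mul
        calc q < 4^(k+1) := hq
          _ = 4^k * 4 := by rw [pow_succ]
      obtain ⟨e, he⟩ := ihk n (q % 4^k) hq'4
      set r := q / 4^k with hrdef
      set q' := q % 4^k with hq'def
      have hqeq : q = 4^k * r + q' := by
        rw [hrdef, hq'def]
        exact (Nat.div_add_mod q (4^k)).symm
      have hLeq : (4:ℕ)^(n+k) = 4^n * 4^k := pow_add 4 n k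
      have hoff : 4^n * q = r * 4^(n+k) + 4^n * q' := by
        rw [hqeq, hLeq]; ring
      have hbound : ∀ i : ℕ, i < 4^n → 4^n * q' + i < 4^(n+k) := by
        intro i hi
        calc 4^n * q' + i < 4^n * q' + 4^n := by omega
          _ = 4^n * (q' + 1) := by ring
          _ ≤ 4^n * 4^k := Nat.mul_le_mul_left _ (by omega)
          _ = 4^(n+k) := hLeq.symm
      by_cases hcase : r = 1 ∨ r = 2
      · refine ⟨e.trans (f (n+k)), ?_⟩
        have : factor a (4^n * q) (4^n)
            = factor (fun t => f (n+k) (a t)) (4^n * q') (4^n) := by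
          apply factor_eq_iff₂.mpr
          intro i hi
          have e1 : 4^n * q + i = r * 4^(n+k) + (4^n * q' + i) := by omega
          rw [e1]
          have := hpt (n+k) r (4^n * q' + i) (by omega) (hbound i hi)
          simpa [hcase] using this
        rw [this, ← map_factor, he, List.map_map]
        congr 1
      · refine ⟨e, ?_⟩
        have : factor a (4^n * q) (4^n) = factor a (4^n * q') (4^n) := by
          apply factor_eq_iff₂.mpr
          intro i hi
          have e1 : 4^n * q + i = r * 4^(n+k) + (4^n * q' + i) := by omega
          rw [e1]
          have := hpt (n+k) r (4^n * q' + i) (by omega) (hbound i hi)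
          simpa [hcase] using this
        rw [this, he]
  -- conclude DD
  intro n p
  have hpk : p < 4^(p+1) := by
    have h := Nat.lt_pow_self (n := p+1) (by norm_num : (1:ℕ) < 4)
    omega
  obtain ⟨e, he⟩ := master (p+1) (n+1) p hpk
  rw [hrec n] at he
  simp only [List.map_append] at he
  have e4 : (4:ℕ)^(n+1) = 4*4^n := by rw [pow_succ]; ring
  have o0 : 4^(n+1)*p = 4^n*(4*p) := by rw [e4]; ring
  rw [o0] at he
  have hx := hsplit4 a (4^n*(4*p)) (4^n)
  rw [← e4] at hx
  have o1 : 4^n*(4*p) + 4^n = 4^n*(4*p+1) := by ring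
  have o2 : 4^n*(4*p) + 2*4^n = 4^n*(4*p+2) := by ring
  have o3 : 4^n*(4*p) + 3*4^n = 4^n*(4*p+3) := by ring
  rw [o1, o2, o3] at hx
  rw [hx] at he
  have hmaps : (List.map (⇑e) (w n) ++ List.map (⇑e) ((w n).map (⇑(f n)))
        ++ List.map (⇑e) ((w n).map (⇑(f n))) ++ List.map (⇑e) (w n))
      = List.map (⇑e) (w n) ++ (List.map (⇑e) ((w n).map (⇑(f n)))
        ++ (List.map (⇑e) ((w n).map (⇑(f n))) ++ List.map (⇑e) (w n))) := by
    simp [List.append_assoc]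
  have h' := he.trans hmaps
  obtain ⟨c0, c1, c2, c3⟩ := app4 (by simp [hwlen]) (by simp [hwlen]) (by simp [hwlen]) h'
  refine ⟨c0.trans c3.symm, c1.trans c2.symm, ?_⟩
  rw [c0, c1]
  intro hcon
  have hinj : Function.Injective (List.map (⇑e)) := List.map_injective_iff.mpr e.injective
  exact hne n (hinj hcon).symm

end InCtoDD
theorem stmt11 {α β : Type*} (a : ℕ → α) (b : ℕ → β)
    (ha : InC a) (hb : InC b) :
    ∀ n : ℕ, P a n = P b n := by
  intro n
  have hda := ha.toDD
  have hdb := hb.toDD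
  have e1 : P a n = Gam n :=
    le_antisymm (upperBound n a hda) (lowerBound hda n)
  have e2 : P b n = Gam n :=
    le_antisymm (upperBound n b hdb) (lowerBound hdb n)
  rw [e1, e2]
end

section
/- Let a : ℕ → α be a sequence in the class 𝒞 and let P_a(n) denote the palindromic length of its prefix of length n. Then: (1) P_a(n+1) ≤ P_a(n) + 1 for every n; (2) if n satisfies P_a(n+1) + 2 = P_a(n+2) + 1 = P_a(n+3), then n ≡ 3 (mod 4); (3) if P_a(4k+1) = P_a(4k+4), then P_a(4k+2) = P_a(4k+3) = P_a(4k+4) + 1; (4) if P_a(4k+1) = P_a(4k+2), then P_a(4k+1) = P_a(4k+4) + 2. -/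
namespace Stmt13Aux

open List

variable {α : Type*} (a : ℕ → α)

/-- `Pal a x y` : the factor of `a` starting at `x` of length `y` is a palindrome. -/
def Pal (x y : ℕ) : Prop := ∀ i, i < y → a (x + i) = a (x + (y - 1 - i))

variable {a}

theorem factor_length (x y : ℕ) : (factor a x y).length = y := by
  simp [factor]

theorem factor_getElem (x y i : ℕ) (h : i < y) :
    (factor a x y)[i]'(by simpa [factor] using h) = a (x + i) := by
  simp [factor]

theorem pal_iff_palindrome {x y : ℕ} :
    Pal a x y ↔ (factor a x y).Palindrome := by
  rw [List.Palindrome.iff_reverse_eq]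
  constructor
  · intro h
    apply List.ext_getElem (by simp)
    intro i h1 h2
    have hi : i < y := by simpa [factor] using h2
    rw [List.getElem_reverse]
    simp only [factor_length]
    rw [factor_getElem _ _ _ (by omega), factor_getElem _ _ _ (by omega)]
    exact (h i hi).symm
  · intro h i hi
    have h1 : (factor a x y).reverse[(y - 1 - i)]'(by simp [factor]; omega) =
        (factor a x y)[(y - 1 - i)]'(by simp [factor]; omega) := by
      simp only [h]
    rw [List.getElem_reverse] at h1
    simp only [factor_length] at h1
    rw [factor_getElem _ _ _ (by omega), factor_getElem _ _ _ (by omega)] at h1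
    rw [show y - 1 - (y - 1 - i) = i from by omega] at h1
    exact h1

theorem Pal.restrict {x y : ℕ} (h : Pal a x y) (d : ℕ) : Pal a (x + d) (y - 2 * d) := by
  intro i hi
  have h1 := h (d + i) (by omega)
  rw [show x + (d + i) = x + d + i from by omega] at h1
  rw [h1]; congr 1; omega

theorem pal_one (x : ℕ) : Pal a x 1 := by
  intro i hi
  interval_cases i
  rfl

theorem pal_two {x : ℕ} (h : a x = a (x + 1)) : Pal a x 2 := by
  intro i hi
  interval_cases i
  · simpa using h
  · simpa using h.symm

theorem pal_of_half {x y : ℕ} (h : ∀ i, 2 * i < y → a (x + i) = a (x + (y - 1 - i))) :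
    Pal a x y := by
  intro i hi
  rcases lt_or_ge (2 * i) y with hc | hc
  · exact h i hc
  · have h1 := h (y - 1 - i) (by omega)
    rw [show y - 1 - (y - 1 - i) = i from by omega] at h1
    exact h1.symm


/-! ### palLen basics -/

theorem palLen_set_nonempty (w : List α) :
    {k | ∃ ps : List (List α),
      ps.length = k ∧ (∀ p ∈ ps, p.Palindrome) ∧ ps.flatten = w}.Nonempty := by
  refine ⟨w.length, w.map (fun c => [c]), by simp, ?_, ?_⟩
  · intro p hp
    simp only [List.mem_map] at hp
    obtain ⟨c, _, rfl⟩ := hp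
    exact List.Palindrome.singleton c
  · induction w with
    | nil => simp
    | cons c t ih => simp [ih]

theorem palLen_le {w : List α} (ps : List (List α)) (h1 : ∀ p ∈ ps, p.Palindrome)
    (h2 : ps.flatten = w) : palLen w ≤ ps.length :=
  Nat.sInf_le ⟨ps, rfl, h1, h2⟩

theorem exists_palLen_decomp (w : List α) :
    ∃ ps : List (List α), ps.length = palLen w ∧ (∀ p ∈ ps, p.Palindrome) ∧
      ps.flatten = w :=
  Nat.sInf_mem (palLen_set_nonempty w)

theorem palLen_nil : palLen ([] : List α) = 0 :=
  Nat.le_zero.mp (palLen_le [] (by simp) rfl)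

theorem palLen_pos {w : List α} (h : w ≠ []) : 0 < palLen w := by
  rcases Nat.eq_zero_or_pos (palLen w) with h0 | h0
  · obtain ⟨ps, hl, _, hf⟩ := exists_palLen_decomp w
    rw [h0, List.length_eq_zero_iff] at hl
    subst hl
    simp at hf
    exact absurd hf h
  · exact h0

theorem palLen_append_le (u v : List α) : palLen (u ++ v) ≤ palLen u + palLen v := by
  obtain ⟨pu, h1, h2, h3⟩ := exists_palLen_decomp u
  obtain ⟨pv, h4, h5, h6⟩ := exists_palLen_decomp v
  have := palLen_le (w := u ++ v) (pu ++ pv) (by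
    intro p hp; rcases List.mem_append.mp hp with h | h
    · exact h2 p h
    · exact h5 p h) (by rw [List.flatten_append, h3, h6])
  simpa [h1, h4] using this

theorem palLen_append_pal (u : List α) {p : List α} (hp : p.Palindrome) :
    palLen (u ++ p) ≤ palLen u + 1 := by
  obtain ⟨pu, h1, h2, h3⟩ := exists_palLen_decomp u
  have := palLen_le (w := u ++ p) (pu ++ [p]) (by
    intro q hq; rcases List.mem_append.mp hq with h | h
    · exact h2 q h
    · simp at h; subst h; exact hp) (by rw [List.flatten_append, h3]; simp)
  simpa [h1] using this

theorem exists_last_pal {w : List α} (hw : w ≠ []) :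
    ∃ u p : List α, p.Palindrome ∧ p ≠ [] ∧ w = u ++ p ∧ palLen w = palLen u + 1 := by
  obtain ⟨ps, h1, h2, h3⟩ := exists_palLen_decomp w
  set ps' : List (List α) := ps.filter (fun l => !l.isEmpty) with hps'
  have hf : ps'.flatten = w := by rw [hps', List.flatten_filter_not_isEmpty, h3]
  have hall : ∀ p ∈ ps', p.Palindrome := fun p hp => h2 p (List.mem_of_mem_filter hp)
  have hlen : ps'.length = palLen w := by
    have hle := palLen_le ps' hall hf
    have h6 := List.length_filter_le (fun l => !l.isEmpty) ps
    rw [← hps'] at h6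
    omega
  have hne : ps' ≠ [] := by
    intro h; rw [h] at hf; simp at hf; exact hw hf
  have hlast : ps'.getLast hne ∈ ps' := List.getLast_mem hne
  refine ⟨ps'.dropLast.flatten, ps'.getLast hne, hall _ hlast, ?_, ?_, ?_⟩
  · have hmem : ps'.getLast hne ∈ ps.filter (fun l => !l.isEmpty) := by
      rw [← hps']; exact hlast
    simpa using List.of_mem_filter hmem
  · conv_lhs => rw [← hf, ← List.dropLast_append_getLast hne]
    rw [List.flatten_append]; simp
  · have hle1 : palLen w ≤ palLen ps'.dropLast.flatten + 1 := by
      conv_lhs => rw [← hf, ← List.dropLast_append_getLast hne, List.flatten_append]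
      simpa using palLen_append_pal _ (hall _ hlast)
    have hle2 : palLen ps'.dropLast.flatten ≤ ps'.dropLast.length :=
      palLen_le _ (fun p hp => hall p (List.dropLast_subset _ hp)) rfl
    have h4 : ps'.dropLast.length + 1 = ps'.length := by
      rw [List.length_dropLast]
      have : ps' ≠ [] := hne
      have : 0 < ps'.length := List.length_pos_iff.mpr hne
      omega
    have h5 : 0 < palLen w := palLen_pos hw
    omega

theorem palLen_pal_dropLast {p : List α} (hp : p.Palindrome) : palLen p.dropLast ≤ 2 := by
  cases hp with
  | nil => simp [palLen_nil]
  | singleton x => simp [palLen_nil]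
  | cons_concat x h =>
      rename_i l
      have hd : (x :: (l ++ [x])).dropLast = x :: l := by
        rw [show x :: (l ++ [x]) = (x :: l) ++ [x] from by simp, List.dropLast_concat]
      rw [hd]
      refine le_trans (palLen_le [[x], l] ?_ (by simp)) (by simp)
      intro q hq
      simp at hq
      rcases hq with rfl | rfl
      · exact List.Palindrome.singleton x
      · exact h


/-! ### P basics -/

theorem prefixWord_eq_factor (n : ℕ) : prefixWord a n = factor a 0 n := rfl

theorem factor_concat (x y z : ℕ) :
    factor a x (y + z) = factor a x y ++ factor a (x + y) z := by
  unfold factor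
  rw [List.range_add, List.map_append, List.map_map]
  congr 1
  apply List.map_congr_left
  intro i _
  show a (x + (y + i)) = a (x + y + i)
  exact congrArg a (by omega)

theorem prefix_append {m n : ℕ} (h : m ≤ n) :
    prefixWord a n = prefixWord a m ++ factor a m (n - m) := by
  unfold prefixWord
  rw [show n = m + (n - m) from by omega, factor_concat]
  rw [Nat.add_sub_cancel_left, Nat.zero_add]

theorem palLen_dropLast_le (w : List α) : palLen w.dropLast ≤ palLen w + 1 := by
  rcases eq_or_ne w [] with rfl | hw
  · simp [palLen_nil]
  · obtain ⟨u, p, hp, hpne, rfl, heq⟩ := exists_last_pal hw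
    rw [List.dropLast_append_of_ne_nil hpne]
    calc palLen (u ++ p.dropLast) ≤ palLen u + palLen p.dropLast := palLen_append_le _ _
    _ ≤ palLen u + 2 := by have := palLen_pal_dropLast hp; omega
    _ = palLen (u ++ p) + 1 := by omega

theorem P_succ_le (n : ℕ) : P a (n + 1) ≤ P a n + 1 := by
  unfold P
  rw [prefix_append (a := a) (show n ≤ n + 1 from by omega)]
  have h1 : factor a n (n + 1 - n) = [a n] := by
    simp [factor, show n + 1 - n = 1 from by omega, List.range_succ]
  rw [h1]
  exact palLen_append_pal _ (List.Palindrome.singleton _)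

theorem P_le_suffix {n ℓ : ℕ} (hl : ℓ ≤ n) (hp : Pal a (n - ℓ) ℓ) :
    P a n ≤ P a (n - ℓ) + 1 := by
  unfold P
  rw [prefix_append (a := a) (show n - ℓ ≤ n from by omega),
    show n - (n - ℓ) = ℓ from by omega]
  exact palLen_append_pal _ (pal_iff_palindrome.mp hp)

theorem P_le_succ (n : ℕ) : P a n ≤ P a (n + 1) + 1 := by
  unfold P
  have h1 : prefixWord a (n + 1) = prefixWord a n ++ [a n] := by
    rw [prefix_append (a := a) (show n ≤ n + 1 from by omega)]
    simp [factor, show n + 1 - n = 1 from by omega, List.range_succ]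
  have h2 : prefixWord a n = (prefixWord a (n + 1)).dropLast := by
    rw [h1, List.dropLast_concat]
  rw [h2]
  exact palLen_dropLast_le _

theorem prefixWord_length (n : ℕ) : (prefixWord a n).length = n := by
  simp [prefixWord, factor]

theorem P_opt {n : ℕ} (hn : 1 ≤ n) :
    ∃ ℓ, 1 ≤ ℓ ∧ ℓ ≤ n ∧ Pal a (n - ℓ) ℓ ∧ P a n = P a (n - ℓ) + 1 := by
  have hw : prefixWord a n ≠ [] := by
    intro h
    have := prefixWord_length (a := a) n
    rw [h] at this
    simp at this
    omega
  obtain ⟨u, p, hp, hpne, heq, hP⟩ := exists_last_pal hw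
  have hlen : u.length + p.length = n := by
    have := prefixWord_length (a := a) n
    rw [heq] at this
    simpa using this
  have hp1 : 1 ≤ p.length := List.length_pos_iff.mpr hpne
  refine ⟨p.length, hp1, by omega, ?_, ?_⟩
  · have hsplit : prefixWord a n = prefixWord a (n - p.length) ++
        factor a (n - p.length) p.length := by
      rw [prefix_append (a := a) (show n - p.length ≤ n from by omega),
        show n - (n - p.length) = p.length from by omega]
    have := List.append_inj (heq.symm.trans hsplit)
      (by rw [prefixWord_length]; omega)
    rw [pal_iff_palindrome, ← this.2]
    exact hp
  · have hsplit : prefixWord a n = prefixWord a (n - p.length) ++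
        factor a (n - p.length) p.length := by
      rw [prefix_append (a := a) (show n - p.length ≤ n from by omega),
        show n - (n - p.length) = p.length from by omega]
    have h2 := List.append_inj (heq.symm.trans hsplit)
      (by rw [prefixWord_length]; omega)
    unfold P
    rw [← h2.1]
    exact hP

/-- The bundle of facts about the block `[4k, 4k+4]`. -/
def M (a : ℕ → α) (k : ℕ) : Prop :=
  P a (4*k+1) = P a (4*k) + 1 ∧
  (P a (4*k+1) ≤ P a (4*k+2) ∧ P a (4*k+2) ≤ P a (4*k+1) + 1) ∧
  P a (4*k+3) ≤ P a (4*k+2) ∧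
  P a (4*k+3) = P a (4*k+4) + 1 ∧
  (P a (4*k+2) = P a (4*k+1) → P a (4*k+3) + 1 = P a (4*k+2))

/-! ### Local structure consequences -/

section Local

variable (hE : ∀ k, a (4*k+1) = a (4*k+2))
variable (hB : ∀ k, a (4*k) = a (4*k+3))
variable (hNe : ∀ k, a (4*k) ≠ a (4*k+1))

include hE hB hNe

theorem sq_mod {i : ℕ} (h : a i = a (i+1)) : i % 4 = 1 ∨ i % 4 = 3 := by
  have h4 : i % 4 = 0 ∨ i % 4 = 1 ∨ i % 4 = 2 ∨ i % 4 = 3 := by omega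
  rcases h4 with h4 | h4 | h4 | h4
  · exfalso
    obtain ⟨m, rfl⟩ : ∃ m, i = 4*m := ⟨i/4, by omega⟩
    exact hNe m h
  · exact Or.inl h4
  · exfalso
    obtain ⟨m, rfl⟩ : ∃ m, i = 4*m+2 := ⟨i/4, by omega⟩
    rw [show 4*m+2+1 = 4*m+3 from by omega] at h
    exact hNe m ((hB m).trans (h.symm.trans (hE m).symm))
  · exact Or.inr h4

theorem center_mod {i : ℕ} (h : a i = a (i+2)) : (i+1) % 4 = 0 ∨ (i+1) % 4 = 3 := by
  have h4 : i % 4 = 0 ∨ i % 4 = 1 ∨ i % 4 = 2 ∨ i % 4 = 3 := by omega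
  rcases h4 with h4 | h4 | h4 | h4
  · exfalso
    obtain ⟨m, rfl⟩ : ∃ m, i = 4*m := ⟨i/4, by omega⟩
    exact hNe m (h.trans (hE m).symm)
  · exfalso
    obtain ⟨m, rfl⟩ : ∃ m, i = 4*m+1 := ⟨i/4, by omega⟩
    rw [show 4*m+1+2 = 4*m+3 from by omega] at h
    exact hNe m ((hB m).trans h.symm)
  · right; omega
  · left; omega

theorem center5_2 {i : ℕ} (hm : i % 4 = 2) (h1 : a (i+1) = a (i+3))
    (h2 : a i = a (i+4)) : False := by
  obtain ⟨m, rfl⟩ : ∃ m, i = 4*m+2 := ⟨i/4, by omega⟩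
  rw [show 4*m+2+1 = 4*m+3 from by omega, show 4*m+2+3 = 4*(m+1)+1 from by omega] at h1
  rw [show 4*m+2+4 = 4*(m+1)+2 from by omega] at h2
  -- h1 : a (4m+3) = a (4(m+1)+1), h2 : a (4m+2) = a (4(m+1)+2)
  have e1 : a (4*m) = a (4*(m+1)+1) := (hB m).trans h1
  have e2 : a (4*m+1) = a (4*(m+1)+2) := (hE m).trans h2
  have e3 : a (4*(m+1)+1) = a (4*(m+1)+2) := hE (m+1)
  exact hNe m (e1.trans (e3.symm ▸ e2.symm : a (4*(m+1)+1) = a (4*m+1)))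

theorem center5_1 {i : ℕ} (hm : i % 4 = 1) (h1 : a (i+1) = a (i+3))
    (h2 : a i = a (i+4)) : False := by
  obtain ⟨m, rfl⟩ : ∃ m, i = 4*m+1 := ⟨i/4, by omega⟩
  rw [show 4*m+1+1 = 4*m+2 from by omega, show 4*m+1+3 = 4*(m+1) from by omega] at h1
  rw [show 4*m+1+4 = 4*(m+1)+1 from by omega] at h2
  -- h1 : a (4m+2) = a (4(m+1)), h2 : a (4m+1) = a (4(m+1)+1)
  exact hNe (m+1) (h1.symm.trans ((hE m).symm.trans h2))

theorem CL1 {x ℓ : ℕ} (hp : Pal a x ℓ) (h2 : 2 ≤ ℓ) (hev : ℓ % 2 = 0) :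
    (2*x + ℓ) % 4 = 0 := by
  have hsq : a (x + (ℓ/2 - 1)) = a (x + (ℓ/2 - 1) + 1) := by
    have := hp (ℓ/2 - 1) (by omega)
    rw [show x + (ℓ - 1 - (ℓ/2 - 1)) = x + (ℓ/2 - 1) + 1 from by omega] at this
    exact this
  have := sq_mod hE hB hNe hsq
  omega

theorem CL2 {x ℓ : ℕ} (hp : Pal a x ℓ) (hodd : ℓ % 2 = 1) (h3 : 3 ≤ ℓ) :
    ℓ = 3 ∧ ((x + ℓ) % 4 = 1 ∨ (x + ℓ) % 4 = 2) := by
  by_cases h5 : 5 ≤ ℓ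
  · exfalso
    have r1 : a (x + (ℓ/2 - 1)) = a (x + (ℓ/2 - 1) + 2) := by
      have := hp (ℓ/2 - 1) (by omega)
      rw [show x + (ℓ - 1 - (ℓ/2 - 1)) = x + (ℓ/2 - 1) + 2 from by omega] at this
      exact this
    have r2 : a (x + (ℓ/2 - 2)) = a (x + (ℓ/2 - 2) + 4) := by
      have := hp (ℓ/2 - 2) (by omega)
      rw [show x + (ℓ - 1 - (ℓ/2 - 2)) = x + (ℓ/2 - 2) + 4 from by omega] at this
      exact this
    have r1' : a (x + (ℓ/2 - 2) + 1) = a (x + (ℓ/2 - 2) + 3) := by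
      rw [show x + (ℓ/2 - 2) + 1 = x + (ℓ/2 - 1) from by omega,
        show x + (ℓ/2 - 2) + 3 = x + (ℓ/2 - 1) + 2 from by omega]
      exact r1
    have hc := center_mod hE hB hNe (show a (x + (ℓ/2 - 1)) = a ((x + (ℓ/2 - 1)) + 2) from r1)
    -- center (x + ℓ/2) % 4 ∈ {0, 3}, so (x + (ℓ/2-2)) % 4 ∈ {2, 1}
    have hm : (x + (ℓ/2 - 2)) % 4 = 2 ∨ (x + (ℓ/2 - 2)) % 4 = 1 := by omega
    rcases hm with hm | hm
    · exact center5_2 hE hB hNe hm r1' r2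
    · exact center5_1 hE hB hNe hm r1' r2
  · have hl3 : ℓ = 3 := by omega
    subst hl3
    have r1 : a x = a (x + 2) := by
      have := hp 0 (by omega)
      rw [show x + (3 - 1 - 0) = x + 2 from by omega, show x + 0 = x from by omega] at this
      exact this
    have := center_mod hE hB hNe r1
    exact ⟨rfl, by omega⟩

theorem palBlock (k : ℕ) : Pal a (4*k) 4 := by
  apply pal_of_half
  intro i hi
  have hi2 : i < 2 := by omega
  interval_cases i
  · rw [show 4*k + (4-1-0) = 4*k+3 from by omega, show 4*k+0 = 4*k from by omega]
    exact hB k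
  · rw [show 4*k + (4-1-1) = 4*k+2 from by omega]
    exact hE k

theorem extend_mid2 {j d : ℕ} (hd : 1 ≤ d) (hp : Pal a (4*j+2) (4*d)) :
    Pal a (4*j) (4*d+4) := by
  apply pal_of_half
  intro i hi
  rcases Nat.lt_or_ge i 2 with hi2 | hi2
  · interval_cases i
    · rw [show 4*j+0 = 4*j from by omega, show 4*j + (4*d+4-1-0) = 4*(j+d)+3 from by omega]
      have e1 : a (4*j+3) = a (4*(j+d)) := by
        have := hp 1 (by omega)
        rw [show 4*j+2+1 = 4*j+3 from by omega,
          show 4*j+2 + (4*d-1-1) = 4*(j+d) from by omega] at this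
        exact this
      exact ((hB j).trans e1).trans (hB (j+d))
    · rw [show 4*j + (4*d+4-1-1) = 4*(j+d)+2 from by omega]
      have e1 : a (4*j+2) = a (4*(j+d)+1) := by
        have := hp 0 (by omega)
        rw [show 4*j+2+0 = 4*j+2 from by omega,
          show 4*j+2 + (4*d-1-0) = 4*(j+d)+1 from by omega] at this
        exact this
      exact ((hE j).trans e1).trans (hE (j+d))
  · have := hp (i-2) (by omega)
    rw [show 4*j+2 + (i-2) = 4*j + i from by omega,
      show 4*j+2 + (4*d-1-(i-2)) = 4*j + (4*d+4-1-i) from by omega] at this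
    exact this

theorem extend_mid1 {j d : ℕ} (hp : Pal a (4*j+1) (4*d+2)) :
    Pal a (4*j) (4*d+4) := by
  apply pal_of_half
  intro i hi
  rcases Nat.lt_or_ge i 1 with hi2 | hi2
  · interval_cases i
    rw [show 4*j+0 = 4*j from by omega, show 4*j + (4*d+4-1-0) = 4*(j+d)+3 from by omega]
    rcases Nat.eq_zero_or_pos d with rfl | hd
    · rw [show 4*(j+0)+3 = 4*j+3 from by omega]
      exact hB j
    · have e1 : a (4*j+3) = a (4*(j+d)) := by
        have := hp 2 (by omega)
        rw [show 4*j+1+2 = 4*j+3 from by omega,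
          show 4*j+1 + (4*d+2-1-2) = 4*(j+d) from by omega] at this
        exact this
      exact ((hB j).trans e1).trans (hB (j+d))
  · have := hp (i-1) (by omega)
    rw [show 4*j+1 + (i-1) = 4*j + i from by omega,
      show 4*j+1 + (4*d+2-1-(i-1)) = 4*j + (4*d+4-1-i) from by omega] at this
    exact this


/-! ### The main induction -/

omit hE hB hNe in
theorem sufThree {j d k : ℕ} (hk : k = j + d) (hp : Pal a (4*j+1) (4*d+2)) :
    P a (4*k+3) ≤ P a (4*j+1) + 1 := by
  have hpal : Pal a (4*k+3 - (4*d+2)) (4*d+2) := by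
    rw [show 4*k+3 - (4*d+2) = 4*j+1 from by omega]; exact hp
  have := P_le_suffix (a := a) (n := 4*k+3) (ℓ := 4*d+2) (by omega) hpal
  rwa [show 4*k+3 - (4*d+2) = 4*j+1 from by omega] at this

omit hE hB hNe in
theorem sufFour {j d k : ℕ} (hk : k = j + d) (hp : Pal a (4*j) (4*d+4)) :
    P a (4*k+4) ≤ P a (4*j) + 1 := by
  have hpal : Pal a (4*k+4 - (4*d+4)) (4*d+4) := by
    rw [show 4*k+4 - (4*d+4) = 4*j from by omega]; exact hp
  have := P_le_suffix (a := a) (n := 4*k+4) (ℓ := 4*d+4) (by omega) hpal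
  rwa [show 4*k+4 - (4*d+4) = 4*j from by omega] at this

theorem evenTwo {k ℓ : ℕ} (h2 : ℓ ≤ 4*k+2) (h3 : 2 ≤ ℓ) (hev : ℓ % 2 = 0)
    (hcl : (2*(4*k+2-ℓ) + ℓ) % 4 = 0) (hp : Pal a (4*k+2-ℓ) ℓ) :
    ∃ j d, k = j + d ∧ 1 ≤ d ∧ 4*k+2-ℓ = 4*j+2 ∧
      Pal a (4*j+1) (4*d+2) ∧ P a (4*k) ≤ P a (4*j+4) + 1 := by
  obtain ⟨j, d, hkd, hd1, hl⟩ : ∃ j d, k = j + d ∧ 1 ≤ d ∧ ℓ = 4*d :=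
    ⟨k - ℓ/4, ℓ/4, by omega⟩
  have hx : 4*k+2-ℓ = 4*j+2 := by omega
  rw [hx, hl] at hp
  have hA : Pal a (4*j) (4*d+4) := extend_mid2 hE hB hNe hd1 hp
  have hmid : Pal a (4*j+1) (4*d+2) := by
    have := hA.restrict 1
    rwa [show 4*j+1 = 4*j+1 from rfl, show 4*d+4-2*1 = 4*d+2 from by omega] at this
  refine ⟨j, d, hkd, hd1, hx, hmid, ?_⟩
  have hres : Pal a (4*k - (4*d-4)) (4*d-4) := by
    have := hp.restrict 2
    rw [show 4*j+2+2 = 4*j+4 from by omega, show 4*d-2*2 = 4*d-4 from by omega] at this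
    rw [show 4*k - (4*d-4) = 4*j+4 from by omega]
    exact this
  have := P_le_suffix (a := a) (n := 4*k) (ℓ := 4*d-4) (by omega) hres
  rwa [show 4*k - (4*d-4) = 4*j+4 from by omega] at this

theorem M_all : ∀ k, M a k := by
  intro k
  induction k using Nat.strong_induction_on with
  | _ k IH =>
  -- Step A : P (4k+1) = P (4k) + 1
  have hM1 : P a (4*k+1) = P a (4*k) + 1 := by
    have hub : P a (4*k+1) ≤ P a (4*k) + 1 := P_succ_le (a := a) (4*k)
    obtain ⟨ℓ, h1, h2, hp, he⟩ := P_opt (a := a) (show 1 ≤ 4*k+1 from by omega)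
    have hlb : P a (4*k) ≤ P a (4*k+1-ℓ) := by
      rcases eq_or_lt_of_le h1 with hl1 | hl2
      · rw [show 4*k+1-ℓ = 4*k from by omega]
      · by_cases hev : ℓ % 2 = 0
        · have hcl := CL1 hE hB hNe hp (by omega) hev
          obtain ⟨j, d, hkd, hl⟩ : ∃ j d, k = j + d + 1 ∧ ℓ = 4*d + 2 :=
            ⟨k - (ℓ+2)/4, (ℓ-2)/4, by omega⟩
          have hx : 4*k+1-ℓ = 4*j+3 := by omega
          rw [hx]
          have hres : Pal a (4*k - 4*d) (4*d) := by
            have := hp.restrict 1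
            rw [hx, show 4*j+3+1 = 4*j+4 from by omega,
              show ℓ - 2*1 = 4*d from by omega] at this
            rw [show 4*k - 4*d = 4*j+4 from by omega]
            exact this
          have hsuf : P a (4*k) ≤ P a (4*j+4) + 1 := by
            have := P_le_suffix (a := a) (n := 4*k) (ℓ := 4*d) (by omega) hres
            rwa [show 4*k - 4*d = 4*j+4 from by omega] at this
          obtain ⟨m1, m3, m4, m2, m6⟩ := IH j (by omega)
          omega
        · obtain ⟨hl3, _⟩ := CL2 hE hB hNe hp (by omega) (by omega)
          obtain ⟨k', rfl⟩ : ∃ k', k = k' + 1 := ⟨k - 1, by omega⟩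
          rw [show 4*(k'+1)+1-ℓ = 4*k'+2 from by omega]
          obtain ⟨m1, m3, m4, m2, m6⟩ := IH k' (by omega)
          have hstep : P a (4*k'+3) ≤ P a (4*k'+2) + 1 := P_succ_le (a := a) (4*k'+2)
          rw [show 4*(k'+1) = 4*k'+4 from by omega]
          omega
    omega
  -- Step B : P (4k+1) ≤ P (4k+2) ≤ P (4k+1) + 1
  have hM3b : P a (4*k+2) ≤ P a (4*k+1) + 1 := P_succ_le (a := a) (4*k+1)
  have hM3a : P a (4*k+1) ≤ P a (4*k+2) := by
    obtain ⟨ℓ, h1, h2, hp, he⟩ := P_opt (a := a) (show 1 ≤ 4*k+2 from by omega)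
    have hlb : P a (4*k) ≤ P a (4*k+2-ℓ) := by
      rcases eq_or_lt_of_le h1 with hl1 | hl2
      · rw [show 4*k+2-ℓ = 4*k+1 from by omega]
        omega
      · by_cases hev : ℓ % 2 = 0
        · have hcl := CL1 hE hB hNe hp (by omega) hev
          obtain ⟨j, d, hkd, hd1, hx, hmid, hsuf⟩ :=
            evenTwo hE hB hNe h2 (by omega) hev hcl hp
          rw [hx]
          obtain ⟨m1, m3, m4, m2, m6⟩ := IH j (by omega)
          omega
        · obtain ⟨hl3, _⟩ := CL2 hE hB hNe hp (by omega) (by omega)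
          obtain ⟨k', rfl⟩ : ∃ k', k = k' + 1 := ⟨k - 1, by omega⟩
          rw [show 4*(k'+1)+2-ℓ = 4*k'+3 from by omega]
          obtain ⟨m1, m3, m4, m2, m6⟩ := IH k' (by omega)
          rw [show 4*(k'+1) = 4*k'+4 from by omega]
          omega
    omega
  -- Step C : P (4k+3) ≤ P (4k+2)
  have hyy : P a (4*k+3) ≤ P a (4*k+1) + 1 := by
    have hpal : Pal a (4*k+3-2) 2 := by
      rw [show 4*k+3-2 = 4*k+1 from by omega]
      exact pal_two (hE k)
    have := P_le_suffix (a := a) (n := 4*k+3) (ℓ := 2) (by omega) hpal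
    rwa [show 4*k+3-2 = 4*k+1 from by omega] at this
  have hM4 : P a (4*k+3) ≤ P a (4*k+2) := by
    by_cases hcase : P a (4*k+2) = P a (4*k) + 2
    · omega
    · -- P (4k+2) = P (4k) + 1
      have hval : P a (4*k+2) = P a (4*k) + 1 := by omega
      obtain ⟨ℓ, h1, h2, hp, he⟩ := P_opt (a := a) (show 1 ≤ 4*k+2 from by omega)
      rcases eq_or_lt_of_le h1 with hl1 | hl2
      · rw [show 4*k+2-ℓ = 4*k+1 from by omega] at he
        omega
      · by_cases hev : ℓ % 2 = 0
        · have hcl := CL1 hE hB hNe hp (by omega) hev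
          obtain ⟨j, d, hkd, hd1, hx, hmid, hsuf⟩ :=
            evenTwo hE hB hNe h2 (by omega) hev hcl hp
          rw [hx] at he
          obtain ⟨m1, m3, m4, m2, m6⟩ := IH j (by omega)
          have hbound := sufThree (a := a) hkd hmid
          omega
        · obtain ⟨hl3, _⟩ := CL2 hE hB hNe hp (by omega) (by omega)
          obtain ⟨k', rfl⟩ : ∃ k', k = k' + 1 := ⟨k - 1, by omega⟩
          rw [show 4*(k'+1)+2-ℓ = 4*k'+3 from by omega] at he
          obtain ⟨m1, m3, m4, m2, m6⟩ := IH k' (by omega)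
          rw [show 4*(k'+1)+2 = 4*k'+4+2 from by omega,
            show 4*(k'+1) = 4*k'+4 from by omega] at hval
          rw [show 4*(k'+1)+2 = 4*k'+4+2 from by omega] at he
          exfalso
          omega
  -- Step D : P (4k+3) = P (4k+4) + 1
  have hM2 : P a (4*k+3) = P a (4*k+4) + 1 := by
    have hRM : P a (4*k+3) ≤ P a (4*k+4) + 1 := P_le_succ (a := a) (4*k+3)
    obtain ⟨ℓ, h1, h2, hp, he⟩ := P_opt (a := a) (show 1 ≤ 4*k+3 from by omega)
    rcases eq_or_lt_of_le h1 with hl1 | hl2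
    · rw [show 4*k+3-ℓ = 4*k+2 from by omega] at he
      omega
    · by_cases hev : ℓ % 2 = 0
      · have hcl := CL1 hE hB hNe hp (by omega) hev
        obtain ⟨j, d, hkd, hl⟩ : ∃ j d, k = j + d ∧ ℓ = 4*d + 2 :=
          ⟨k - (ℓ-2)/4, (ℓ-2)/4, by omega⟩
        have hx : 4*k+3-ℓ = 4*j+1 := by omega
        rw [hx] at he hp
        rw [hl] at hp
        have hA : Pal a (4*j) (4*d+4) := extend_mid1 hE hB hNe hp
        have hbound := sufFour (a := a) hkd hA
        have hm1j : P a (4*j+1) = P a (4*j) + 1 := by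
          rcases eq_or_lt_of_le (show j ≤ k from by omega) with hjk | hjk
          · rw [hjk]; exact hM1
          · exact (IH j hjk).1
        omega
      · obtain ⟨hl3, hmod⟩ := CL2 hE hB hNe hp (by omega) (by omega)
        rw [show 4*k+3-ℓ+ℓ = 4*k+3 from by omega] at hmod
        omega
  -- Step E : M6
  have hM6 : P a (4*k+2) = P a (4*k+1) → P a (4*k+3) + 1 = P a (4*k+2) := by
    intro h6
    have hval : P a (4*k+2) = P a (4*k) + 1 := by omega
    obtain ⟨ℓ, h1, h2, hp, he⟩ := P_opt (a := a) (show 1 ≤ 4*k+2 from by omega)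
    rcases eq_or_lt_of_le h1 with hl1 | hl2
    · rw [show 4*k+2-ℓ = 4*k+1 from by omega] at he
      omega
    · by_cases hev : ℓ % 2 = 0
      · have hcl := CL1 hE hB hNe hp (by omega) hev
        obtain ⟨j, d, hkd, hd1, hx, hmid, hsuf⟩ :=
          evenTwo hE hB hNe h2 (by omega) hev hcl hp
        rw [hx] at he
        obtain ⟨m1, m3, m4, m2, m6⟩ := IH j (by omega)
        -- P (4j+2) = P (4k) forced, chain forces P (4j+3) = P (4j+2)
        have hchain : P a (4*j+3) = P a (4*j+2) := by omega
        have hne6 : P a (4*j+2) ≠ P a (4*j+1) := by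
          intro hq
          have := m6 hq
          omega
        have hj2 : P a (4*j+2) = P a (4*j) + 2 := by omega
        have hbound := sufThree (a := a) hkd hmid
        have hRM : P a (4*k+2) ≤ P a (4*k+3) + 1 := P_le_succ (a := a) (4*k+2)
        omega
      · obtain ⟨hl3, _⟩ := CL2 hE hB hNe hp (by omega) (by omega)
        obtain ⟨k', rfl⟩ : ∃ k', k = k' + 1 := ⟨k - 1, by omega⟩
        rw [show 4*(k'+1)+2-ℓ = 4*k'+3 from by omega] at he
        obtain ⟨m1, m3, m4, m2, m6⟩ := IH k' (by omega)
        rw [show 4*(k'+1)+2 = 4*k'+4+2 from by omega,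
          show 4*(k'+1) = 4*k'+4 from by omega] at hval
        rw [show 4*(k'+1)+2 = 4*k'+4+2 from by omega] at he
        exfalso
        omega
  exact ⟨hM1, ⟨hM3a, hM3b⟩, hM4, hM2, hM6⟩

end Local


/-! ### From `InC` to the local structure facts -/

theorem InC_local {a : ℕ → α} (hC : InC a) :
    (∀ k, a (4*k+1) = a (4*k+2)) ∧ (∀ k, a (4*k) = a (4*k+3)) ∧
      (∀ k, a (4*k) ≠ a (4*k+1)) := by
  obtain ⟨c, f, w, hw0, hrec, hne, hpre⟩ := hC
  have hlen : ∀ n, (w n).length = 4^n := fun n => by rw [hpre n]; simp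
  have hval : ∀ n i, i < 4^n → (w n)[i]? = some (a i) := by
    intro n i h
    rw [hpre n]
    simp [List.getElem?_map, List.getElem?_range, h]
  have R : ∀ n t, t < 4^n → a (4^n + t) = f n (a t) ∧ a (2*4^n + t) = f n (a t) ∧
      a (3*4^n + t) = a t := by
    intro n t ht
    have h1 := hrec n
    have hXlt : 4^n + t < 4^(n+1) ∧ 2*4^n + t < 4^(n+1) ∧ 3*4^n + t < 4^(n+1) := by
      have : (4:ℕ)^(n+1) = 4*4^n := by ring
      omega
    have hlm : ((w n).map (f n)).length = 4^n := by simp [hlen n]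
    have hl2 : (w n ++ (w n).map (f n)).length = 2*4^n := by
      simp [List.length_append, hlen n]; omega
    have hl3 : (w n ++ (w n).map (f n) ++ (w n).map (f n)).length = 3*4^n := by
      simp [List.length_append, hlen n]; omega
    have hmapval : ∀ i, i < 4^n → ((w n).map (f n))[i]? = some (f n (a i)) := by
      intro i h
      rw [List.getElem?_map, hval n i h]
      rfl
    refine ⟨?_, ?_, ?_⟩
    · have e := hval (n+1) (4^n + t) hXlt.1
      rw [h1] at e
      rw [List.getElem?_append_left (by rw [hl3]; omega),
        List.getElem?_append_left (by rw [hl2]; omega),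
        List.getElem?_append_right (by rw [hlen n]; omega)] at e
      rw [hlen n, show 4^n + t - 4^n = t from by omega] at e
      rw [hmapval t ht] at e
      exact (Option.some.injEq _ _ ▸ e).symm
    · have e := hval (n+1) (2*4^n + t) hXlt.2.1
      rw [h1] at e
      rw [List.getElem?_append_left (by rw [hl3]; omega),
        List.getElem?_append_right (by rw [hl2]; omega)] at e
      rw [hl2, show 2*4^n + t - 2*4^n = t from by omega] at e
      rw [hmapval t ht] at e
      exact (Option.some.injEq _ _ ▸ e).symm
    · have e := hval (n+1) (3*4^n + t) hXlt.2.2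
      rw [h1] at e
      rw [List.getElem?_append_right (by rw [hl3]; omega)] at e
      rw [hl3, show 3*4^n + t - 3*4^n = t from by omega] at e
      rw [hval n t ht] at e
      exact (Option.some.injEq _ _ ▸ e).symm
  have key : ∀ n t, 4*t+3 < 4^(n+1) →
      (a (4*t+1) = a (4*t+2) ∧ a (4*t) = a (4*t+3) ∧ a (4*t) ≠ a (4*t+1)) := by
    intro n
    induction n with
    | zero =>
      intro t ht
      have h4 : (4:ℕ)^(0+1) = 4 := by norm_num
      have ht0 : t = 0 := by omega
      subst ht0
      have r := R 0 0 (by norm_num)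
      rw [show (4:ℕ)^0 + 0 = 1 from by norm_num, show 2*(4:ℕ)^0 + 0 = 2 from by norm_num,
        show 3*(4:ℕ)^0 + 0 = 3 from by norm_num] at r
      have hfc : f 0 (a 0) ≠ a 0 := by
        intro hq
        apply hne 0
        have hw0' : w 0 = [a 0] := by
          rw [hpre 0]
          norm_num [List.range_succ]
        rw [hw0']
        simp [hq]
      constructor
      · rw [show 4*0+1 = 1 from by norm_num, show 4*0+2 = 2 from by norm_num]
        rw [r.1, r.2.1]
      constructor
      · rw [show 4*0+3 = 3 from by norm_num, show 4*0 = 0 from by norm_num]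
        rw [r.2.2]
      · rw [show 4*0+1 = 1 from by norm_num, show 4*0 = 0 from by norm_num]
        rw [r.1]
        exact fun hq => hfc hq.symm
    | succ n ih =>
      intro t ht
      by_cases hlt : 4*t+3 < 4^(n+1)
      · exact ih t hlt
      · have hpow : (4:ℕ)^(n+2) = 4*4^(n+1) := by ring
        have hdvd : (4:ℕ) ∣ 4^(n+1) := dvd_pow_self 4 (Nat.succ_ne_zero n)
        have hle : 4^(n+1) ≤ 4*t := by omega
        have hub : 4*t + 3 < 4*4^(n+1) := by omega
        rcases lt_or_ge (4*t) (2*4^(n+1)) with hq2 | hq2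
        · -- second quarter
          obtain ⟨u, hu1, hu2⟩ : ∃ u, 4*t = 4^(n+1) + 4*u ∧ 4*u+3 < 4^(n+1) :=
            ⟨(4*t - 4^(n+1))/4, by omega⟩
          obtain ⟨e1, e2, e3⟩ := ih u hu2
          have g : ∀ i, i < 4 → a (4*t+i) = f (n+1) (a (4*u+i)) := by
            intro i hi
            have := (R (n+1) (4*u+i) (by omega)).1
            rw [show 4^(n+1) + (4*u+i) = 4*t+i from by omega] at this
            exact this
          have g0 : a (4*t) = f (n+1) (a (4*u)) := by
            have := (R (n+1) (4*u) (by omega)).1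
            rw [show 4^(n+1) + 4*u = 4*t from by omega] at this
            exact this
          refine ⟨?_, ?_, ?_⟩
          · rw [g 1 (by omega), g 2 (by omega)]
            exact congrArg _ e1
          · rw [g0, g 3 (by omega)]
            exact congrArg _ e2
          · rw [g0, g 1 (by omega)]
            exact fun hq => e3 ((f (n+1)).injective hq)
        · rcases lt_or_ge (4*t) (3*4^(n+1)) with hq3 | hq3
          · -- third quarter
            obtain ⟨u, hu1, hu2⟩ : ∃ u, 4*t = 2*4^(n+1) + 4*u ∧ 4*u+3 < 4^(n+1) :=
              ⟨(4*t - 2*4^(n+1))/4, by omega⟩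
            obtain ⟨e1, e2, e3⟩ := ih u hu2
            have g : ∀ i, i < 4 → a (4*t+i) = f (n+1) (a (4*u+i)) := by
              intro i hi
              have := (R (n+1) (4*u+i) (by omega)).2.1
              rw [show 2*4^(n+1) + (4*u+i) = 4*t+i from by omega] at this
              exact this
            have g0 : a (4*t) = f (n+1) (a (4*u)) := by
              have := (R (n+1) (4*u) (by omega)).2.1
              rw [show 2*4^(n+1) + 4*u = 4*t from by omega] at this
              exact this
            refine ⟨?_, ?_, ?_⟩
            · rw [g 1 (by omega), g 2 (by omega)]
              exact congrArg _ e1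
            · rw [g0, g 3 (by omega)]
              exact congrArg _ e2
            · rw [g0, g 1 (by omega)]
              exact fun hq => e3 ((f (n+1)).injective hq)
          · -- fourth quarter
            obtain ⟨u, hu1, hu2⟩ : ∃ u, 4*t = 3*4^(n+1) + 4*u ∧ 4*u+3 < 4^(n+1) :=
              ⟨(4*t - 3*4^(n+1))/4, by omega⟩
            obtain ⟨e1, e2, e3⟩ := ih u hu2
            have g : ∀ i, i < 4 → a (4*t+i) = a (4*u+i) := by
              intro i hi
              have := (R (n+1) (4*u+i) (by omega)).2.2
              rw [show 3*4^(n+1) + (4*u+i) = 4*t+i from by omega] at this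
              exact this
            have g0 : a (4*t) = a (4*u) := by
              have := (R (n+1) (4*u) (by omega)).2.2
              rw [show 3*4^(n+1) + 4*u = 4*t from by omega] at this
              exact this
            refine ⟨?_, ?_, ?_⟩
            · rw [g 1 (by omega), g 2 (by omega), e1]
            · rw [g0, g 3 (by omega), e2]
            · rw [g0, g 1 (by omega)]
              exact e3
  refine ⟨fun k => ?_, fun k => ?_, fun k => ?_⟩
  · exact (key (4*k+3) k (by
      have := Nat.lt_pow_self (n := 4*k+3+1) (show 1 < 4 from by norm_num)
      omega)).1
  · exact (key (4*k+3) k (by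
      have := Nat.lt_pow_self (n := 4*k+3+1) (show 1 < 4 from by norm_num)
      omega)).2.1
  · exact (key (4*k+3) k (by
      have := Nat.lt_pow_self (n := 4*k+3+1) (show 1 < 4 from by norm_num)
      omega)).2.2


end Stmt13Aux

theorem stmt13 {α : Type*} (a : ℕ → α) (hC : InC a) :
    (∀ n : ℕ, P a (n + 1) ≤ P a n + 1) ∧
    (∀ n : ℕ, P a (n + 1) + 2 = P a (n + 2) + 1 ∧ P a (n + 2) + 1 = P a (n + 3) →
      n % 4 = 3) ∧
    (∀ k : ℕ, P a (4 * k + 1) = P a (4 * k + 4) →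
      P a (4 * k + 2) = P a (4 * k + 4) + 1 ∧ P a (4 * k + 3) = P a (4 * k + 4) + 1) ∧
    (∀ k : ℕ, P a (4 * k + 1) = P a (4 * k + 2) →
      P a (4 * k + 1) = P a (4 * k + 4) + 2) := by
  obtain ⟨hE, hB, hNe⟩ := Stmt13Aux.InC_local hC
  have hM : ∀ k, Stmt13Aux.M a k := Stmt13Aux.M_all hE hB hNe
  refine ⟨fun n => Stmt13Aux.P_succ_le (a := a) n, ?_, ?_, ?_⟩
  · intro n hg
    obtain ⟨g1, g2⟩ := hg
    have h4 : n % 4 = 0 ∨ n % 4 = 1 ∨ n % 4 = 2 ∨ n % 4 = 3 := by omega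
    rcases h4 with h4 | h4 | h4 | h4
    · exfalso
      obtain ⟨k, rfl⟩ : ∃ k, n = 4*k := ⟨n/4, by omega⟩
      obtain ⟨m1, ⟨m3a, m3b⟩, m4, m2, m6⟩ := hM k
      omega
    · exfalso
      obtain ⟨k, rfl⟩ : ∃ k, n = 4*k+1 := ⟨n/4, by omega⟩
      obtain ⟨m1, ⟨m3a, m3b⟩, m4, m2, m6⟩ := hM k
      rw [show 4*k+1+1 = 4*k+2 from by omega, show 4*k+1+2 = 4*k+3 from by omega] at g1
      omega
    · exfalso
      obtain ⟨k, rfl⟩ : ∃ k, n = 4*k+2 := ⟨n/4, by omega⟩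
      obtain ⟨m1, ⟨m3a, m3b⟩, m4, m2, m6⟩ := hM k
      rw [show 4*k+2+1 = 4*k+3 from by omega, show 4*k+2+2 = 4*k+4 from by omega] at g1
      omega
    · exact h4
  · intro k h
    obtain ⟨m1, ⟨m3a, m3b⟩, m4, m2, m6⟩ := hM k
    constructor <;> omega
  · intro k h
    obtain ⟨m1, ⟨m3a, m3b⟩, m4, m2, m6⟩ := hM k
    have := m6 h.symm
    omega
end

section
/- Let t : ℕ → Bool be the Thue–Morse sequence. Then t belongs to the class 𝒞, and over the two-letter alphabet Bool the sequences in 𝒞 are exactly the two Thue–Morse sequences: a sequence b : ℕ → Bool belongs to 𝒞 if and only if b = t or b is the pointwise complement of t (b(n) = ¬t(n) for all n). -/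
lemma tm_zero : thueMorse 0 = false := by simp [thueMorse]

lemma tm_two_mul (n : ℕ) : thueMorse (2 * n) = thueMorse n := by
  rcases Nat.eq_zero_or_pos n with rfl | hn
  · simp
  · unfold thueMorse
    rw [Nat.digits_def' (by norm_num : 1 < 2) (by omega)]
    simp [Nat.mul_div_cancel_left _ (by norm_num : 0 < 2)]

lemma tm_two_mul_add_one (n : ℕ) : thueMorse (2 * n + 1) = !thueMorse n := by
  unfold thueMorse
  rw [Nat.digits_def' (by norm_num : 1 < 2) (by omega)]
  have h1 : (2 * n + 1) % 2 = 1 := by omega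
  have h2 : (2 * n + 1) / 2 = n := by omega
  rw [h1, h2, List.count_cons]
  rcases Nat.mod_two_eq_zero_or_one ((Nat.digits 2 n).count 1) with h | h <;>
    simp [Nat.add_mod, h]

lemma tm_key : ∀ (k j i : ℕ), i < 2 ^ k →
    thueMorse (2 ^ k * j + i) = xor (thueMorse j) (thueMorse i) := by
  intro k
  induction k with
  | zero =>
    intro j i hi
    interval_cases i
    simp [tm_zero]
  | succ k ih =>
    intro j i hi
    obtain ⟨i2, rfl | rfl⟩ := Nat.even_or_odd' i
    · have h2 : i2 < 2 ^ k := by rw [pow_succ] at hi; omega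
      have he : 2 ^ (k+1) * j + 2 * i2 = 2 * (2 ^ k * j + i2) := by rw [pow_succ]; ring
      rw [he, tm_two_mul, ih j i2 h2, tm_two_mul]
    · have h2 : i2 < 2 ^ k := by rw [pow_succ] at hi; omega
      have he : 2 ^ (k+1) * j + (2 * i2 + 1) = 2 * (2 ^ k * j + i2) + 1 := by rw [pow_succ]; ring
      rw [he, tm_two_mul_add_one, ih j i2 h2, tm_two_mul_add_one]
      cases thueMorse j <;> cases thueMorse i2 <;> rfl

lemma tm_one : thueMorse 1 = true := by
  have := tm_two_mul_add_one 0; simpa [tm_zero] using this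

lemma tm_two : thueMorse 2 = true := by
  have := tm_two_mul 1; simpa [tm_one] using this

lemma tm_three : thueMorse 3 = false := by
  have := tm_two_mul_add_one 1; simpa [tm_one] using this

lemma tm_key4 (n j i : ℕ) (hi : i < 4 ^ n) :
    thueMorse (4 ^ n * j + i) = xor (thueMorse j) (thueMorse i) := by
  have h4 : (4:ℕ) ^ n = 2 ^ (2 * n) := by rw [pow_mul]; norm_num
  rw [h4] at hi ⊢
  exact tm_key _ _ _ hi

lemma tm_prefix (n : ℕ) :
    (List.range (4 ^ (n+1))).map thueMorse
      = (List.range (4 ^ n)).map thueMorse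
        ++ ((List.range (4 ^ n)).map thueMorse).map not
        ++ ((List.range (4 ^ n)).map thueMorse).map not
        ++ (List.range (4 ^ n)).map thueMorse := by
  set m := 4 ^ n with hm
  have hs : 4 ^ (n+1) = m + (m + (m + m)) := by rw [hm]; ring
  rw [hs, List.range_add, List.range_add, List.range_add]
  simp only [List.map_append, List.map_map, List.append_assoc]
  congr 1
  have seg : ∀ j : ℕ, (List.range m).map (thueMorse ∘ (fun i => 4 ^ n * j + i))
      = (List.range m).map (fun i => xor (thueMorse j) (thueMorse i)) := by
    intro j
    apply List.map_congr_left
    intro i hi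
    simp only [Function.comp_apply]
    exact tm_key4 n j i (List.mem_range.mp hi)
  have seg1 : (List.range m).map (thueMorse ∘ (m + ·))
      = ((List.range m).map thueMorse).map not := by
    have := seg 1
    simp only [tm_one, Bool.true_xor] at this
    rw [List.map_map]
    convert this using 2
    funext i; simp [hm]
    rfl
  have seg2 : (List.range m).map (thueMorse ∘ ((m + ·) ∘ (m + ·)))
      = ((List.range m).map thueMorse).map not := by
    have := seg 2
    simp only [tm_two, Bool.true_xor] at this
    rw [List.map_map]
    convert this using 2
    funext i; simp only [Function.comp_apply]; congr 1; rw [hm]; ring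
    rfl
  have seg3 : (List.range m).map (thueMorse ∘ ((m + ·) ∘ (m + ·) ∘ (m + ·)))
      = (List.range m).map thueMorse := by
    have := seg 3
    simp only [tm_three, Bool.false_xor] at this
    convert this using 2
    funext i; simp only [Function.comp_apply]; congr 1; rw [hm]; ring
  rw [seg1, seg2, seg3]
  simp [List.map_map]

lemma tm_not_prefix (n : ℕ) :
    (List.range (4 ^ (n+1))).map (fun k => !thueMorse k)
      = (List.range (4 ^ n)).map (fun k => !thueMorse k)
        ++ ((List.range (4 ^ n)).map (fun k => !thueMorse k)).map not
        ++ ((List.range (4 ^ n)).map (fun k => !thueMorse k)).map not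
        ++ (List.range (4 ^ n)).map (fun k => !thueMorse k) := by
  have h := congrArg (List.map not) (tm_prefix n)
  simpa [List.map_map, Function.comp_def] using h

lemma bool_equiv_not (e : Bool ≃ Bool) (x : Bool) (hx : e x ≠ x) :
    ∀ y, e y = !y := by
  have hx' : e x = !x := by cases h : e x <;> cases x <;> simp_all
  have hne : e (!x) ≠ e x := e.injective.ne (by cases x <;> simp)
  have h2 : e (!x) = !(!x) := by
    cases h : e (!x) <;> cases x <;> simp_all
  intro y
  cases x <;> cases y <;> simp_all

lemma map_not_ne (l : List Bool) (hl : l ≠ []) : l.map not ≠ l := by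
  intro heq
  have h0 : 0 < l.length := List.length_pos_iff.2 hl
  have : (l.map not)[0]'(by simpa using h0) = l[0]'h0 := by
    simp only [heq]
  simp at this

def notEquiv : Bool ≃ Bool := ⟨not, not, Bool.not_not, Bool.not_not⟩

lemma pointwise_of_prefixes {b c : ℕ → Bool}
    (h : ∀ n, (List.range (4 ^ n)).map b = (List.range (4 ^ n)).map c) :
    ∀ k, b k = c k := by
  intro k
  have hk : k < 4 ^ (k + 1) :=
    lt_of_lt_of_le (Nat.lt_two_pow_self (n := k))
      (Nat.pow_le_pow_left (by norm_num) _ |>.trans (Nat.pow_le_pow_right (by norm_num) (by omega)))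
  have := h (k + 1)
  rw [List.map_inj_left] at this
  exact this k (List.mem_range.mpr hk)

lemma map_tm_ne_nil (n : ℕ) : (List.range (4 ^ n)).map thueMorse ≠ [] := by
  intro h
  have := congrArg List.length h
  simp at this

lemma inC_tm : InC thueMorse := by
  refine ⟨false, fun _ => notEquiv, fun n => (List.range (4 ^ n)).map thueMorse,
    ?_, fun n => ?_, fun n => ?_, fun n => rfl⟩
  · show (List.range (4 ^ 0)).map thueMorse = [false]
    rw [show (4:ℕ) ^ 0 = 1 from rfl, show List.range 1 = [0] from rfl]
    simp [tm_zero]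
  · show (List.range (4 ^ (n+1))).map thueMorse
      = (List.range (4 ^ n)).map thueMorse
        ++ ((List.range (4 ^ n)).map thueMorse).map (⇑notEquiv)
        ++ ((List.range (4 ^ n)).map thueMorse).map (⇑notEquiv)
        ++ (List.range (4 ^ n)).map thueMorse
    rw [show (⇑notEquiv : Bool → Bool) = not from rfl]
    exact tm_prefix n
  · have hcoe : (⇑notEquiv : Bool → Bool) = not := rfl
    rw [hcoe]
    exact map_not_ne _ (map_tm_ne_nil n)

lemma inC_not_tm (b : ℕ → Bool) (hb : ∀ n, b n = !thueMorse n) : InC b := by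
  have hbmap : ∀ n, (List.range (4 ^ n)).map b
      = (List.range (4 ^ n)).map (fun k => !thueMorse k) := by
    intro n; exact List.map_congr_left fun i _ => hb i
  have hnil : ∀ n, (List.range (4 ^ n)).map b ≠ [] := by
    intro n h
    have := congrArg List.length h
    simp at this
  refine ⟨true, fun _ => notEquiv, fun n => (List.range (4 ^ n)).map b,
    ?_, fun n => ?_, fun n => ?_, fun n => rfl⟩
  · show (List.range (4 ^ 0)).map b = [true]
    rw [show (4:ℕ) ^ 0 = 1 from rfl, show List.range 1 = [0] from rfl]
    simp [hb 0, tm_zero]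
  · show (List.range (4 ^ (n+1))).map b
      = (List.range (4 ^ n)).map b
        ++ ((List.range (4 ^ n)).map b).map (⇑notEquiv)
        ++ ((List.range (4 ^ n)).map b).map (⇑notEquiv)
        ++ (List.range (4 ^ n)).map b
    rw [show (⇑notEquiv : Bool → Bool) = not from rfl, hbmap, hbmap]
    exact tm_not_prefix n
  · have hcoe : (⇑notEquiv : Bool → Bool) = not := rfl
    rw [hcoe]
    exact map_not_ne _ (hnil n)

lemma inC_only (b : ℕ → Bool) (h : InC b) :
    b = thueMorse ∨ ∀ n, b n = !thueMorse n := by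
  obtain ⟨c, f, w, h0, hrec, hne, hpref⟩ := h
  have hnotmap : ∀ n, (w n).map (f n) = (w n).map not := by
    intro n
    by_contra hcon
    apply hne n
    have hall : ∀ x ∈ w n, f n x = x := by
      by_contra hex
      push_neg at hex
      obtain ⟨x, hx, hfx⟩ := hex
      exact hcon (List.map_congr_left fun y _ => bool_equiv_not (f n) x hfx y)
    exact (List.map_congr_left hall).trans (List.map_id _)
  have hrec' : ∀ n, w (n+1) = w n ++ (w n).map not ++ (w n).map not ++ w n := by
    intro n; rw [hrec n, hnotmap n]
  have hc : c = b 0 := by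
    have h := h0.symm.trans (hpref 0)
    rw [show (4:ℕ) ^ 0 = 1 from rfl, show List.range 1 = [0] from rfl] at h
    simpa using h
  cases hb0 : b 0 with
  | false =>
    left
    have hw : ∀ n, w n = (List.range (4 ^ n)).map thueMorse := by
      intro n
      induction n with
      | zero =>
        simp [h0, hc, hb0, show (4:ℕ) ^ 0 = 1 from rfl,
          show List.range 1 = [0] from rfl, tm_zero]
      | succ n ih => rw [hrec' n, ih, ← tm_prefix n]
    funext k
    exact pointwise_of_prefixes
      (fun n => (hpref n).symm.trans (hw n)) k
  | true =>
    right
    have hw : ∀ n, w n = (List.range (4 ^ n)).map (fun k => !thueMorse k) := by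
      intro n
      induction n with
      | zero =>
        simp [h0, hc, hb0, show (4:ℕ) ^ 0 = 1 from rfl,
          show List.range 1 = [0] from rfl, tm_zero]
      | succ n ih => rw [hrec' n, ih, ← tm_not_prefix n]
    exact pointwise_of_prefixes (fun n => (hpref n).symm.trans (hw n))

theorem stmt18 :
    InC thueMorse ∧
    (∀ b : ℕ → Bool, InC b ↔ (b = thueMorse ∨ ∀ n, b n = !thueMorse n)) := by
  refine ⟨inC_tm, fun b => ⟨inC_only b, ?_⟩⟩
  rintro (rfl | hb)
  · exact inC_tm
  · exact inC_not_tm b hb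
end
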